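/- arXiv:1911.08204 — 6 statements merged into one kernel-verified Lean document; each statement's English description precedes it below -/
import Mathlib

section
/- Let F : S^N → R be degenerate elliptic (monotone: X ≤ Y implies F(X) ≤ F(Y)) and positively homogeneous in the sense that there is h : (0,∞) → (0,∞) with F(tX) = h(t)F(X) for all t > 0. Let u : Ω → R be a lower semicontinuous viscosity supersolution of F(D²u) = 0 on an open set Ω ⊆ R^N with min_Ω u = 0, and let U = {x ∈ Ω : u(x) > 0}. Then for every φ ∈ C²(Ω) and every x̂ ∈ Ω \ U with φ ≤ φ(x̂) = 0 on Ω \ U, one has F(D²φ(x̂)) ≤ 0. -/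
open Classical in
/-- Eigenvalues of a real symmetric matrix arranged in nondecreasing order
(junk value `0` if the matrix is not symmetric). -/
noncomputable def sortedEig {N : ℕ} (A : Matrix (Fin N) (Fin N) ℝ) : Fin N → ℝ :=
  if h : A.IsHermitian then h.eigenvalues ∘ ⇑(Tuple.sort h.eigenvalues) else 0

/-- `P_k^-(A)`: the sum of the `k` smallest eigenvalues of `A`. -/
noncomputable def sumMinEig {N : ℕ} (k : ℕ) (A : Matrix (Fin N) (Fin N) ℝ) : ℝ :=
  ∑ i ∈ Finset.univ.filter (fun i : Fin N => (i : ℕ) < k), sortedEig A i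

/-- The Hessian matrix of `φ` at `x`. -/
noncomputable def hess {N : ℕ} (φ : EuclideanSpace ℝ (Fin N) → ℝ)
    (x : EuclideanSpace ℝ (Fin N)) : Matrix (Fin N) (Fin N) ℝ :=
  fun i j => iteratedFDeriv ℝ 2 φ x ![EuclideanSpace.single i 1, EuclideanSpace.single j 1]

open Set Filter Metric

/-- A lower semicontinuous function on a nonempty compact set attains its minimum. -/
theorem lsc_exists_min' {α : Type*} [TopologicalSpace α] [T2Space α] {s : Set α}
    (hs : IsCompact s) (hne : s.Nonempty) {f : α → ℝ} (hf : LowerSemicontinuousOn f s) :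
    ∃ x ∈ s, ∀ y ∈ s, f x ≤ f y := by
  have : CompactSpace s := isCompact_iff_compactSpace.1 hs
  have hg : LowerSemicontinuous (fun y : s => f y) := by
    rintro ⟨x, hx⟩ y hy
    have h1 := hf x hx y hy
    rw [nhdsWithin_eq_map_subtype_coe hx] at h1
    exact h1
  have hNe : Nonempty s := hne.to_subtype
  set C : s → Set s := fun x => {y : s | f y ≤ f x} with hC
  have hclosed : ∀ x : s, IsClosed (C x) := fun x => hg.isClosed_preimage (f x)
  have hnonempty : ∀ x : s, (C x).Nonempty := fun x => ⟨x, le_refl (f (x : α))⟩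
  have hcompact : ∀ x : s, IsCompact (C x) := fun x => (hclosed x).isCompact
  have hdir : Directed (· ⊇ ·) C := by
    intro a b
    rcases le_total (f a) (f b) with hab | hab
    · exact ⟨a, fun y hy => hy, fun y hy => le_trans hy hab⟩
    · exact ⟨b, fun y hy => le_trans hy hab, fun y hy => hy⟩
  obtain ⟨z, hz⟩ := IsCompact.nonempty_iInter_of_directed_nonempty_isCompact_isClosed
    C hdir hnonempty hcompact hclosed
  exact ⟨z, z.2, fun y hy => mem_iInter.1 hz ⟨y, hy⟩⟩

section HessLemmas
variable {N : ℕ}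

theorem fderiv_qf (xh : EuclideanSpace ℝ (Fin N)) :
    fderiv ℝ (fun y : EuclideanSpace ℝ (Fin N) => ‖y - xh‖ ^ 2)
      = fun y : EuclideanSpace ℝ (Fin N) =>
        (2 • innerSL ℝ (y - xh) : EuclideanSpace ℝ (Fin N) →L[ℝ] ℝ) := by
  funext y
  have h1 : HasFDerivAt (fun z : EuclideanSpace ℝ (Fin N) => z - xh)
      (ContinuousLinearMap.id ℝ (EuclideanSpace ℝ (Fin N))) y := (hasFDerivAt_id y).sub_const xh
  have h2 := h1.norm_sq
  simpa using h2.fderiv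

theorem hess_qf (xh x : EuclideanSpace ℝ (Fin N)) :
    hess (fun y : EuclideanSpace ℝ (Fin N) => ‖y - xh‖ ^ 2) x
      = fun i j => if i = j then (2:ℝ) else 0 := by
  funext i j
  have h1 : HasFDerivAt (fun z : EuclideanSpace ℝ (Fin N) => z - xh)
      (ContinuousLinearMap.id ℝ (EuclideanSpace ℝ (Fin N))) x := (hasFDerivAt_id x).sub_const xh
  have h2 : HasFDerivAt (fun y : EuclideanSpace ℝ (Fin N) =>
        (2 • innerSL ℝ (y - xh) : EuclideanSpace ℝ (Fin N) →L[ℝ] ℝ))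
      ((2 • innerSL ℝ : EuclideanSpace ℝ (Fin N) →L[ℝ]
        EuclideanSpace ℝ (Fin N) →L[ℝ] ℝ)) x := by
    have h3 := ((2 • innerSL ℝ : EuclideanSpace ℝ (Fin N) →L[ℝ]
        EuclideanSpace ℝ (Fin N) →L[ℝ] ℝ).hasFDerivAt).comp x h1
    rw [ContinuousLinearMap.comp_id] at h3
    exact h3
  show iteratedFDeriv ℝ 2 (fun y : EuclideanSpace ℝ (Fin N) => ‖y - xh‖ ^ 2) x _ = _
  rw [iteratedFDeriv_two_apply, fderiv_qf xh, h2.fderiv]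
  simp [EuclideanSpace.inner_single_left, EuclideanSpace.single_apply, real_inner_comm]
  rw [innerSL_apply_apply]
  simp [EuclideanSpace.inner_single_left, EuclideanSpace.single_apply, real_inner_comm]

theorem contDiff_qf (xh : EuclideanSpace ℝ (Fin N)) :
    ContDiff ℝ 2 (fun y : EuclideanSpace ℝ (Fin N) => ‖y - xh‖ ^ 2) :=
  (contDiff_norm_sq ℝ).comp (contDiff_id.sub contDiff_const)

theorem hess_combf {Ω : Set (EuclideanSpace ℝ (Fin N))} (hΩ : IsOpen Ω)
    {φ : EuclideanSpace ℝ (Fin N) → ℝ} (hφ : ContDiffOn ℝ 2 φ Ω)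
    (ε δ : ℝ) (xh : EuclideanSpace ℝ (Fin N)) {x : EuclideanSpace ℝ (Fin N)} (hx : x ∈ Ω) :
    hess (ε • (φ + (-δ) • (fun y : EuclideanSpace ℝ (Fin N) => ‖y - xh‖ ^ 2))) x
      = ε • (hess φ x - (2 * δ) • (1 : Matrix (Fin N) (Fin N) ℝ)) := by
  set q : EuclideanSpace ℝ (Fin N) → ℝ := fun y => ‖y - xh‖ ^ 2 with hqdef
  have hq : ContDiff ℝ 2 q := contDiff_qf xh
  have hqΩ : ContDiffOn ℝ 2 q Ω := hq.contDiffOn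
  have hδq : ContDiffOn ℝ 2 ((-δ) • q) Ω := hqΩ.const_smul (-δ)
  have hg : ContDiffOn ℝ 2 (φ + (-δ) • q) Ω := hφ.add hδq
  have U1 : UniqueDiffOn ℝ Ω := hΩ.uniqueDiffOn
  have key : iteratedFDeriv ℝ 2 (ε • (φ + (-δ) • q)) x
      = ε • (iteratedFDeriv ℝ 2 φ x + (-δ) • iteratedFDeriv ℝ 2 q x) := by
    rw [← iteratedFDerivWithin_of_isOpen 2 hΩ hx,
      iteratedFDerivWithin_const_smul_apply (hg x hx) U1 hx,
      iteratedFDerivWithin_add_apply (hφ x hx) (hδq x hx) U1 hx,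
      iteratedFDerivWithin_const_smul_apply (hqΩ x hx) U1 hx,
      iteratedFDerivWithin_of_isOpen 2 hΩ hx, iteratedFDerivWithin_of_isOpen 2 hΩ hx]
  funext i j
  have hqx := congrFun (congrFun (hess_qf xh x) i) j
  show iteratedFDeriv ℝ 2 (ε • (φ + (-δ) • q)) x _ = _
  rw [key]
  simp only [ContinuousMultilinearMap.smul_apply, ContinuousMultilinearMap.add_apply,
    smul_eq_mul, Matrix.smul_apply, Matrix.sub_apply, Matrix.one_apply, hess]
  have h2 : (iteratedFDeriv ℝ 2 q x) ![EuclideanSpace.single i 1, EuclideanSpace.single j 1]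
      = if i = j then (2:ℝ) else 0 := hqx
  rw [h2]
  first
  | (split_ifs <;> ring)
  | ring

theorem hess_continuousOn {Ω : Set (EuclideanSpace ℝ (Fin N))} (hΩ : IsOpen Ω)
    {φ : EuclideanSpace ℝ (Fin N) → ℝ} (hφ : ContDiffOn ℝ 2 φ Ω) :
    ContinuousOn (hess φ) Ω := by
  have h1 : ContinuousOn (iteratedFDerivWithin ℝ 2 φ Ω) Ω :=
    hφ.continuousOn_iteratedFDerivWithin (by norm_num) hΩ.uniqueDiffOn
  have h2 : ContinuousOn (iteratedFDeriv ℝ 2 φ) Ω :=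
    h1.congr fun x hx => (iteratedFDerivWithin_of_isOpen 2 hΩ hx).symm
  apply continuousOn_pi.2; intro i; apply continuousOn_pi.2; intro j
  exact (continuous_eval_const _).comp_continuousOn h2

end HessLemmas

/-- The positivity set of a nonnegative supersolution of `F(D²u) = 0`
satisfies the geometric condition (G_{F,Ω,U}). -/
theorem stmt6 {N : ℕ} (F : Matrix (Fin N) (Fin N) ℝ → ℝ)
    (hFc : Continuous F)
    (hell : ∀ X Y : Matrix (Fin N) (Fin N) ℝ,
      X.IsHermitian → Y.IsHermitian → (Y - X).PosSemidef → F X ≤ F Y)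
    (h : ℝ → ℝ) (hpos : ∀ t, 0 < t → 0 < h t)
    (hhom : ∀ t, 0 < t → ∀ X, F (t • X) = h t * F X)
    (Ω : Set (EuclideanSpace ℝ (Fin N))) (hΩ : IsOpen Ω)
    (u : EuclideanSpace ℝ (Fin N) → ℝ) (hu : LowerSemicontinuousOn u Ω)
    (hsuper : ∀ φ : EuclideanSpace ℝ (Fin N) → ℝ, ContDiffOn ℝ 2 φ Ω → ∀ x ∈ Ω,
      IsLocalMinOn (fun y => u y - φ y) Ω x → F (hess φ x) ≤ 0)
    (hnn : ∀ x ∈ Ω, 0 ≤ u x) (hmin : ∃ x ∈ Ω, u x = 0)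
    (U : Set (EuclideanSpace ℝ (Fin N))) (hU : U = {x ∈ Ω | 0 < u x})
    (φ : EuclideanSpace ℝ (Fin N) → ℝ) (hφ : ContDiffOn ℝ 2 φ Ω)
    (xh : EuclideanSpace ℝ (Fin N)) (hxh : xh ∈ Ω \ U)
    (hφle : ∀ x ∈ Ω \ U, φ x ≤ 0) (hφxh : φ xh = 0) :
    F (hess φ xh) ≤ 0 := by
  by_contra hcon
  push_neg at hcon
  have hxΩ : xh ∈ Ω := hxh.1
  have huxh : u xh = 0 := by
    rcases lt_or_eq_of_le (hnn xh hxΩ) with hlt | heq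
    · exact absurd (hU ▸ (⟨hxΩ, hlt⟩ : xh ∈ {x ∈ Ω | 0 < u x})) hxh.2
    · exact heq.symm
  -- choose δ > 0 with 0 < F (hess φ xh - (2δ)•1)
  obtain ⟨δ, hδpos, hδF⟩ : ∃ δ : ℝ, 0 < δ ∧ 0 < F (hess φ xh - (2 * δ) • 1) := by
    have hct : ContinuousAt (fun t : ℝ => F (hess φ xh - t • (1 : Matrix (Fin N) (Fin N) ℝ))) 0 :=
      (hFc.comp (continuous_const.sub (continuous_id.smul continuous_const))).continuousAt
    have h0 : (0:ℝ) < F (hess φ xh - (0:ℝ) • 1) := by simpa using hcon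
    have hev := hct (Ioi_mem_nhds h0)
    obtain ⟨δ', hδ'pos, hball⟩ := Metric.mem_nhds_iff.1 hev
    refine ⟨δ'/4, by linarith, ?_⟩
    have : (2 * (δ'/4)) ∈ Metric.ball (0:ℝ) δ' := by
      rw [Metric.mem_ball, Real.dist_eq, sub_zero, abs_of_nonneg (by linarith)]
      linarith
    exact hball this
  -- choose r > 0 with closedBall ⊆ Ω and F (hess φ x - (2δ)•1) > 0 there
  obtain ⟨r, hrpos, hBsub, hBpos⟩ : ∃ r : ℝ, 0 < r ∧ Metric.closedBall xh r ⊆ Ω ∧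
      ∀ x ∈ Metric.closedBall xh r, 0 < F (hess φ x - (2 * δ) • 1) := by
    have hGc : ContinuousOn (fun x => F (hess φ x - (2 * δ) • 1)) Ω :=
      hFc.comp_continuousOn ((hess_continuousOn hΩ hφ).sub continuousOn_const)
    have hGat : ContinuousAt (fun x => F (hess φ x - (2 * δ) • 1)) xh :=
      hGc.continuousAt (hΩ.mem_nhds hxΩ)
    have hev := hGat (Ioi_mem_nhds hδF)
    have hmem : ((fun x => F (hess φ x - (2 * δ) • 1)) ⁻¹' Ioi 0) ∩ Ω ∈ nhds xh :=
      Filter.inter_mem hev (hΩ.mem_nhds hxΩ)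
    obtain ⟨r', hr'pos, hball⟩ := Metric.mem_nhds_iff.1 hmem
    refine ⟨r'/2, by linarith, ?_, ?_⟩
    · intro x hx
      exact (hball (lt_of_le_of_lt (Metric.mem_closedBall.1 hx) (by linarith))).2
    · intro x hx
      exact (hball (lt_of_le_of_lt (Metric.mem_closedBall.1 hx) (by linarith))).1
  set q : EuclideanSpace ℝ (Fin N) → ℝ := fun y => ‖y - xh‖ ^ 2 with hqdef
  set ψ : EuclideanSpace ℝ (Fin N) → ℝ := fun y => φ y + (-δ) * q y with hψdef
  have hSsub : Metric.sphere xh r ⊆ Metric.closedBall xh r := Metric.sphere_subset_closedBall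
  have hSΩ : Metric.sphere xh r ⊆ Ω := hSsub.trans hBsub
  have hψc : ContinuousOn ψ Ω :=
    (hφ.continuousOn).add (continuousOn_const.mul (contDiff_qf xh).continuous.continuousOn)
  have hqS : ∀ x ∈ Metric.sphere xh r, q x = r ^ 2 := by
    intro x hx
    have : ‖x - xh‖ = r := by
      rw [← dist_eq_norm]; exact Metric.mem_sphere.1 hx
    simp [hqdef, this]
  have hψneg : ∀ x ∈ Metric.sphere xh r, x ∉ U → ψ x < 0 := by
    intro x hxS hxU
    have hxΩ' : x ∈ Ω := hSΩ hxS
    have h1 : φ x ≤ 0 := hφle x ⟨hxΩ', hxU⟩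
    have h2 : q x = r ^ 2 := hqS x hxS
    have : ψ x = φ x + (-δ) * r ^ 2 := by rw [hψdef]; simp [h2]
    rw [this]
    nlinarith [mul_pos hδpos (pow_pos hrpos 2), h1]
  have hKpos : ∀ x ∈ Metric.sphere xh r, 0 ≤ ψ x → 0 < u x := by
    intro x hxS hψx
    have hxΩ' : x ∈ Ω := hSΩ hxS
    by_contra hux
    push_neg at hux
    have hux0 : ¬ 0 < u x := not_lt.2 hux
    have hxU : x ∉ U := by
      rw [hU]; exact fun hc => hux0 hc.2
    exact absurd hψx (not_le.2 (hψneg x hxS hxU))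
  -- choose ε > 0 with ε * ψ x < u x on the sphere
  obtain ⟨ε, hεpos, hεS⟩ : ∃ ε : ℝ, 0 < ε ∧ ∀ x ∈ Metric.sphere xh r, ε * ψ x < u x := by
    set K : Set (EuclideanSpace ℝ (Fin N)) := Metric.sphere xh r ∩ ψ ⁻¹' Ici 0 with hKdef
    by_cases hKne : K.Nonempty
    · have hKcl : IsClosed K :=
        (hψc.mono hSΩ).preimage_isClosed_of_isClosed Metric.isClosed_sphere isClosed_Ici
      have hKcp : IsCompact K :=
        (isCompact_sphere xh r).of_isClosed_subset hKcl inter_subset_left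
      obtain ⟨z, hzK, hzmin⟩ := lsc_exists_min' hKcp hKne (hu.mono (fun x hx => hSΩ hx.1))
      have hm : 0 < u z := hKpos z hzK.1 hzK.2
      obtain ⟨w, hwS, hw⟩ := (isCompact_sphere xh r).exists_isMaxOn ⟨z, hzK.1⟩ (hψc.mono hSΩ)
      set C : ℝ := max (ψ w) 1 with hCdef
      have hC1 : (1:ℝ) ≤ C := le_max_right _ _
      have hCpos : (0:ℝ) < C := lt_of_lt_of_le one_pos hC1
      refine ⟨u z / (2 * C), by positivity, ?_⟩
      intro x hxS
      by_cases hψx : 0 ≤ ψ x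
      · have hxK : x ∈ K := ⟨hxS, hψx⟩
        have hux : u z ≤ u x := hzmin x hxK
        have hψxC : ψ x ≤ C := le_trans (hw hxS) (le_max_left _ _)
        have : u z / (2 * C) * ψ x ≤ u z / (2 * C) * C := by
          apply mul_le_mul_of_nonneg_left hψxC (by positivity)
        have hCne : C ≠ 0 := ne_of_gt hCpos
        have h2 : u z / (2 * C) * C = u z / 2 := by field_simp
        calc u z / (2 * C) * ψ x ≤ u z / 2 := by rw [← h2]; exact this
          _ < u z := by linarith
          _ ≤ u x := hux
      · push_neg at hψx
        have : u z / (2 * C) * ψ x < 0 := mul_neg_of_pos_of_neg (by positivity) hψx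
        exact lt_of_lt_of_le this (hnn x (hSΩ hxS))
    · refine ⟨1, one_pos, ?_⟩
      intro x hxS
      have hψx : ψ x < 0 := by
        by_contra hc
        push_neg at hc
        exact hKne ⟨x, hxS, hc⟩
      have := hnn x (hSΩ hxS)
      linarith [hψx]
  -- the test function
  set Φ : EuclideanSpace ℝ (Fin N) → ℝ := ε • (φ + (-δ) • q) with hΦdef
  have hΦval : ∀ y, Φ y = ε * ψ y := fun y => rfl
  have hΦcd : ContDiffOn ℝ 2 Φ Ω :=
    ((hφ.add ((contDiff_qf xh).contDiffOn.const_smul (-δ))).const_smul ε)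
  -- minimize u - Φ on the closed ball
  have hgl : LowerSemicontinuousOn (fun y => u y - Φ y) (Metric.closedBall xh r) := by
    have h1 : LowerSemicontinuousOn u (Metric.closedBall xh r) := hu.mono hBsub
    have h2 : ContinuousOn (fun y => -Φ y) (Metric.closedBall xh r) := by
      have : ContinuousOn Φ Ω := hΦcd.continuousOn
      exact (this.mono hBsub).neg
    have h3 : LowerSemicontinuousOn (fun y => -Φ y) (Metric.closedBall xh r) :=
      h2.lowerSemicontinuousOn
    have := h1.add h3
    simpa [sub_eq_add_neg] using this
  have hxhB : xh ∈ Metric.closedBall xh r := Metric.mem_closedBall_self hrpos.le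
  obtain ⟨x₀, hx₀B, hx₀min⟩ := lsc_exists_min' (isCompact_closedBall xh r) ⟨xh, hxhB⟩ hgl
  have hqxh : q xh = 0 := by simp [hqdef]
  have hΦxh : Φ xh = 0 := by rw [hΦval, hψdef]; simp [hφxh, hqxh]
  have hg0 : u x₀ - Φ x₀ ≤ 0 := by
    have := hx₀min xh hxhB
    rw [huxh, hΦxh] at this
    linarith
  have hx₀S : x₀ ∉ Metric.sphere xh r := by
    intro hx₀S
    have := hεS x₀ hx₀S
    rw [hΦval] at hg0
    linarith
  have hx₀ball : x₀ ∈ Metric.ball xh r := by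
    rcases lt_or_eq_of_le (Metric.mem_closedBall.1 hx₀B) with hlt | heq
    · exact Metric.mem_ball.2 hlt
    · exact absurd (Metric.mem_sphere.2 heq) hx₀S
  have hx₀Ω : x₀ ∈ Ω := hBsub hx₀B
  have hloc : IsLocalMinOn (fun y => u y - Φ y) Ω x₀ := by
    have hmem : Metric.closedBall xh r ∈ nhds x₀ :=
      Filter.mem_of_superset (Metric.isOpen_ball.mem_nhds hx₀ball) Metric.ball_subset_closedBall
    have hev : ∀ᶠ y in nhds x₀, u x₀ - Φ x₀ ≤ u y - Φ y := by
      filter_upwards [hmem] with y hy using hx₀min y hy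
    exact (hev.filter_mono nhdsWithin_le_nhds)
  have happ := hsuper Φ hΦcd x₀ hx₀Ω hloc
  rw [hΦdef, hqdef] at happ
  rw [hess_combf hΩ hφ ε δ xh hx₀Ω] at happ
  rw [hhom ε hεpos] at happ
  have hFM : 0 < F (hess φ x₀ - (2 * δ) • 1) := hBpos x₀ hx₀B
  nlinarith [hpos ε hεpos]
end

section
/- Let F : R × R^N × S^N → R be continuous, degenerate elliptic (F(u,p,X) ≤ F(u,p,Y) whenever X ≤ Y), nonincreasing in u for u ≥ 0 (F(u,p,X) ≤ F(0,p,X) if u ≥ 0), and satisfy F(0,0,0) ≤ 0. Let U ⊆ Ω be open and satisfy the geometric condition: for all φ ∈ C²(Ω) and x̂ ∈ Ω \ U with φ ≤ φ(x̂) = 0 on Ω \ U one has F(φ(x̂), Dφ(x̂), D²φ(x̂)) ≤ 0. Then the indicator function v = 1_U (value 1 on U, 0 elsewhere) is a lower semicontinuous viscosity supersolution of F(v, Dv, D²v) = 0 on Ω, with min_Ω v = 0 if U ≠ Ω, and U = {x ∈ Ω : v(x) > 0}. -/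
open Filter Topology Set

/-- Second-order necessary condition at a local max. -/
lemma sndDeriv_nonpos_of_isLocalMax {E : Type*} [NormedAddCommGroup E] [NormedSpace ℝ E]
    {φ : E → ℝ} {a : E} (hφ : ContDiffAt ℝ 2 φ a) (hmax : IsLocalMax φ a) (v : E) :
    fderiv ℝ (fderiv ℝ φ) a v v ≤ 0 := by
  by_contra hQ
  push_neg at hQ
  set Q : ℝ := fderiv ℝ (fderiv ℝ φ) a v v with hQdef
  set c : ℝ → E := fun t => a + t • v with hc
  have hc0 : c 0 = a := by simp [hc]
  have hcd : ∀ t : ℝ, HasDerivAt c v t := by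
    intro t
    simpa [hc] using ((hasDerivAt_id t).smul_const v).const_add a
  have hccont : Continuous c := by fun_prop
  set g : ℝ → ℝ := fun t => φ (c t) with hg
  set h : ℝ → ℝ := fun t => fderiv ℝ φ (c t) v with hhdef
  have hf'0 : fderiv ℝ φ a = 0 := hmax.fderiv_eq_zero
  have hh0 : h 0 = 0 := by simp [hhdef, hc0, hf'0]
  have hf'' : HasFDerivAt (fderiv ℝ φ) (fderiv ℝ (fderiv ℝ φ) a) a :=
    ((hφ.fderiv_right (m := 1) le_rfl).differentiableAt one_ne_zero).hasFDerivAt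
  have hhd : HasDerivAt h Q 0 := by
    have h1 : HasDerivAt (fun t => fderiv ℝ φ (c t)) (fderiv ℝ (fderiv ℝ φ) a v) 0 := by
      have hf''' : HasFDerivAt (fderiv ℝ φ) (fderiv ℝ (fderiv ℝ φ) a) (c 0) := hc0 ▸ hf''
      exact hf'''.comp_hasDerivAt 0 (hcd 0)
    have := (ContinuousLinearMap.apply ℝ ℝ v).hasFDerivAt.comp_hasDerivAt 0 h1
    exact this
  have htc : Tendsto c (𝓝 0) (𝓝 a) := by
    have := hccont.tendsto 0
    rwa [hc0] at this
  have hev1 : ∀ᶠ t in 𝓝 (0:ℝ), ContDiffAt ℝ 2 φ (c t) :=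
    htc.eventually (hφ.eventually (by norm_num))
  have hev2 : ∀ᶠ t in 𝓝 (0:ℝ), g t ≤ g 0 := by
    have := htc.eventually hmax
    simpa [hg, hc0] using this
  have hev3 : ∀ᶠ t in 𝓝[>] (0:ℝ), 0 < h t := by
    have hs : Tendsto (slope h 0) (𝓝[≠] (0:ℝ)) (𝓝 Q) := hasDerivAt_iff_tendsto_slope.1 hhd
    have hs' : Tendsto (slope h 0) (𝓝[>] (0:ℝ)) (𝓝 Q) :=
      hs.mono_left (nhdsWithin_mono 0 (fun x hx => ne_of_gt hx))
    have h1 : ∀ᶠ t in 𝓝[>] (0:ℝ), 0 < slope h 0 t := hs'.eventually (eventually_gt_nhds hQ)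
    filter_upwards [h1, self_mem_nhdsWithin] with t ht ht0
    have heq : slope h 0 t = h t / t := by simp [slope_def_field, hh0]
    rw [heq] at ht
    have := mul_pos ht (show (0:ℝ) < t from ht0)
    rwa [div_mul_cancel₀] at this
    exact ne_of_gt ht0
  have hev : ∀ᶠ t in 𝓝[>] (0:ℝ), (ContDiffAt ℝ 2 φ (c t) ∧ g t ≤ g 0) ∧ 0 < h t :=
    ((hev1.and hev2).filter_mono nhdsWithin_le_nhds).and hev3
  obtain ⟨δ, hδ, hsub⟩ := mem_nhdsGT_iff_exists_Ioc_subset.1 hev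
  have hδ0 : (0:ℝ) < δ := hδ
  have hder : ∀ t ∈ Set.Ioc (0:ℝ) δ, HasDerivAt g (h t) t := by
    intro t ht
    have hct : ContDiffAt ℝ 2 φ (c t) := (hsub ht).1.1
    have : HasFDerivAt φ (fderiv ℝ φ (c t)) (c t) :=
      (hct.differentiableAt (by norm_num)).hasFDerivAt
    exact this.comp_hasDerivAt t (hcd t)
  have hcont : ContinuousOn g (Set.Icc 0 δ) := by
    intro t ht
    rcases eq_or_lt_of_le ht.1 with h0 | h0
    · have : ContinuousAt g t := by
        have : ContinuousAt φ (c t) := by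
          rw [← h0, hc0]; exact hφ.continuousAt
        exact this.comp hccont.continuousAt
      exact this.continuousWithinAt
    · exact ((hder t ⟨h0, ht.2⟩).continuousAt).continuousWithinAt
  have hmono : StrictMonoOn g (Set.Icc 0 δ) := by
    apply strictMonoOn_of_deriv_pos (convex_Icc 0 δ) hcont
    intro t ht
    rw [interior_Icc] at ht
    have ht' : t ∈ Set.Ioc (0:ℝ) δ := ⟨ht.1, le_of_lt ht.2⟩
    rw [(hder t ht').deriv]
    exact (hsub ht').2
  have h1 : g 0 < g δ := hmono ⟨le_refl 0, le_of_lt hδ0⟩ ⟨le_of_lt hδ0, le_refl δ⟩ hδ0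
  have h2 : g δ ≤ g 0 := (hsub ⟨hδ0, le_refl δ⟩).1.2
  linarith

lemma hess_apply {N : ℕ} (φ : EuclideanSpace ℝ (Fin N) → ℝ) (x : EuclideanSpace ℝ (Fin N))
    (i j : Fin N) :
    hess φ x i j
      = fderiv ℝ (fderiv ℝ φ) x (EuclideanSpace.single i 1) (EuclideanSpace.single j 1) := by
  rw [hess, iteratedFDeriv_two_apply]
  simp

lemma hess_isHermitian {N : ℕ} {φ : EuclideanSpace ℝ (Fin N) → ℝ} {x : EuclideanSpace ℝ (Fin N)}
    (hφ : ContDiffAt ℝ 2 φ x) : (hess φ x).IsHermitian := by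
  have hsymm := hφ.isSymmSndFDerivAt (by simp [minSmoothness_of_isRCLikeNormedField])
  ext i j
  simp only [Matrix.conjTranspose_apply, hess_apply, star_trivial]
  exact hsymm _ _

lemma negHess_posSemidef {N : ℕ} {φ : EuclideanSpace ℝ (Fin N) → ℝ} {a : EuclideanSpace ℝ (Fin N)}
    (hφ : ContDiffAt ℝ 2 φ a) (hmax : IsLocalMax φ a) :
    ((0 : Matrix (Fin N) (Fin N) ℝ) - hess φ a).PosSemidef := by
  rw [Matrix.posSemidef_iff_dotProduct_mulVec]
  constructor
  · exact Matrix.isHermitian_zero.sub (hess_isHermitian hφ)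
  · intro x
    set f'' := fderiv ℝ (fderiv ℝ φ) a with hf''
    set w : EuclideanSpace ℝ (Fin N) := ∑ i, x i • EuclideanSpace.single i (1:ℝ) with hw
    have e1 : ∀ u : EuclideanSpace ℝ (Fin N),
        f'' w u = ∑ i, x i * f'' (EuclideanSpace.single i 1) u := by
      intro u
      rw [hw, map_sum]
      simp [ContinuousLinearMap.sum_apply]
    have e2 : ∀ i : Fin N,
        f'' (EuclideanSpace.single i 1) w
          = ∑ j, x j * f'' (EuclideanSpace.single i 1) (EuclideanSpace.single j 1) := by
      intro i
      rw [hw, map_sum]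
      simp
    have key : dotProduct x (Matrix.mulVec (hess φ a) x) = f'' w w := by
      rw [e1 w]
      simp only [dotProduct, Matrix.mulVec, hess_apply, e2]
      apply Finset.sum_congr rfl
      intro i _
      rw [Finset.mul_sum, Finset.mul_sum]
      apply Finset.sum_congr rfl
      intro j _
      rw [← hf'']
      ring
    have hle : f'' w w ≤ 0 := sndDeriv_nonpos_of_isLocalMax hφ hmax w
    have : dotProduct (star x) (Matrix.mulVec ((0 : Matrix (Fin N) (Fin N) ℝ) - hess φ a) x)
        = -(f'' w w) := by
      rw [star_trivial, Matrix.sub_mulVec, Matrix.zero_mulVec, zero_sub, dotProduct_neg, key]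
    rw [this]
    linarith

/-- If an open set `U ⊆ Ω` satisfies the geometric condition (G_{F,Ω,U}),
then the indicator function of `U` is a lower semicontinuous supersolution of
`F(v, Dv, D²v) = 0` on `Ω`, with minimum `0` when `U ≠ Ω`, whose positivity
set is `U`. -/
theorem stmt7 {N : ℕ}
    (F : ℝ → EuclideanSpace ℝ (Fin N) → Matrix (Fin N) (Fin N) ℝ → ℝ)
    (hFc : Continuous fun q : ℝ × EuclideanSpace ℝ (Fin N) × Matrix (Fin N) (Fin N) ℝ =>
      F q.1 q.2.1 q.2.2)
    (hell : ∀ (u : ℝ) (p : EuclideanSpace ℝ (Fin N)) (X Y : Matrix (Fin N) (Fin N) ℝ),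
      X.IsHermitian → Y.IsHermitian → (Y - X).PosSemidef → F u p X ≤ F u p Y)
    (hmonou : ∀ (u : ℝ) (p : EuclideanSpace ℝ (Fin N)) (X : Matrix (Fin N) (Fin N) ℝ),
      0 ≤ u → F u p X ≤ F 0 p X)
    (hF0 : F 0 0 0 ≤ 0)
    (Ω U : Set (EuclideanSpace ℝ (Fin N))) (hΩ : IsOpen Ω) (hUopen : IsOpen U)
    (hUΩ : U ⊆ Ω)
    (hG : ∀ φ : EuclideanSpace ℝ (Fin N) → ℝ, ContDiffOn ℝ 2 φ Ω →
      ∀ xh ∈ Ω \ U, (∀ x ∈ Ω \ U, φ x ≤ 0) → φ xh = 0 →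
        F (φ xh) (gradient φ xh) (hess φ xh) ≤ 0) :
    LowerSemicontinuousOn (U.indicator (1 : EuclideanSpace ℝ (Fin N) → ℝ)) Ω ∧
      (∀ φ : EuclideanSpace ℝ (Fin N) → ℝ, ContDiffOn ℝ 2 φ Ω → ∀ xh ∈ Ω,
        (∀ x ∈ Ω, U.indicator 1 xh - φ xh ≤ U.indicator 1 x - φ x) →
        U.indicator 1 xh - φ xh = 0 →
          F (U.indicator 1 xh) (gradient φ xh) (hess φ xh) ≤ 0) ∧
      (U ≠ Ω → ∃ x ∈ Ω, U.indicator (1 : EuclideanSpace ℝ (Fin N) → ℝ) x = 0 ∧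
        ∀ y ∈ Ω, U.indicator (1 : EuclideanSpace ℝ (Fin N) → ℝ) x ≤ U.indicator 1 y) ∧
      {x ∈ Ω | 0 < U.indicator (1 : EuclideanSpace ℝ (Fin N) → ℝ) x} = U := by
  refine ⟨?_, ?_, ?_, ?_⟩
  · exact hUopen.lowerSemicontinuousOn_indicator zero_le_one
  · intro φ hφ xh hxh hmin h0
    by_cases hx : xh ∈ U
    · have hind : U.indicator (1 : EuclideanSpace ℝ (Fin N) → ℝ) xh = 1 := by
        rw [Set.indicator_of_mem hx]; rfl
      have hφx : φ xh = 1 := by rw [hind] at h0; linarith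
      have hmax : IsLocalMax φ xh := by
        filter_upwards [hUopen.mem_nhds hx] with y hy
        have := hmin y (hUΩ hy)
        rw [Set.indicator_of_mem hy, Set.indicator_of_mem hx] at this
        simp only [Pi.one_apply] at this
        linarith
      have hφat : ContDiffAt ℝ 2 φ xh := hφ.contDiffAt (hΩ.mem_nhds (hUΩ hx))
      have hgrad : gradient φ xh = 0 := by
        rw [gradient, hmax.fderiv_eq_zero, map_zero]
      have hherm : (hess φ xh).IsHermitian := hess_isHermitian hφat
      have hpsd := negHess_posSemidef hφat hmax
      rw [hind, hgrad]
      calc F 1 0 (hess φ xh) ≤ F 1 0 0 :=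
            hell 1 0 _ 0 hherm Matrix.isHermitian_zero hpsd
        _ ≤ F 0 0 0 := hmonou 1 0 0 zero_le_one
        _ ≤ 0 := hF0
    · have hind : U.indicator (1 : EuclideanSpace ℝ (Fin N) → ℝ) xh = 0 :=
        Set.indicator_of_notMem hx 1
      have hφx : φ xh = 0 := by rw [hind] at h0; linarith
      have hle : ∀ x ∈ Ω \ U, φ x ≤ 0 := by
        intro x hxΩU
        have := hmin x hxΩU.1
        rw [Set.indicator_of_notMem hxΩU.2, Set.indicator_of_notMem hx] at this
        linarith
      have := hG φ hφ xh ⟨hxh, hx⟩ hle hφx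
      rw [hind]
      rwa [hφx] at this
  · intro hne
    obtain ⟨x, hxΩ, hxU⟩ := Set.exists_of_ssubset (hUΩ.ssubset_of_ne hne)
    refine ⟨x, hxΩ, Set.indicator_of_notMem hxU 1, fun y _ => ?_⟩
    rw [Set.indicator_of_notMem hxU]
    exact Set.indicator_nonneg (fun _ _ => zero_le_one) y
  · ext x
    simp only [Set.mem_setOf_eq]
    constructor
    · rintro ⟨-, hpos⟩
      by_contra hxU
      rw [Set.indicator_of_notMem hxU] at hpos
      exact lt_irrefl 0 hpos
    · intro hxU
      refine ⟨hUΩ hxU, ?_⟩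
      rw [Set.indicator_of_mem hxU]
      norm_num
end

section
/- Let F : R × R^N × S^N → R be continuous, degenerate elliptic, nonincreasing in u for nonnegative u, and independent of x. Let U ⊆ R^N be open and satisfy: for all φ ∈ C²(R^N) and x̂ ∈ R^N \ U with φ ≤ φ(x̂) = 0 on R^N \ U one has F(φ(x̂), Dφ(x̂), D²φ(x̂)) ≤ 0. Then the distance function v(x) = dist(x, R^N \ U) is a continuous nonnegative viscosity supersolution of F(v, Dv, D²v) = 0 on R^N with U = {x : v(x) > 0}. -/
open Metric Set Filter Topology

section helpers

variable {E G : Type*} [NormedAddCommGroup E] [NormedSpace ℝ E]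
  [NormedAddCommGroup G] [NormedSpace ℝ G]

lemma diffAt_comp_add_right {f : E → G} {v x : E}
    (h : DifferentiableAt ℝ f (x + v)) : DifferentiableAt ℝ (fun y => f (y + v)) x :=
  h.comp x (differentiableAt_id.add_const v)

lemma fderiv_comp_add_right' (f : E → G) (v x : E) :
    fderiv ℝ (fun y => f (y + v)) x = fderiv ℝ f (x + v) := by
  by_cases h : DifferentiableAt ℝ f (x + v)
  · have h1 : HasFDerivAt (fun y : E => y + v) (ContinuousLinearMap.id ℝ E) x :=
      (hasFDerivAt_id x).add_const v
    have h2 := (h.hasFDerivAt.comp x h1)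
    exact h2.fderiv
  · rw [fderiv_zero_of_not_differentiableAt h, fderiv_zero_of_not_differentiableAt]
    intro hd
    have h3 : DifferentiableAt ℝ (fun z => (fun y => f (y + v)) (z + (-v))) (x + v) :=
      diffAt_comp_add_right (f := fun y => f (y + v)) (v := -v) (x := x + v) (by simpa using hd)
    apply h
    have : (fun z => (fun y => f (y + v)) (z + (-v))) = f := by
      funext z; simp
    rwa [this] at h3

lemma iteratedFDeriv_comp_add_right'' (n : ℕ) (f : E → G) (v : E) :
    ∀ x, iteratedFDeriv ℝ n (fun y => f (y + v)) x = iteratedFDeriv ℝ n f (x + v) := by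
  induction n with
  | zero => intro x; ext m; simp [iteratedFDeriv_zero_apply]
  | succ n ih =>
    intro x
    rw [iteratedFDeriv_succ_eq_comp_left, iteratedFDeriv_succ_eq_comp_left]
    simp only [Function.comp_apply]
    congr 1
    have h1 : (iteratedFDeriv ℝ n fun y => f (y + v))
        = (fun y => iteratedFDeriv ℝ n f (y + v)) := funext ih
    rw [h1]
    exact fderiv_comp_add_right' (iteratedFDeriv ℝ n f) v x

lemma eventuallyEq_iteratedFDeriv_eq' {f₁ f : E → G} {x : E} (h : f₁ =ᶠ[nhds x] f) (n : ℕ) :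
    iteratedFDeriv ℝ n f₁ x = iteratedFDeriv ℝ n f x := by
  rw [← iteratedFDerivWithin_univ, ← iteratedFDerivWithin_univ]
  exact Filter.EventuallyEq.iteratedFDerivWithin_eq (by rwa [nhdsWithin_univ]) h.eq_of_nhds n

end helpers

/-- If an open set `U ⊆ ℝ^N` satisfies the geometric condition (G_{F,U}),
then `v(x) = dist(x, ℝ^N \ U)` is a continuous nonnegative viscosity
supersolution of `F(v, Dv, D²v) = 0` on `ℝ^N` with positivity set `U`. -/
theorem stmt8 {N : ℕ}
    (F : ℝ → EuclideanSpace ℝ (Fin N) → Matrix (Fin N) (Fin N) ℝ → ℝ)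
    (hFc : Continuous fun q : ℝ × EuclideanSpace ℝ (Fin N) × Matrix (Fin N) (Fin N) ℝ =>
      F q.1 q.2.1 q.2.2)
    (hell : ∀ (u : ℝ) (p : EuclideanSpace ℝ (Fin N)) (X Y : Matrix (Fin N) (Fin N) ℝ),
      X.IsHermitian → Y.IsHermitian → (Y - X).PosSemidef → F u p X ≤ F u p Y)
    (hmonou : ∀ (u : ℝ) (p : EuclideanSpace ℝ (Fin N)) (X : Matrix (Fin N) (Fin N) ℝ),
      0 ≤ u → F u p X ≤ F 0 p X)
    (U : Set (EuclideanSpace ℝ (Fin N))) (hUopen : IsOpen U) (hUne : U ≠ Set.univ)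
    (hG : ∀ φ : EuclideanSpace ℝ (Fin N) → ℝ, ContDiff ℝ 2 φ →
      ∀ xh ∉ U, (∀ x ∉ U, φ x ≤ 0) → φ xh = 0 →
        F (φ xh) (gradient φ xh) (hess φ xh) ≤ 0) :
    Continuous (fun x => Metric.infDist x Uᶜ) ∧
      (∀ x, 0 ≤ Metric.infDist x Uᶜ) ∧
      (∀ φ : EuclideanSpace ℝ (Fin N) → ℝ, ContDiff ℝ 2 φ →
        ∀ xh, IsLocalMin (fun y => Metric.infDist y Uᶜ - φ y) xh →
          F (Metric.infDist xh Uᶜ) (gradient φ xh) (hess φ xh) ≤ 0) ∧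
      U = {x | 0 < Metric.infDist x Uᶜ} := by
  have hScl : IsClosed Uᶜ := hUopen.isClosed_compl
  have hSne : Uᶜ.Nonempty := Set.nonempty_compl.mpr hUne
  refine ⟨Metric.continuous_infDist_pt _, fun _ => Metric.infDist_nonneg, ?_, ?_⟩
  · intro φ hφ xh hmin
    obtain ⟨z, hzS, hzd⟩ := hScl.exists_infDist_eq_dist hSne xh
    have hmin' : ∀ᶠ y in nhds xh,
        Metric.infDist xh Uᶜ - φ xh ≤ Metric.infDist y Uᶜ - φ y := hmin
    obtain ⟨ε, hε, hball⟩ := Metric.eventually_nhds_iff_ball.mp hmin'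
    set v : EuclideanSpace ℝ (Fin N) := xh - z with hv
    have hzv : z + v = xh := by rw [hv]; abel
    have hεh : (0:ℝ) < ε/2 := by linarith
    let c : ContDiffBump z := ⟨ε/2, ε, hεh, by linarith⟩
    set ψ : EuclideanSpace ℝ (Fin N) → ℝ := fun y => c y * (φ (y + v) - φ xh) with hψdef
    have hcomp : ContDiff ℝ 2 (fun y : EuclideanSpace ℝ (Fin N) => φ (y + v)) :=
      hφ.comp (contDiff_id.add contDiff_const)
    have hψC : ContDiff ℝ 2 ψ := c.contDiff.mul (hcomp.sub contDiff_const)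
    have hψle : ∀ x ∉ U, ψ x ≤ 0 := by
      intro x hx
      by_cases hxz : dist x z < ε
      · have hdist1 : dist (x + v) xh = dist x z := by
          rw [dist_eq_norm, dist_eq_norm]; congr 1; rw [hv]; abel
        have hmem : x + v ∈ Metric.ball xh ε := by rw [Metric.mem_ball, hdist1]; exact hxz
        have h1 := hball _ hmem
        have h2 : Metric.infDist (x + v) Uᶜ ≤ dist (x + v) x :=
          Metric.infDist_le_dist_of_mem hx
        have hdist2 : dist (x + v) x = dist xh z := by
          rw [dist_eq_norm, dist_eq_norm]; congr 1; rw [hv]; abel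
        rw [hdist2] at h2
        rw [hzd] at h1
        have hle : φ (x + v) - φ xh ≤ 0 := by linarith
        exact mul_nonpos_of_nonneg_of_nonpos c.nonneg hle
      · have hc0 : c x = 0 := c.zero_of_le_dist (le_of_not_gt hxz)
        simp [hψdef, hc0]
    have hψz : ψ z = 0 := by simp [hψdef, hzv]
    have hev : ψ =ᶠ[nhds z] fun y => φ (y + v) - φ xh := by
      filter_upwards [Metric.closedBall_mem_nhds z hεh] with y hy
      have hcy : c y = 1 := c.one_of_mem_closedBall hy
      simp [hψdef, hcy]
    have hfd : fderiv ℝ (fun y => φ (y + v) - φ xh) z = fderiv ℝ φ xh := by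
      rw [fderiv_sub_const, fderiv_comp_add_right' φ v z, hzv]
    have hgrad : gradient ψ z = gradient φ xh := by
      rw [hev.gradient_eq]
      unfold gradient
      rw [hfd]
    have hiter : iteratedFDeriv ℝ 2 ψ z = iteratedFDeriv ℝ 2 φ xh := by
      rw [eventuallyEq_iteratedFDeriv_eq' hev 2]
      have hstep : iteratedFDeriv ℝ 2 (fun y => φ (y + v) - φ xh) z
          = iteratedFDeriv ℝ 2 (fun y => φ (y + v)) z := by
        have heq : (fun y : EuclideanSpace ℝ (Fin N) => φ (y + v) - φ xh)
            = (fun y => φ (y + v) + (fun _ : EuclideanSpace ℝ (Fin N) => -φ xh) y) := by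
          funext y; simp [sub_eq_add_neg]
        rw [heq, iteratedFDeriv_add_apply' (i := 2) hcomp.contDiffAt (contDiff_const.contDiffAt),
          iteratedFDeriv_const_of_ne (by norm_num)]
        simp
      rw [hstep, iteratedFDeriv_comp_add_right'' 2 φ v z, hzv]
    have hhess : hess ψ z = hess φ xh := by
      funext i j
      simp only [hess, hiter]
    have hG' := hG ψ hψC z hzS hψle hψz
    rw [hψz, hgrad, hhess] at hG'
    calc F (Metric.infDist xh Uᶜ) (gradient φ xh) (hess φ xh)
        ≤ F 0 (gradient φ xh) (hess φ xh) := hmonou _ _ _ Metric.infDist_nonneg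
      _ ≤ 0 := hG'
  · ext x
    simp only [Set.mem_setOf_eq]
    rw [← hScl.notMem_iff_infDist_pos hSne]
    simp
end

section
/- Let U be an open subset of Ω ⊆ R^N whose relative boundary Ω ∩ ∂U is a C² hypersurface, and suppose at each boundary point the principal curvatures κ_1 ≤ ... ≤ κ_{N−1} (with the convention that curvatures of a ball are positive as seen from inside U) satisfy κ_{N−k} + ... + κ_{N−1} ≥ 0. Then condition (G_{P_k^-,Ω,U}) holds: for every φ ∈ C²(Ω) and x̂ ∈ Ω \ U with φ ≤ φ(x̂) = 0 on Ω \ U, P_k^-(D²φ(x̂)) ≤ 0. -/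
lemma card_filter_lt {N k : ℕ} (hkN : k < N) :
    (Finset.univ.filter (fun i : Fin N => (i : ℕ) < k)).card = k := by
  have : Finset.univ.filter (fun i : Fin N => (i : ℕ) < k) = Finset.Iio (⟨k, hkN⟩ : Fin N) := by
    ext i; simp [Fin.lt_def]
  rw [this, Fin.card_Iio]

lemma maj {N k : ℕ} (hkN : k < N) {μ d : Fin N → ℝ}
    (hμ : Monotone μ) (h0 : ∀ i, 0 ≤ d i) (h1 : ∀ i, d i ≤ 1)
    (hsum : ∑ i, d i = k) (hk1 : 1 ≤ k) :
    ∑ i ∈ Finset.univ.filter (fun i : Fin N => (i : ℕ) < k), μ i ≤ ∑ i, d i * μ i := by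
  have hK : k - 1 < N := by omega
  set t := μ ⟨k - 1, hK⟩ with ht
  have key : ∀ i : Fin N, t * (d i - (if (i : ℕ) < k then 1 else 0)) ≤
      d i * μ i - (if (i : ℕ) < k then μ i else 0) := by
    intro i
    by_cases hi : (i : ℕ) < k
    · have hμi : μ i ≤ t := hμ (by simp [Fin.le_def]; omega)
      simp only [hi, if_true]
      nlinarith [h1 i]
    · have hμi : t ≤ μ i := hμ (by simp [Fin.le_def]; omega)
      simp only [hi, if_false]
      nlinarith [h0 i]
  have hsum2 : ∑ i : Fin N, (if (i : ℕ) < k then (1 : ℝ) else 0) = k := by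
    rw [Finset.sum_boole]
    simp [card_filter_lt hkN]
  have h := Finset.sum_le_sum (fun i (_ : i ∈ Finset.univ) => key i)
  have e1 : ∑ i : Fin N, t * (d i - (if (i : ℕ) < k then (1:ℝ) else 0)) = 0 := by
    rw [← Finset.mul_sum, Finset.sum_sub_distrib, hsum, hsum2, sub_self, mul_zero]
  have e2 : ∑ i : Fin N, (d i * μ i - (if (i : ℕ) < k then μ i else 0)) =
      ∑ i : Fin N, d i * μ i - ∑ i ∈ Finset.univ.filter (fun i : Fin N => (i : ℕ) < k), μ i := by
    rw [Finset.sum_sub_distrib, ← Finset.sum_filter]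
  rw [e1, e2] at h
  linarith

lemma card_filter_ge {n k : ℕ} (hk1 : 1 ≤ k) (hkn : k ≤ n) :
    (Finset.univ.filter (fun i : Fin n => n - k ≤ (i : ℕ))).card = k := by
  have h1 : n - k < n := by omega
  have : Finset.univ.filter (fun i : Fin n => n - k ≤ (i : ℕ)) =
      Finset.Ici (⟨n - k, h1⟩ : Fin n) := by
    ext i; simp [Fin.le_def]
  rw [this, Fin.card_Ici]
  show n - (n - k) = k
  omega

lemma euclid_sum_apply {ι : Type*} {N : ℕ} (s : Finset ι)
    (f : ι → EuclideanSpace ℝ (Fin N)) (m : Fin N) :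
    (∑ i ∈ s, f i) m = ∑ i ∈ s, f i m := by
  induction s using Finset.cons_induction with
  | empty => rfl
  | cons a s ha ih => rw [Finset.sum_cons, Finset.sum_cons, PiLp.add_apply, ih]

lemma euclid_inner_apply {N : ℕ} (x y : EuclideanSpace ℝ (Fin N)) :
    inner (𝕜 := ℝ) x y = ∑ i, x i * y i := by
  simp [PiLp.inner_apply, RCLike.inner_apply, conj_trivial]
  exact Finset.sum_congr rfl (fun i _ => mul_comm _ _)

lemma kyFan {N : ℕ} {k : ℕ} (hk1 : 1 ≤ k) (hkN : k < N)
    {A : Matrix (Fin N) (Fin N) ℝ} (hA : A.IsHermitian)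
    {ι : Type*} (s : Finset ι) (hcard : s.card = k)
    (v : ι → EuclideanSpace ℝ (Fin N))
    (hv : Orthonormal ℝ (fun j : s => v j)) :
    sumMinEig k A ≤ ∑ j ∈ s, inner (𝕜 := ℝ) (v j) (WithLp.toLp 2 (A.mulVec (v j))) := by
  classical
  set b := hA.eigenvectorBasis with hb
  set lam := hA.eigenvalues with hlam
  -- action of A on eigenvectors, scalar form
  have hAb : ∀ (i j : Fin N), (∑ m, A j m * b i m) = lam i * b i j := by
    intro i j
    have h := congrFun (hA.mulVec_eigenvectorBasis i) j
    simpa [Matrix.mulVec, dotProduct, Pi.smul_apply,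
      smul_eq_mul] using h
  -- expansion of any vector in the eigenbasis
  have hxrep : ∀ (x : EuclideanSpace ℝ (Fin N)) (m : Fin N),
      x m = ∑ i, (inner (𝕜 := ℝ) (b i) x) * b i m := by
    intro x m
    conv_lhs => rw [← b.sum_repr x]
    rw [euclid_sum_apply]
    congr 1; ext i
    rw [PiLp.smul_apply, b.repr_apply_apply, smul_eq_mul]
  -- quadratic form expansion
  have hquad : ∀ x : EuclideanSpace ℝ (Fin N),
      inner (𝕜 := ℝ) x (WithLp.toLp 2 (A.mulVec x)) = ∑ i, lam i * (inner (𝕜 := ℝ) (b i) x) ^ 2 := by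
    intro x
    rw [euclid_inner_apply]
    simp only [WithLp.ofLp_toLp]
    have hmv : ∀ j, A.mulVec x j = ∑ i, (inner (𝕜 := ℝ) (b i) x) * (lam i * b i j) := by
      intro j
      calc A.mulVec x j = ∑ m, A j m * x m := by
            simp [Matrix.mulVec, dotProduct]
        _ = ∑ m, A j m * ∑ i, (inner (𝕜 := ℝ) (b i) x) * b i m := by
            apply Finset.sum_congr rfl; intro m _; rw [← hxrep]
        _ = ∑ m, ∑ i, (inner (𝕜 := ℝ) (b i) x) * (A j m * b i m) := by
            apply Finset.sum_congr rfl; intro m _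
            rw [Finset.mul_sum]
            apply Finset.sum_congr rfl; intro i _; ring
        _ = ∑ i, (inner (𝕜 := ℝ) (b i) x) * ∑ m, (A j m * b i m) := by
            rw [Finset.sum_comm]
            apply Finset.sum_congr rfl; intro i _; rw [Finset.mul_sum]
        _ = ∑ i, (inner (𝕜 := ℝ) (b i) x) * (lam i * b i j) := by
            apply Finset.sum_congr rfl; intro i _; rw [hAb]
    calc ∑ j, x j * A.mulVec x j
        = ∑ j, ∑ i, (inner (𝕜 := ℝ) (b i) x) * (lam i * (b i j * x j)) := by
          apply Finset.sum_congr rfl; intro j _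
          rw [hmv, Finset.mul_sum]
          apply Finset.sum_congr rfl; intro i _; ring
      _ = ∑ i, (inner (𝕜 := ℝ) (b i) x) * (lam i * ∑ j, b i j * x j) := by
          rw [Finset.sum_comm]
          apply Finset.sum_congr rfl; intro i _
          rw [Finset.mul_sum, Finset.mul_sum]
      _ = ∑ i, lam i * (inner (𝕜 := ℝ) (b i) x) ^ 2 := by
          apply Finset.sum_congr rfl; intro i _
          rw [← euclid_inner_apply]; ring
  -- the weights
  set c : Fin N → ℝ := fun i => ∑ j ∈ s, (inner (𝕜 := ℝ) (b i) (v j)) ^ 2 with hc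
  have hc0 : ∀ i, 0 ≤ c i := fun i => Finset.sum_nonneg fun j _ => sq_nonneg _
  have hc1 : ∀ i, c i ≤ 1 := by
    intro i
    have hb1 : ‖b i‖ = 1 := b.orthonormal.1 i
    have hbes := hv.sum_inner_products_le (b i) (s := Finset.univ)
    have he : ∑ j : s, ‖inner (𝕜 := ℝ) (v j) (b i)‖ ^ 2
        = ∑ j ∈ s, (inner (𝕜 := ℝ) (b i) (v j)) ^ 2 := by
      rw [← Finset.sum_coe_sort s (fun j => (inner (𝕜 := ℝ) (b i) (v j)) ^ 2)]
      apply Finset.sum_congr rfl; intro j _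
      rw [real_inner_comm, Real.norm_eq_abs, sq_abs]
    rw [he] at hbes
    calc c i = ∑ j ∈ s, (inner (𝕜 := ℝ) (b i) (v j)) ^ 2 := rfl
      _ ≤ ‖b i‖ ^ 2 := hbes
      _ = 1 := by rw [hb1]; norm_num
  have hcsum : ∑ i, c i = k := by
    rw [Finset.sum_comm]
    have : ∀ j ∈ s, ∑ i, (inner (𝕜 := ℝ) (b i) (v j)) ^ 2 = 1 := by
      intro j hj
      have hnorm : ‖v j‖ = 1 := hv.1 ⟨j, hj⟩
      have hp := b.sum_inner_mul_inner (v j) (v j)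
      have : ∑ i, (inner (𝕜 := ℝ) (b i) (v j)) ^ 2
          = inner (𝕜 := ℝ) (v j) (v j) := by
        rw [← hp]
        apply Finset.sum_congr rfl; intro i _
        rw [real_inner_comm (v j) (b i)]; ring
      rw [this, real_inner_self_eq_norm_sq, hnorm]; norm_num
    rw [Finset.sum_congr rfl this, Finset.sum_const, hcard, nsmul_eq_mul, mul_one]
  -- rewrite RHS
  have hrhs : ∑ j ∈ s, inner (𝕜 := ℝ) (v j) (WithLp.toLp 2 (A.mulVec (v j))) = ∑ i, lam i * c i := by
    rw [Finset.sum_congr rfl (fun j _ => hquad (v j)), Finset.sum_comm]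
    apply Finset.sum_congr rfl; intro i _
    rw [hc, Finset.mul_sum]
  rw [hrhs]
  -- sorted eigenvalues
  set σ := Tuple.sort lam with hσ
  have hmono : Monotone (lam ∘ σ) := Tuple.monotone_sort lam
  have hsum' : ∑ i, (c ∘ σ) i = (k : ℝ) := by
    rw [← hcsum]; exact Equiv.sum_comp σ c
  have hmain := maj hkN hmono (fun i => hc0 (σ i)) (fun i => hc1 (σ i)) hsum' hk1
  have hse : sumMinEig k A = ∑ i ∈ Finset.univ.filter (fun i : Fin N => (i : ℕ) < k),
      (lam ∘ σ) i := by
    rw [sumMinEig]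
    apply Finset.sum_congr rfl; intro i _
    rw [sortedEig, dif_pos hA]
  rw [hse]
  calc ∑ i ∈ Finset.univ.filter (fun i : Fin N => (i : ℕ) < k), (lam ∘ σ) i
      ≤ ∑ i, (c ∘ σ) i * (lam ∘ σ) i := hmain
    _ = ∑ i, lam i * c i := by
        rw [← Equiv.sum_comp σ (fun i => lam i * c i)]
        apply Finset.sum_congr rfl; intro i _
        simp [mul_comm]

open Filter Set Topology

lemma deriv2_nonpos_of_isLocalMax {ψ : ℝ → ℝ} (hψ : ContDiffAt ℝ 2 ψ 0)
    (hmax : IsLocalMax ψ 0) : deriv (deriv ψ) 0 ≤ 0 := by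
  by_contra hcon
  push_neg at hcon
  set b := deriv (deriv ψ) 0 with hbdef
  have h1 : deriv ψ 0 = 0 := hmax.deriv_eq_zero
  -- differentiability near 0
  have hev : ∀ᶠ t in 𝓝 (0 : ℝ), ContDiffAt ℝ 2 ψ t := hψ.eventually (by simp)
  have hdiff : ∀ᶠ t in 𝓝 (0 : ℝ), DifferentiableAt ℝ ψ t :=
    hev.mono fun t ht => ht.differentiableAt (by norm_num)
  -- deriv ψ has derivative b at 0
  have hd2 : DifferentiableAt ℝ (deriv ψ) 0 := by
    have h := hψ.fderiv_right (m := 1) (by norm_num)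
    have h2 : DifferentiableAt ℝ (fun t => fderiv ℝ ψ t 1) 0 :=
      (h.differentiableAt (by norm_num)).clm_apply (differentiableAt_const _)
    have : deriv ψ = fun t => fderiv ℝ ψ t 1 := by
      funext t; rw [fderiv_apply_one_eq_deriv]
    rw [this]; exact h2
  have hb : HasDerivAt (deriv ψ) b 0 := hd2.hasDerivAt
  -- slope of deriv ψ is eventually positive
  have hslope : Tendsto (fun t => deriv ψ t / t) (𝓝[≠] (0:ℝ)) (𝓝 b) := by
    have := hasDerivAt_iff_tendsto_slope.1 hb
    refine this.congr' ?_
    filter_upwards [self_mem_nhdsWithin] with t ht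
    rw [slope_def_field, h1]
    simp [div_eq_inv_mul]
  have hpos : ∀ᶠ t in 𝓝[≠] (0:ℝ), 0 < deriv ψ t / t :=
    hslope.eventually (eventually_gt_nhds hcon)
  -- get a uniform ε
  rw [eventually_nhdsWithin_iff] at hpos
  obtain ⟨ε₁, hε₁, hP⟩ := Metric.eventually_nhds_iff.1 (hpos.and (hdiff.and hmax))
  set ε := ε₁ / 2 with hε
  have hεpos : 0 < ε := by positivity
  have hkey : ∀ t : ℝ, |t| < ε₁ →
      (t ≠ 0 → 0 < deriv ψ t / t) ∧ DifferentiableAt ℝ ψ t ∧ ψ t ≤ ψ 0 := by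
    intro t ht
    have := hP (by simpa [Real.dist_eq] using ht)
    exact ⟨fun h => this.1 h, this.2.1, this.2.2⟩
  -- MVT on [0, ε]
  have hmvt : ∃ c ∈ Ioo (0:ℝ) ε, deriv ψ c = (ψ ε - ψ 0) / (ε - 0) := by
    apply exists_deriv_eq_slope ψ hεpos
    · intro t ht
      have ht' : |t| < ε₁ := by
        simp only [mem_Icc] at ht
        rw [abs_lt]; constructor <;> [linarith; linarith [half_lt_self hε₁]]
      exact ((hkey t ht').2.1).continuousAt.continuousWithinAt
    · intro t ht
      have ht' : |t| < ε₁ := by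
        simp only [mem_Ioo] at ht
        rw [abs_lt]; constructor <;> [linarith; linarith [half_lt_self hε₁]]
      exact ((hkey t ht').2.1).differentiableWithinAt
  obtain ⟨c, hc, hceq⟩ := hmvt
  simp only [mem_Ioo] at hc
  have hcabs : |c| < ε₁ := by
    rw [abs_lt]; constructor <;> [linarith; linarith [half_lt_self hε₁]]
  have hcpos : 0 < deriv ψ c := by
    have := (hkey c hcabs).1 (ne_of_gt hc.1)
    have h2 := mul_pos this (show (0:ℝ) < c from hc.1)
    rwa [div_mul_cancel₀] at h2
    exact ne_of_gt hc.1
  have hεabs : |ε| < ε₁ := by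
    rw [abs_of_pos hεpos]; linarith [half_lt_self hε₁]
  have hψε : ψ ε ≤ ψ 0 := (hkey ε hεabs).2.2
  rw [hceq] at hcpos
  have : (ψ ε - ψ 0) / (ε - 0) ≤ 0 := by
    apply div_nonpos_of_nonpos_of_nonneg <;> linarith
  linarith

variable {E : Type*} [NormedAddCommGroup E] [NormedSpace ℝ E]

lemma curve_test {φ : E → ℝ} {x : E} (hφ : ContDiffAt ℝ 2 φ x)
    {c : ℝ → E} (hc : ContDiff ℝ 2 c) (hc0 : c 0 = x)
    (hmax : ∀ᶠ t in 𝓝 (0:ℝ), φ (c t) ≤ φ x) :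
    fderiv ℝ (fderiv ℝ φ) x (deriv c 0) (deriv c 0) + fderiv ℝ φ x (deriv (deriv c) 0) ≤ 0 := by
  set ψ := φ ∘ c with hψdef
  have hcd : Differentiable ℝ c := hc.differentiable (by norm_num)
  have hφc0 : ContDiffAt ℝ 2 φ (c 0) := by rwa [hc0]
  have hψ : ContDiffAt ℝ 2 ψ 0 := hφc0.comp 0 hc.contDiffAt
  have hmax' : IsLocalMax ψ 0 := by
    have : ψ 0 = φ x := by rw [hψdef, Function.comp_apply, hc0]
    rw [IsLocalMax, IsMaxFilter, this]
    exact hmax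
  have htest := deriv2_nonpos_of_isLocalMax hψ hmax'
  -- now compute deriv (deriv ψ) 0
  have hev : ∀ᶠ t in 𝓝 (0:ℝ), DifferentiableAt ℝ φ (c t) := by
    have h1 : ∀ᶠ y in 𝓝 x, ContDiffAt ℝ 2 φ y := hφ.eventually (by simp)
    have h2 : Tendsto c (𝓝 0) (𝓝 x) := by
      rw [← hc0]; exact hc.continuous.continuousAt
    exact (h2.eventually h1).mono fun t ht => ht.differentiableAt (by norm_num)
  have hderiv1 : ∀ᶠ t in 𝓝 (0:ℝ), deriv ψ t = fderiv ℝ φ (c t) (deriv c t) := by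
    filter_upwards [hev] with t ht
    exact (ht.hasFDerivAt.comp_hasDerivAt t (hcd t).hasDerivAt).deriv
  have heq : deriv (deriv ψ) 0 = deriv (fun t => fderiv ℝ φ (c t) (deriv c t)) 0 :=
    Filter.EventuallyEq.deriv_eq hderiv1
  -- derivative of t ↦ fderiv φ (c t) applied to deriv c t
  have hB : HasFDerivAt (fderiv ℝ φ) (fderiv ℝ (fderiv ℝ φ) x) x :=
    ((hφ.fderiv_right (m := 1) (by norm_num)).differentiableAt (by norm_num)).hasFDerivAt
  have hBc : HasFDerivAt (fderiv ℝ φ) (fderiv ℝ (fderiv ℝ φ) x) (c 0) := by rwa [hc0]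
  have hcv : HasDerivAt c (deriv c 0) 0 := (hcd 0).hasDerivAt
  have hA : HasDerivAt (fun t => fderiv ℝ φ (c t)) (fderiv ℝ (fderiv ℝ φ) x (deriv c 0)) 0 :=
    hBc.comp_hasDerivAt 0 hcv
  have hdc : ContDiff ℝ 1 (deriv c) := by
    have h2 : (2 : WithTop ℕ∞) = 1 + 1 := by norm_num
    rw [h2, contDiff_succ_iff_deriv] at hc
    exact hc.2.2
  have hu : HasDerivAt (deriv c) (deriv (deriv c) 0) 0 :=
    ((hdc.differentiable (by norm_num)) 0).hasDerivAt
  have hfinal := hA.clm_apply hu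
  rw [heq, hfinal.deriv] at htest
  rw [hc0] at htest
  linarith [htest]

set_option maxHeartbeats 2000000 in
/-- If the relative boundary `Ω ∩ ∂U` is a C² hypersurface whose principal
curvatures satisfy `κ_{N−k} + ⋯ + κ_{N−1} ≥ 0` at every point, then the
geometric condition (G_{P_k^-,Ω,U}) holds.  Here `N = n + 1`. -/
theorem stmt11 {n : ℕ} (k : ℕ) (hk1 : 1 ≤ k) (hkN : k < n + 1)
    (Ω U : Set (EuclideanSpace ℝ (Fin (n + 1))))
    (hΩ : IsOpen Ω) (hUopen : IsOpen U) (hUΩ : U ⊆ Ω)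
    (hbdry : ∀ z ∈ Ω ∩ frontier U, ∃ (r : ℝ), 0 < r ∧
      ∃ (g : EuclideanSpace ℝ (Fin (n + 1)) ≃ᵢ EuclideanSpace ℝ (Fin (n + 1)))
        (f : EuclideanSpace ℝ (Fin n) → ℝ) (κ : Fin n → ℝ),
      g 0 = z ∧ Metric.ball z r ⊆ Ω ∧ ContDiff ℝ 2 f ∧ f 0 = 0 ∧
      gradient f 0 = 0 ∧ hess f 0 = Matrix.diagonal κ ∧ Monotone κ ∧
      (∀ x : EuclideanSpace ℝ (Fin (n + 1)), x ∈ Metric.ball (0 : EuclideanSpace ℝ (Fin (n + 1))) r →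
        (g x ∈ U ↔ f (WithLp.toLp 2 (fun i : Fin n => x i.castSucc)) < x (Fin.last n))) ∧
      0 ≤ ∑ i ∈ Finset.univ.filter (fun i : Fin n => n - k ≤ (i : ℕ)), κ i) :
    ∀ φ : EuclideanSpace ℝ (Fin (n + 1)) → ℝ, ContDiffOn ℝ 2 φ Ω →
      ∀ xh ∈ Ω \ U, (∀ x ∈ Ω \ U, φ x ≤ 0) → φ xh = 0 →
        sumMinEig k (hess φ xh) ≤ 0 := by
  intro φ hφ xh hxh hmax hφ0
  classical
  have hφx : ContDiffAt ℝ 2 φ xh := hφ.contDiffAt (hΩ.mem_nhds hxh.1)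
  set B := fderiv ℝ (fderiv ℝ φ) xh with hBdef
  have hsym : ∀ v w : EuclideanSpace ℝ (Fin (n + 1)), B v w = B w v :=
    fun v w => (hφx.isSymmSndFDerivAt (by simp)).eq v w
  have hessEq : ∀ i j, hess φ xh i j
      = B (EuclideanSpace.single i 1) (EuclideanSpace.single j 1) := by
    intro i j
    rw [hess, iteratedFDeriv_two_apply]
    simp
    rfl
  have hA : (hess φ xh).IsHermitian := by
    rw [Matrix.IsHermitian]
    ext i j
    rw [Matrix.conjTranspose_apply, hessEq, hessEq, hsym]
    simp
  have hrepr : ∀ v : EuclideanSpace ℝ (Fin (n + 1)),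
      ∑ i, v i • (EuclideanSpace.single i 1 : EuclideanSpace ℝ (Fin (n + 1))) = v := by
    intro v
    have h := (EuclideanSpace.basisFun (Fin (n + 1)) ℝ).sum_repr v
    simpa [EuclideanSpace.basisFun_repr, EuclideanSpace.basisFun_apply] using h
  have hlin : ∀ (T : EuclideanSpace ℝ (Fin (n + 1)) →L[ℝ] ℝ)
      (v : EuclideanSpace ℝ (Fin (n + 1))),
      T v = ∑ i, v i * T (EuclideanSpace.single i 1) := by
    intro T v
    conv_lhs => rw [← hrepr v]
    rw [map_sum]
    apply Finset.sum_congr rfl; intro i _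
    rw [map_smul, smul_eq_mul]
  have hquadA : ∀ v : EuclideanSpace ℝ (Fin (n + 1)),
      inner (𝕜 := ℝ) v (WithLp.toLp 2 ((hess φ xh).mulVec v)) = B v v := by
    intro v
    rw [euclid_inner_apply]
    simp only [WithLp.ofLp_toLp]
    have h1 : B v v = ∑ i, v i * B (EuclideanSpace.single i 1) v := by
      have h := hlin (B.flip v) v
      simpa using h
    rw [h1]
    apply Finset.sum_congr rfl; intro i _
    have hmv : (hess φ xh).mulVec v i = ∑ j, hess φ xh i j * v j := by
      simp [Matrix.mulVec, dotProduct]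
    rw [hmv, hlin (B (EuclideanSpace.single i 1)) v, Finset.mul_sum, Finset.mul_sum]
    apply Finset.sum_congr rfl; intro j _
    rw [hessEq]
    ring
  by_cases hfr : xh ∈ frontier U
  · -- boundary case
    obtain ⟨r, hr, g, f, κ, hg0, hballΩ, hfC, hf0, hgrad, hhess, hκmono, hiff, hκsum⟩ :=
      hbdry xh ⟨hxh.1, hfr⟩
    set L := g.toRealLinearIsometryEquiv with hLdef
    have hgeq : ∀ y, g y = L y + xh := by
      intro y
      rw [IsometryEquiv.toRealLinearIsometryEquiv_apply, hg0]
      abel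
    set Λ : EuclideanSpace ℝ (Fin (n + 1)) →L[ℝ] EuclideanSpace ℝ (Fin (n + 1)) :=
      (L.toContinuousLinearEquiv : EuclideanSpace ℝ (Fin (n + 1)) →L[ℝ]
        EuclideanSpace ℝ (Fin (n + 1))) with hΛdef
    have hΛ : ∀ y, Λ y = L y := fun y => rfl
    have hgrad' : fderiv ℝ f 0 = 0 := by
      have h1 := congrArg (InnerProductSpace.toDual ℝ (EuclideanSpace ℝ (Fin n))) hgrad
      rwa [gradient, LinearIsometryEquiv.apply_symm_apply, map_zero] at h1
    have hfdd : ∀ i : Fin n, fderiv ℝ (fderiv ℝ f) 0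
        (EuclideanSpace.single i 1) (EuclideanSpace.single i 1) = κ i := by
      intro i
      have h := congrFun (congrFun hhess i) i
      rw [hess, iteratedFDeriv_two_apply] at h
      simpa using h
    set eN : EuclideanSpace ℝ (Fin (n + 1)) := EuclideanSpace.single (Fin.last n) 1 with heN
    set μ := fderiv ℝ φ xh (L eN) with hμdef
    -- the directional bound along tangent curves
    have hBound : ∀ i : Fin n,
        B (L (EuclideanSpace.single i.castSucc 1)) (L (EuclideanSpace.single i.castSucc 1))
          ≤ -(κ i * μ) := by
      intro i
      set Ei : EuclideanSpace ℝ (Fin (n + 1)) := EuclideanSpace.single i.castSucc 1 with hEi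
      set ebi : EuclideanSpace ℝ (Fin n) := EuclideanSpace.single i 1 with hebi
      set X : ℝ → EuclideanSpace ℝ (Fin (n + 1)) :=
        fun t => t • Ei + f (t • ebi) • eN with hXdef
      set c : ℝ → EuclideanSpace ℝ (Fin (n + 1)) := fun t => L (X t) + xh with hcdef
      have hX0 : X 0 = 0 := by
        simp [hXdef, hf0]
      have hXc : ContDiff ℝ 2 X := by
        apply ContDiff.add
        · exact contDiff_id.smul contDiff_const
        · exact (hfC.comp (contDiff_id.smul contDiff_const)).smul contDiff_const
      have hcC : ContDiff ℝ 2 c := (L.contDiff.comp hXc).add contDiff_const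
      have hc0 : c 0 = xh := by
        simp [hcdef, hX0]
      have hfd : ∀ t : ℝ, HasDerivAt (fun s => f (s • ebi)) (fderiv ℝ f (t • ebi) ebi) t := by
        intro t
        have h1 : HasDerivAt (fun s : ℝ => s • ebi) ebi t := by
          simpa using (hasDerivAt_id t).smul_const ebi
        exact ((hfC.differentiable (by norm_num)) _).hasFDerivAt.comp_hasDerivAt t h1
      have hXd : ∀ t : ℝ, HasDerivAt X (Ei + (fderiv ℝ f (t • ebi) ebi) • eN) t := by
        intro t
        have h1 : HasDerivAt (fun s : ℝ => s • Ei) Ei t := by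
          simpa using (hasDerivAt_id t).smul_const Ei
        exact h1.add ((hfd t).smul_const eN)
      have hcd : ∀ t : ℝ, HasDerivAt c (L (Ei + (fderiv ℝ f (t • ebi) ebi) • eN)) t := by
        intro t
        exact (Λ.hasFDerivAt.add_const xh).comp_hasDerivAt t (hXd t)
      have hder1 : deriv c 0 = L Ei := by
        rw [(hcd 0).deriv, show ((0:ℝ) • ebi : EuclideanSpace ℝ (Fin n)) = 0 from zero_smul _ _,
          hgrad']
        simp
      have hder2 : deriv (deriv c) 0 = κ i • L eN := by
        have hfun : deriv c = fun t => L Ei + (fderiv ℝ f (t • ebi) ebi) • L eN := by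
          funext t
          rw [(hcd t).deriv, map_add, map_smul]
        rw [hfun]
        have hB2 : HasFDerivAt (fderiv ℝ f) (fderiv ℝ (fderiv ℝ f) 0) 0 :=
          ((hfC.contDiffAt.fderiv_right (m := 1) (by norm_num)).differentiableAt
            (by norm_num)).hasFDerivAt
        have hB2' : HasFDerivAt (fderiv ℝ f) (fderiv ℝ (fderiv ℝ f) 0) ((0:ℝ) • ebi) := by
          rwa [zero_smul]
        have h1 : HasDerivAt (fun s : ℝ => s • ebi) ebi 0 := by
          simpa using (hasDerivAt_id (0:ℝ)).smul_const ebi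
        have h2 : HasDerivAt (fun t : ℝ => fderiv ℝ f (t • ebi))
            (fderiv ℝ (fderiv ℝ f) 0 ebi) 0 := by
          simpa [Function.comp_def] using hB2'.comp_hasDerivAt 0 h1
        have h3 := h2.clm_apply (hasDerivAt_const (0:ℝ) ebi)
        have hsnd : HasDerivAt (fun t : ℝ => fderiv ℝ f (t • ebi) ebi)
            (fderiv ℝ (fderiv ℝ f) 0 ebi ebi) 0 := by
          simpa using h3
        have h4 := (hsnd.smul_const (L eN)).const_add (L Ei)
        rw [h4.deriv, hfdd i]
      have hmaxev : ∀ᶠ t in nhds (0:ℝ), φ (c t) ≤ φ xh := by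
        have htend : Filter.Tendsto X (nhds 0) (nhds 0) :=
          hXc.continuous.tendsto' 0 0 hX0
        filter_upwards [htend.eventually
          (Filter.eventually_mem_set.2 (Metric.ball_mem_nhds
            (0 : EuclideanSpace ℝ (Fin (n + 1))) hr))] with t ht
        have hg : g (X t) = c t := by rw [hgeq]
        have hmemΩ : g (X t) ∈ Ω := by
          apply hballΩ
          rw [Metric.mem_ball, ← hg0, g.dist_eq]
          simpa [Metric.mem_ball] using ht
        have hcoord1 : (WithLp.toLp 2 (fun j : Fin n => X t j.castSucc) :
            EuclideanSpace ℝ (Fin n)) = t • ebi := by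
          ext j
          have hne : j.castSucc ≠ Fin.last n := (Fin.castSucc_lt_last j).ne
          simp [hXdef, PiLp.add_apply, PiLp.smul_apply, hebi, heN, hEi,
            EuclideanSpace.single_apply, hne, Fin.castSucc_inj]
        have hcoord2 : X t (Fin.last n) = f (t • ebi) := by
          have hne : Fin.last n ≠ i.castSucc := (Fin.castSucc_lt_last i).ne'
          simp [hXdef, PiLp.add_apply, PiLp.smul_apply, hEi, heN, hebi,
            EuclideanSpace.single_apply, hne]
        have hnotU : g (X t) ∉ U := by
          rw [hiff (X t) ht, hcoord1, hcoord2]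
          exact lt_irrefl _
        have hle := hmax _ ⟨hmemΩ, hnotU⟩
        rw [hg] at hle
        rw [hφ0]
        exact hle
      have htest := curve_test hφx hcC hc0 hmaxev
      rw [hder1, hder2, map_smul, smul_eq_mul] at htest
      rw [← hBdef] at htest
      linarith
    -- the sign of the normal derivative
    have hμpos : 0 ≤ μ := by
      set γ : ℝ → EuclideanSpace ℝ (Fin (n + 1)) := fun t => L ((-t) • eN) + xh with hγdef
      have hγ0 : γ 0 = xh := by simp [hγdef]
      have h1 : HasDerivAt (fun t : ℝ => (-t) • eN) (-eN) 0 := by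
        have := ((hasDerivAt_id (0:ℝ)).neg).smul_const eN
        simpa using this
      have hF : HasFDerivAt (fun y => Λ y + xh) Λ ((-(0:ℝ)) • eN) := by
        exact Λ.hasFDerivAt.add_const xh
      have hγd : HasDerivAt γ (-(L eN)) 0 := by
        have h := hF.comp_hasDerivAt 0 h1
        simpa [hΛ, Function.comp_def, hγdef, neg_smul, map_neg, map_smul] using h
      have hφd : DifferentiableAt ℝ φ xh := hφx.differentiableAt (by norm_num)
      have hφF : HasFDerivAt φ (fderiv ℝ φ xh) (γ 0) := by
        rw [hγ0]; exact hφd.hasFDerivAt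
      have hcomp : HasDerivAt (fun t => φ (γ t)) (fderiv ℝ φ xh (-(L eN))) 0 :=
        hφF.comp_hasDerivAt 0 hγd
      have htends := hasDerivAt_iff_tendsto_slope.1 hcomp
      have htends' : Filter.Tendsto (slope (fun t => φ (γ t)) 0)
          (nhdsWithin 0 (Set.Ioi 0)) (nhds (fderiv ℝ φ xh (-(L eN)))) :=
        htends.mono_left (nhdsWithin_mono 0 (fun t ht => ne_of_gt ht))
      have hev : ∀ᶠ t in nhdsWithin (0:ℝ) (Set.Ioi 0),
          slope (fun t => φ (γ t)) 0 t ≤ 0 := by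
        filter_upwards [Ioo_mem_nhdsGT_of_mem
          (show (0:ℝ) ∈ Set.Ico 0 r from ⟨le_refl _, hr⟩)] with t ht
        have htr : t ∈ Set.Ioo (0:ℝ) r := ht
        have hmem : ((-t) • eN : EuclideanSpace ℝ (Fin (n + 1)))
            ∈ Metric.ball (0 : EuclideanSpace ℝ (Fin (n + 1))) r := by
          rw [Metric.mem_ball, dist_zero_right, norm_smul, EuclideanSpace.norm_single]
          simp only [norm_neg, Real.norm_eq_abs, norm_one, mul_one]
          rw [abs_of_pos htr.1]
          exact htr.2
        have hmemΩ : g ((-t) • eN) ∈ Ω := by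
          apply hballΩ
          rw [Metric.mem_ball, ← hg0, g.dist_eq]
          simpa [Metric.mem_ball] using hmem
        have hc1 : (WithLp.toLp 2 (fun j : Fin n => ((-t) • eN : EuclideanSpace ℝ (Fin (n + 1)))
            j.castSucc) : EuclideanSpace ℝ (Fin n)) = 0 := by
          ext j
          have hne : j.castSucc ≠ Fin.last n := (Fin.castSucc_lt_last j).ne
          simp [PiLp.smul_apply, heN, EuclideanSpace.single_apply, hne]
        have hc2 : ((-t) • eN : EuclideanSpace ℝ (Fin (n + 1))) (Fin.last n) = -t := by
          simp [PiLp.smul_apply, heN, EuclideanSpace.single_apply]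
        have hnotU : g ((-t) • eN) ∉ U := by
          rw [hiff _ hmem, hc1, hc2, hf0]
          linarith [htr.1]
        have hle := hmax _ ⟨hmemΩ, hnotU⟩
        have hγt : γ t = g ((-t) • eN) := by rw [hgeq]
        rw [slope_def_field, hγ0, hφ0, hγt]
        apply div_nonpos_of_nonpos_of_nonneg
        · simpa using hle
        · simpa using le_of_lt htr.1
      have hle := le_of_tendsto htends' hev
      rw [map_neg] at hle
      rw [hμdef]
      linarith
    -- assemble with Ky Fan
    set s := Finset.univ.filter (fun i : Fin n => n - k ≤ (i : ℕ)) with hsdef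
    have hcard : s.card = k := card_filter_ge hk1 (by omega)
    set v : Fin n → EuclideanSpace ℝ (Fin (n + 1)) :=
      fun i => L (EuclideanSpace.single i.castSucc 1) with hvdef
    have hON : Orthonormal ℝ (fun j : s => v j) := by
      rw [orthonormal_iff_ite]
      intro a c
      rw [hvdef]
      simp only [LinearIsometryEquiv.inner_map_map]
      rw [EuclideanSpace.inner_single_left]
      have hiff2 : ((a : Fin n).castSucc = (c : Fin n).castSucc) ↔ a = c := by
        rw [Fin.castSucc_inj]
        exact ⟨fun h => Subtype.ext h, fun h => congrArg _ h⟩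
      simp [EuclideanSpace.single_apply, hiff2]
    have hKF := kyFan hk1 hkN hA s hcard v hON
    have hsum1 : ∑ j ∈ s, inner (𝕜 := ℝ) (v j) (WithLp.toLp 2 ((hess φ xh).mulVec (v j)))
        = ∑ j ∈ s, B (v j) (v j) :=
      Finset.sum_congr rfl fun j _ => hquadA (v j)
    have hsum2 : ∑ j ∈ s, B (v j) (v j) ≤ ∑ j ∈ s, -(κ j * μ) :=
      Finset.sum_le_sum fun j _ => hBound j
    have hsum3 : ∑ j ∈ s, -(κ j * μ) = -((∑ j ∈ s, κ j) * μ) := by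
      rw [Finset.sum_neg_distrib, ← Finset.sum_mul]
    have hfin : -((∑ j ∈ s, κ j) * μ) ≤ 0 := by
      have := mul_nonneg hκsum hμpos
      linarith
    calc sumMinEig k (hess φ xh)
        ≤ ∑ j ∈ s, inner (𝕜 := ℝ) (v j) (WithLp.toLp 2 ((hess φ xh).mulVec (v j))) := hKF
      _ = ∑ j ∈ s, B (v j) (v j) := hsum1
      _ ≤ ∑ j ∈ s, -(κ j * μ) := hsum2
      _ = -((∑ j ∈ s, κ j) * μ) := hsum3
      _ ≤ 0 := hfin
  · -- interior case
    have hncl : xh ∉ closure U := by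
      intro hcl
      exact hfr ⟨hcl, by simpa [hUopen.interior_eq] using hxh.2⟩
    have hV : ∀ᶠ y in nhds xh, φ y ≤ φ xh := by
      have hopen : IsOpen (Ω \ closure U) := hΩ.sdiff isClosed_closure
      filter_upwards [hopen.mem_nhds ⟨hxh.1, hncl⟩] with y hy
      rw [hφ0]
      exact hmax y ⟨hy.1, fun hyU => hy.2 (subset_closure hyU)⟩
    have hBneg : ∀ w : EuclideanSpace ℝ (Fin (n + 1)), B w w ≤ 0 := by
      intro w
      set c : ℝ → EuclideanSpace ℝ (Fin (n + 1)) := fun t => xh + t • w with hcdef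
      have hcC : ContDiff ℝ 2 c := contDiff_const.add (contDiff_id.smul contDiff_const)
      have hc0 : c 0 = xh := by simp [hcdef]
      have hmaxev : ∀ᶠ t in nhds (0:ℝ), φ (c t) ≤ φ xh := by
        have htend : Filter.Tendsto c (nhds 0) (nhds xh) :=
          hcC.continuous.tendsto' 0 xh hc0
        exact htend.eventually hV
      have hcd : ∀ t : ℝ, HasDerivAt c w t := by
        intro t
        have h1 : HasDerivAt (fun s : ℝ => s • w) w t := by
          simpa using (hasDerivAt_id t).smul_const w
        exact h1.const_add xh
      have hder1 : deriv c 0 = w := (hcd 0).deriv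
      have hder2 : deriv (deriv c) 0 = 0 := by
        have hfun : deriv c = fun _ => w := by
          funext t; exact (hcd t).deriv
        rw [hfun, deriv_const]
      have htest := curve_test hφx hcC hc0 hmaxev
      rw [hder1, hder2, map_zero, ← hBdef] at htest
      linarith
    set s := Finset.univ.filter (fun i : Fin (n + 1) => (i : ℕ) < k) with hsdef
    have hcard : s.card = k := card_filter_lt hkN
    set v : Fin (n + 1) → EuclideanSpace ℝ (Fin (n + 1)) :=
      fun i => EuclideanSpace.single i 1 with hvdef
    have hON : Orthonormal ℝ (fun j : s => v j) := by
      rw [orthonormal_iff_ite]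
      intro a c
      rw [hvdef]
      rw [EuclideanSpace.inner_single_left]
      simp [EuclideanSpace.single_apply, Subtype.coe_inj]
    have hKF := kyFan hk1 hkN hA s hcard v hON
    have hsum1 : ∑ j ∈ s, inner (𝕜 := ℝ) (v j) (WithLp.toLp 2 ((hess φ xh).mulVec (v j)))
        = ∑ j ∈ s, B (v j) (v j) :=
      Finset.sum_congr rfl fun j _ => hquadA (v j)
    have hsum2 : ∑ j ∈ s, B (v j) (v j) ≤ 0 :=
      Finset.sum_nonpos fun j _ => hBneg (v j)
    calc sumMinEig k (hess φ xh)
        ≤ ∑ j ∈ s, inner (𝕜 := ℝ) (v j) (WithLp.toLp 2 ((hess φ xh).mulVec (v j))) := hKF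
      _ = ∑ j ∈ s, B (v j) (v j) := hsum1
      _ ≤ 0 := hsum2
end

section
/- Let U be an open subset of R^N. The condition (C_{1,U}) holds if and only if every connected component of U is convex. Here (C_{1,U}) states: for every set C of the form z + O(closed segment [−a,a] × closed ball B̄_b^{N−1}) with z ∈ R^N, O an orthogonal matrix, a, b > 0, if the lateral boundary ∂'C = z + O({−a,a} × B̄_b^{N−1}) and the interior of C are both contained in U, then C ⊆ U. -/
set_option maxHeartbeats 1000000
open Set Metric RealInnerProductSpace

namespace Stmt15Aux
variable {n : ℕ}

def cylSet (x e : EuclideanSpace ℝ (Fin (n+1))) (b : ℝ) : Set (EuclideanSpace ℝ (Fin (n+1))) :=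
  {q | 0 ≤ ⟪q - x, e⟫ ∧ ⟪q - x, e⟫ ≤ ‖e‖^2 ∧
    ‖(q - x) - (⟪q - x, e⟫/‖e‖^2) • e‖ ≤ b}

def cylOpen (x e : EuclideanSpace ℝ (Fin (n+1))) (b : ℝ) : Set (EuclideanSpace ℝ (Fin (n+1))) :=
  {q | 0 < ⟪q - x, e⟫ ∧ ⟪q - x, e⟫ < ‖e‖^2 ∧
    ‖(q - x) - (⟪q - x, e⟫/‖e‖^2) • e‖ < b}

def cylLat (x e : EuclideanSpace ℝ (Fin (n+1))) (b : ℝ) : Set (EuclideanSpace ℝ (Fin (n+1))) :=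
  {q | (⟪q - x, e⟫ = 0 ∨ ⟪q - x, e⟫ = ‖e‖^2) ∧
    ‖(q - x) - (⟪q - x, e⟫/‖e‖^2) • e‖ ≤ b}

lemma sum_ne_zero_eq (v : EuclideanSpace ℝ (Fin (n+1))) :
    ∑ i ∈ Finset.univ.filter (fun i : Fin (n+1) => i ≠ 0), (v i)^2 = ‖v‖^2 - (v 0)^2 := by
  have h : ‖v‖^2 = ∑ i, (v i)^2 := by
    rw [EuclideanSpace.norm_sq_eq]; simp [sq_abs]
  rw [h, ← Finset.sum_filter_add_sum_filter_not Finset.univ (fun i : Fin (n+1) => i = 0)]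
  simp [Finset.filter_eq']

lemma exists_rot {e : EuclideanSpace ℝ (Fin (n+1))} (he : e ≠ 0) :
    ∃ O : EuclideanSpace ℝ (Fin (n+1)) ≃ₗᵢ[ℝ] EuclideanSpace ℝ (Fin (n+1)),
    O (EuclideanSpace.single 0 1) = ‖e‖⁻¹ • e := by
  refine ⟨Submodule.reflection (ℝ ∙ (EuclideanSpace.single 0 (1:ℝ) - ‖e‖⁻¹ • e))ᗮ, Submodule.reflection_sub ?_⟩
  rw [norm_smul]
  simp [norm_inv, abs_of_nonneg (norm_nonneg e), inv_mul_cancel₀ (norm_ne_zero_iff.2 he)]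

section char
variable {x e : EuclideanSpace ℝ (Fin (n+1))} {b : ℝ}
  {O : EuclideanSpace ℝ (Fin (n+1)) ≃ₗᵢ[ℝ] EuclideanSpace ℝ (Fin (n+1))}

lemma inner_unit (he : e ≠ 0) : ⟪(‖e‖⁻¹ • e : EuclideanSpace ℝ (Fin (n+1))), e⟫ = ‖e‖ := by
  have hne : ‖e‖ ≠ 0 := norm_ne_zero_iff.2 he
  rw [real_inner_smul_left, real_inner_self_eq_norm_sq]
  field_simp

lemma inner_O (hO : O (EuclideanSpace.single 0 1) = ‖e‖⁻¹ • e) (he : e ≠ 0)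
    (v : EuclideanSpace ℝ (Fin (n+1))) : ⟪O v, e⟫ = ‖e‖ * v 0 := by
  have hne : ‖e‖ ≠ 0 := norm_ne_zero_iff.2 he
  have h : ⟪O v, O (EuclideanSpace.single 0 1)⟫ = v 0 := by
    rw [O.inner_map_map]
    simpa using (EuclideanSpace.inner_single_right 0 (1:ℝ) v)
  rw [hO, real_inner_smul_right] at h
  rw [← h, ← mul_assoc, mul_inv_cancel₀ hne, one_mul]

lemma key_inner (hO : O (EuclideanSpace.single 0 1) = ‖e‖⁻¹ • e) (he : e ≠ 0)
    (v : EuclideanSpace ℝ (Fin (n+1))) :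
    ⟪(x + (‖e‖/2) • (‖e‖⁻¹ • e) + O v) - x, e⟫ = ‖e‖ * (‖e‖/2 + v 0) := by
  have h0 : (x + (‖e‖/2) • (‖e‖⁻¹ • e) + O v) - x = (‖e‖/2) • (‖e‖⁻¹ • e) + O v := by abel
  rw [h0, inner_add_left, real_inner_smul_left, inner_unit he, inner_O hO he]
  ring

lemma key_w (hO : O (EuclideanSpace.single 0 1) = ‖e‖⁻¹ • e) (he : e ≠ 0)
    (v : EuclideanSpace ℝ (Fin (n+1))) :
    ((x + (‖e‖/2) • (‖e‖⁻¹ • e) + O v) - x) -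
      ((‖e‖ * (‖e‖/2 + v 0))/‖e‖^2) • e
      = O v - (v 0) • (‖e‖⁻¹ • e) := by
  have hne : ‖e‖ ≠ 0 := norm_ne_zero_iff.2 he
  have h0 : (x + (‖e‖/2) • (‖e‖⁻¹ • e) + O v) - x = (‖e‖/2) • (‖e‖⁻¹ • e) + O v := by abel
  rw [h0]
  have hcoef : (‖e‖ * (‖e‖/2 + v 0)/‖e‖^2) = (‖e‖/2 + v 0) * ‖e‖⁻¹ := by
    field_simp
  rw [hcoef]
  rw [show ((‖e‖/2 + v 0) * ‖e‖⁻¹) • e = (‖e‖/2 + v 0) • (‖e‖⁻¹ • e) by rw [mul_smul]]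
  module

lemma key_wnorm (hO : O (EuclideanSpace.single 0 1) = ‖e‖⁻¹ • e) (he : e ≠ 0)
    (v : EuclideanSpace ℝ (Fin (n+1))) :
    ‖O v - (v 0) • (‖e‖⁻¹ • e)‖^2 = ‖v‖^2 - (v 0)^2 := by
  rw [← hO, ← map_smul, ← map_sub, O.norm_map, norm_sub_sq_real]
  have h1 : ⟪v, EuclideanSpace.single 0 (1:ℝ)⟫ = v 0 := by
    simpa using (EuclideanSpace.inner_single_right 0 (1:ℝ) v)
  rw [real_inner_smul_right, h1, norm_smul]
  have h3 : ‖(EuclideanSpace.single 0 (1:ℝ) : EuclideanSpace ℝ (Fin (n+1)))‖ = 1 := by simp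
  rw [h3, mul_one, Real.norm_eq_abs, sq_abs]
  ring

lemma mem_cylSet_iff (hO : O (EuclideanSpace.single 0 1) = ‖e‖⁻¹ • e) (he : e ≠ 0) (hb : 0 < b)
    (v : EuclideanSpace ℝ (Fin (n+1))) :
    (x + (‖e‖/2) • (‖e‖⁻¹ • e) + O v) ∈ cylSet x e b ↔
      (|v 0| ≤ ‖e‖/2 ∧
        ∑ i ∈ Finset.univ.filter (fun i : Fin (n+1) => i ≠ 0), (v i)^2 ≤ b^2) := by
  have hepos : 0 < ‖e‖ := norm_pos_iff.2 he
  have hwn := key_wnorm hO he v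
  have hsum := sum_ne_zero_eq v
  simp only [cylSet, mem_setOf_eq, key_inner hO he, key_w hO he, hsum, abs_le]
  constructor
  · rintro ⟨h1, h2, h3⟩
    refine ⟨⟨by nlinarith, by nlinarith⟩, ?_⟩
    have : ‖O v - (v 0) • (‖e‖⁻¹ • e)‖^2 ≤ b^2 := by nlinarith [norm_nonneg (O v - (v 0) • (‖e‖⁻¹ • e))]
    nlinarith
  · rintro ⟨⟨h1, h2⟩, h3⟩
    refine ⟨by nlinarith, by nlinarith, ?_⟩
    have h4 : ‖O v - (v 0) • (‖e‖⁻¹ • e)‖^2 ≤ b^2 := by nlinarith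
    nlinarith [norm_nonneg (O v - (v 0) • (‖e‖⁻¹ • e))]

lemma mem_cylLat_iff (hO : O (EuclideanSpace.single 0 1) = ‖e‖⁻¹ • e) (he : e ≠ 0) (hb : 0 < b)
    (v : EuclideanSpace ℝ (Fin (n+1))) :
    (x + (‖e‖/2) • (‖e‖⁻¹ • e) + O v) ∈ cylLat x e b ↔
      (|v 0| = ‖e‖/2 ∧
        ∑ i ∈ Finset.univ.filter (fun i : Fin (n+1) => i ≠ 0), (v i)^2 ≤ b^2) := by
  have hepos : 0 < ‖e‖ := norm_pos_iff.2 he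
  have hwn := key_wnorm hO he v
  have hsum := sum_ne_zero_eq v
  simp only [cylLat, mem_setOf_eq, key_inner hO he, key_w hO he, hsum]
  have habs : |v 0| = ‖e‖/2 ↔ (v 0 = -(‖e‖/2) ∨ v 0 = ‖e‖/2) := by
    rw [abs_eq (by positivity)]; tauto
  constructor
  · rintro ⟨h1, h3⟩
    have hv : v 0 = -(‖e‖/2) ∨ v 0 = ‖e‖/2 := by
      rcases h1 with h | h
      · left; nlinarith
      · right; nlinarith
    refine ⟨habs.2 hv, ?_⟩
    have : ‖O v - (v 0) • (‖e‖⁻¹ • e)‖^2 ≤ b^2 := by nlinarith [norm_nonneg (O v - (v 0) • (‖e‖⁻¹ • e))]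
    nlinarith
  · rintro ⟨h1, h3⟩
    rcases habs.1 h1 with h | h
    · refine ⟨Or.inl (by rw [h]; ring), ?_⟩
      have h4 : ‖O v - (v 0) • (‖e‖⁻¹ • e)‖^2 ≤ b^2 := by nlinarith
      nlinarith [norm_nonneg (O v - (v 0) • (‖e‖⁻¹ • e))]
    · refine ⟨Or.inr (by rw [h]; ring), ?_⟩
      have h4 : ‖O v - (v 0) • (‖e‖⁻¹ • e)‖^2 ≤ b^2 := by nlinarith
      nlinarith [norm_nonneg (O v - (v 0) • (‖e‖⁻¹ • e))]

lemma mem_cylOpen_iff (hO : O (EuclideanSpace.single 0 1) = ‖e‖⁻¹ • e) (he : e ≠ 0) (hb : 0 < b)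
    (v : EuclideanSpace ℝ (Fin (n+1))) :
    (x + (‖e‖/2) • (‖e‖⁻¹ • e) + O v) ∈ cylOpen x e b ↔
      (|v 0| < ‖e‖/2 ∧
        ∑ i ∈ Finset.univ.filter (fun i : Fin (n+1) => i ≠ 0), (v i)^2 < b^2) := by
  have hepos : 0 < ‖e‖ := norm_pos_iff.2 he
  have hwn := key_wnorm hO he v
  have hsum := sum_ne_zero_eq v
  simp only [cylOpen, mem_setOf_eq, key_inner hO he, key_w hO he, hsum, abs_lt]
  constructor
  · rintro ⟨h1, h2, h3⟩
    refine ⟨⟨by nlinarith, by nlinarith⟩, ?_⟩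
    have : ‖O v - (v 0) • (‖e‖⁻¹ • e)‖^2 < b^2 := by nlinarith [norm_nonneg (O v - (v 0) • (‖e‖⁻¹ • e))]
    nlinarith
  · rintro ⟨⟨h1, h2⟩, h3⟩
    refine ⟨by nlinarith, by nlinarith, ?_⟩
    have h4 : ‖O v - (v 0) • (‖e‖⁻¹ • e)‖^2 < b^2 := by nlinarith
    nlinarith [norm_nonneg (O v - (v 0) • (‖e‖⁻¹ • e))]

lemma image_eq_of_iff {z : EuclideanSpace ℝ (Fin (n+1))} (P Q : Set (EuclideanSpace ℝ (Fin (n+1))))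
    (h : ∀ v, (z + O v) ∈ Q ↔ v ∈ P) : (fun v => z + O v) '' P = Q := by
  ext q
  constructor
  · rintro ⟨v, hv, rfl⟩; exact (h v).2 hv
  · intro hq
    refine ⟨O.symm (q - z), ?_, by simp⟩
    rw [← h]
    simpa using hq

lemma interior_image {z : EuclideanSpace ℝ (Fin (n+1))} (P : Set (EuclideanSpace ℝ (Fin (n+1)))) :
    interior ((fun v => z + O v) '' P) = (fun v => z + O v) '' interior P := by
  have : (fun v : EuclideanSpace ℝ (Fin (n+1)) => z + O v)
      = ⇑(O.toHomeomorph.trans (Homeomorph.addLeft z)) := rfl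
  rw [this, Homeomorph.image_interior]
end char

lemma interior_S_subset {a b : ℝ} (ha : 0 < a) (hb : 0 < b) :
    interior {v : EuclideanSpace ℝ (Fin (n+1)) | |v 0| ≤ a ∧
        ∑ i ∈ Finset.univ.filter (fun i : Fin (n+1) => i ≠ 0), (v i)^2 ≤ b^2}
      ⊆ {v : EuclideanSpace ℝ (Fin (n+1)) | |v 0| < a ∧
        ∑ i ∈ Finset.univ.filter (fun i : Fin (n+1) => i ≠ 0), (v i)^2 < b^2} := by
  intro v hv
  obtain ⟨ε, hε, hball⟩ := Metric.isOpen_iff.1 isOpen_interior v hv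
  have hballS : ball v ε ⊆ {v : EuclideanSpace ℝ (Fin (n+1)) | |v 0| ≤ a ∧
      ∑ i ∈ Finset.univ.filter (fun i : Fin (n+1) => i ≠ 0), (v i)^2 ≤ b^2} :=
    hball.trans interior_subset
  have hmem : ∀ (i : Fin (n+1)) (c : ℝ), |c| = 1 →
      v + (ε/2) • EuclideanSpace.single i c ∈ ball v ε := by
    intro i c hc
    rw [mem_ball, dist_eq_norm]
    have : v + (ε/2) • EuclideanSpace.single i c - v = (ε/2) • EuclideanSpace.single i c := by abel
    rw [this, norm_smul, EuclideanSpace.norm_single]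
    simp only [Real.norm_eq_abs, hc, mul_one]
    rw [abs_of_pos (by linarith : (0:ℝ) < ε/2)]
    linarith
  have happ : ∀ (i j : Fin (n+1)) (c : ℝ),
      (v + (ε/2) • EuclideanSpace.single i c) j = v j + (ε/2) * (if j = i then c else 0) := by
    intro i j c
    simp [EuclideanSpace.single_apply]
  constructor
  · -- |v 0| < a
    rcases le_or_gt 0 (v 0) with hsg | hsg
    · have h1 := (hballS (hmem 0 1 (by norm_num))).1
      rw [happ 0 0 1, if_pos rfl] at h1
      rw [abs_le] at h1; rw [abs_lt]
      constructor <;> linarith [h1.1, h1.2]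
    · have h1 := (hballS (hmem 0 (-1) (by norm_num))).1
      rw [happ 0 0 (-1), if_pos rfl] at h1
      rw [abs_le] at h1; rw [abs_lt]
      constructor <;> linarith [h1.1, h1.2]
  · -- sum < b^2
    by_cases hn : n = 0
    · subst hn
      have : Finset.univ.filter (fun i : Fin 1 => i ≠ 0) = ∅ := by decide
      rw [this]
      simp
      positivity
    · have hn1 : 1 < n + 1 := by omega
      set i₁ : Fin (n+1) := ⟨1, hn1⟩ with hi₁def
      have hi₁ : i₁ ≠ 0 := by
        intro h
        have := congrArg Fin.val h
        simp [hi₁def] at this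
      obtain ⟨c, hc1, hkey0⟩ : ∃ c : ℝ, |c| = 1 ∧
          (v i₁ + (ε/2)*c)^2 ≥ (v i₁)^2 + (ε/2)^2 := by
        rcases le_or_gt 0 (v i₁) with h | h
        · exact ⟨1, by norm_num, by nlinarith⟩
        · exact ⟨-1, by norm_num, by nlinarith⟩
      have h1 := (hballS (hmem i₁ c hc1)).2
      set w := v + (ε/2) • EuclideanSpace.single i₁ c with hw
      have hmemf : i₁ ∈ Finset.univ.filter (fun i : Fin (n+1) => i ≠ 0) := by
        simp [hi₁]
      have hsplitw := Finset.add_sum_erase _ (fun i => (w i)^2) hmemf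
      have hsplitv := Finset.add_sum_erase _ (fun i => (v i)^2) hmemf
      have heq : ∑ i ∈ (Finset.univ.filter (fun i : Fin (n+1) => i ≠ 0)).erase i₁, (w i)^2
          = ∑ i ∈ (Finset.univ.filter (fun i : Fin (n+1) => i ≠ 0)).erase i₁, (v i)^2 := by
        apply Finset.sum_congr rfl
        intro j hj
        have hji : j ≠ i₁ := Finset.ne_of_mem_erase hj
        rw [hw]
        rw [happ i₁ j c, if_neg hji, mul_zero, add_zero]
      have hwi₁ : w i₁ = v i₁ + (ε/2) * c := by
        rw [hw, happ i₁ i₁ c, if_pos rfl]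
      have hkey : (w i₁)^2 ≥ (v i₁)^2 + (ε/2)^2 := by
        rw [hwi₁]; exact hkey0
      calc ∑ i ∈ Finset.univ.filter (fun i : Fin (n+1) => i ≠ 0), (v i)^2
          = (v i₁)^2 + ∑ i ∈ (Finset.univ.filter (fun i : Fin (n+1) => i ≠ 0)).erase i₁, (v i)^2 := hsplitv.symm
        _ ≤ (w i₁)^2 - (ε/2)^2 + ∑ i ∈ (Finset.univ.filter (fun i : Fin (n+1) => i ≠ 0)).erase i₁, (w i)^2 := by
            rw [heq]; linarith
        _ = (∑ i ∈ Finset.univ.filter (fun i : Fin (n+1) => i ≠ 0), (w i)^2) - (ε/2)^2 := by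
            rw [← hsplitw]; ring
        _ ≤ b^2 - (ε/2)^2 := by linarith
        _ < b^2 := by nlinarith

/-- The cylinder condition in intrinsic form. -/
lemma cyl_cond {U : Set (EuclideanSpace ℝ (Fin (n+1)))}
    (hC : ∀ (z : EuclideanSpace ℝ (Fin (n + 1)))
        (O : EuclideanSpace ℝ (Fin (n + 1)) ≃ₗᵢ[ℝ] EuclideanSpace ℝ (Fin (n + 1)))
        (a b : ℝ), 0 < a → 0 < b →
      ((fun y => z + O y) '' {y : EuclideanSpace ℝ (Fin (n + 1)) |
          |y 0| = a ∧ ∑ i ∈ Finset.univ.filter (fun i : Fin (n + 1) => i ≠ 0), (y i) ^ 2 ≤ b ^ 2} ⊆ U) →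
      (interior ((fun y => z + O y) '' {y : EuclideanSpace ℝ (Fin (n + 1)) |
          |y 0| ≤ a ∧ ∑ i ∈ Finset.univ.filter (fun i : Fin (n + 1) => i ≠ 0), (y i) ^ 2 ≤ b ^ 2}) ⊆ U) →
      (fun y => z + O y) '' {y : EuclideanSpace ℝ (Fin (n + 1)) |
          |y 0| ≤ a ∧ ∑ i ∈ Finset.univ.filter (fun i : Fin (n + 1) => i ≠ 0), (y i) ^ 2 ≤ b ^ 2} ⊆ U)
    {x e : EuclideanSpace ℝ (Fin (n+1))} {b : ℝ} (he : e ≠ 0) (hb : 0 < b)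
    (hlat : cylLat x e b ⊆ U) (hopen : cylOpen x e b ⊆ U) :
    cylSet x e b ⊆ U := by
  obtain ⟨O, hO⟩ := exists_rot he
  have hepos : 0 < ‖e‖ := norm_pos_iff.2 he
  have ha : 0 < ‖e‖/2 := by linarith
  have h1 : (fun v => (x + (‖e‖/2) • (‖e‖⁻¹ • e)) + O v) ''
      {y : EuclideanSpace ℝ (Fin (n + 1)) |
        |y 0| = ‖e‖/2 ∧ ∑ i ∈ Finset.univ.filter (fun i : Fin (n + 1) => i ≠ 0), (y i) ^ 2 ≤ b ^ 2}
      = cylLat x e b :=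
    image_eq_of_iff _ _ (fun v => mem_cylLat_iff hO he hb v)
  have h2 : (fun v => (x + (‖e‖/2) • (‖e‖⁻¹ • e)) + O v) ''
      {y : EuclideanSpace ℝ (Fin (n + 1)) |
        |y 0| ≤ ‖e‖/2 ∧ ∑ i ∈ Finset.univ.filter (fun i : Fin (n + 1) => i ≠ 0), (y i) ^ 2 ≤ b ^ 2}
      = cylSet x e b :=
    image_eq_of_iff _ _ (fun v => mem_cylSet_iff hO he hb v)
  have h3 : (fun v => (x + (‖e‖/2) • (‖e‖⁻¹ • e)) + O v) ''
      {y : EuclideanSpace ℝ (Fin (n + 1)) |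
        |y 0| < ‖e‖/2 ∧ ∑ i ∈ Finset.univ.filter (fun i : Fin (n + 1) => i ≠ 0), (y i) ^ 2 < b ^ 2}
      = cylOpen x e b :=
    image_eq_of_iff _ _ (fun v => mem_cylOpen_iff hO he hb v)
  have h4 := hC (x + (‖e‖/2) • (‖e‖⁻¹ • e)) O (‖e‖/2) b ha hb
    (by rw [h1]; exact hlat)
    (by
      rw [interior_image]
      exact (Set.image_mono (interior_S_subset ha hb)).trans (by rw [h3]; exact hopen))
  rw [h2] at h4
  exact h4
lemma mem_cylSet_intro {x e q w : EuclideanSpace ℝ (Fin (n+1))} {b c : ℝ} (he : e ≠ 0)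
    (hc0 : 0 ≤ c) (hc1 : c ≤ 1) (hw : ⟪w, e⟫ = 0) (hwb : ‖w‖ ≤ b)
    (hq : q = x + c • e + w) : q ∈ cylSet x e b := by
  have hne : ‖e‖ ≠ 0 := norm_ne_zero_iff.2 he
  have h1 : q - x = c • e + w := by rw [hq]; abel
  have h2 : ⟪q - x, e⟫ = c * ‖e‖^2 := by
    rw [h1, inner_add_left, real_inner_smul_left, real_inner_self_eq_norm_sq, hw, add_zero]
  refine ⟨by rw [h2]; positivity, ?_, ?_⟩
  · rw [h2]; nlinarith [sq_nonneg ‖e‖]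
  · have h3 : (⟪q - x, e⟫/‖e‖^2) = c := by rw [h2]; field_simp
    rw [h3, h1]
    have : c • e + w - c • e = w := by abel
    rw [this]; exact hwb

lemma mem_cylSet_elim {x e q : EuclideanSpace ℝ (Fin (n+1))} {b : ℝ} (he : e ≠ 0)
    (hq : q ∈ cylSet x e b) : ∃ c : ℝ, ∃ w : EuclideanSpace ℝ (Fin (n+1)),
      0 ≤ c ∧ c ≤ 1 ∧ ⟪w, e⟫ = 0 ∧ ‖w‖ ≤ b ∧ q = x + c • e + w := by
  have hne : ‖e‖ ≠ 0 := norm_ne_zero_iff.2 he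
  have hne2 : ‖e‖^2 ≠ 0 := pow_ne_zero 2 hne
  obtain ⟨h1, h2, h3⟩ := hq
  refine ⟨⟪q - x, e⟫/‖e‖^2, (q - x) - (⟪q - x, e⟫/‖e‖^2) • e, by positivity, ?_, ?_, h3, by abel⟩
  · rw [div_le_one (by positivity : (0:ℝ) < ‖e‖^2)]; exact h2
  · rw [inner_sub_left, real_inner_smul_left, real_inner_self_eq_norm_sq]
    field_simp; ring

lemma mem_cylOpen_elim {x e q : EuclideanSpace ℝ (Fin (n+1))} {b : ℝ} (he : e ≠ 0)
    (hq : q ∈ cylOpen x e b) : ∃ c : ℝ, ∃ w : EuclideanSpace ℝ (Fin (n+1)),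
      0 < c ∧ c < 1 ∧ ⟪w, e⟫ = 0 ∧ ‖w‖ < b ∧ q = x + c • e + w := by
  have hne : ‖e‖ ≠ 0 := norm_ne_zero_iff.2 he
  have hne2 : ‖e‖^2 ≠ 0 := pow_ne_zero 2 hne
  have hpos : (0:ℝ) < ‖e‖^2 := by positivity
  obtain ⟨h1, h2, h3⟩ := hq
  refine ⟨⟪q - x, e⟫/‖e‖^2, (q - x) - (⟪q - x, e⟫/‖e‖^2) • e, by positivity, ?_, ?_, h3, by abel⟩
  · rw [div_lt_one hpos]; exact h2
  · rw [inner_sub_left, real_inner_smul_left, real_inner_self_eq_norm_sq]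
    field_simp; ring

lemma mem_cylLat_elim {x e q : EuclideanSpace ℝ (Fin (n+1))} {b : ℝ} (he : e ≠ 0)
    (hq : q ∈ cylLat x e b) : ∃ w : EuclideanSpace ℝ (Fin (n+1)),
      ⟪w, e⟫ = 0 ∧ ‖w‖ ≤ b ∧ (q = x + w ∨ q = x + e + w) := by
  have hne : ‖e‖ ≠ 0 := norm_ne_zero_iff.2 he
  have hne2 : ‖e‖^2 ≠ 0 := pow_ne_zero 2 hne
  obtain ⟨h1, h3⟩ := hq
  refine ⟨(q - x) - (⟪q - x, e⟫/‖e‖^2) • e, ?_, h3, ?_⟩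
  · rw [inner_sub_left, real_inner_smul_left, real_inner_self_eq_norm_sq]
    field_simp; ring
  · rcases h1 with h | h
    · left; rw [h]; simp
    · right; rw [h]
      have : ‖e‖^2/‖e‖^2 = 1 := by field_simp
      rw [this, one_smul]; abel

lemma norm_normalize_sub {a c : EuclideanSpace ℝ (Fin (n+1))} (ha : a ≠ 0) :
    ‖‖a‖⁻¹ • a - ‖c‖⁻¹ • c‖ ≤ 2 * ‖a - c‖ / ‖a‖ := by
  have hpa : 0 < ‖a‖ := norm_pos_iff.2 ha
  by_cases hc : c = 0
  · subst hc
    simp only [norm_zero, sub_zero, smul_zero]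
    rw [norm_smul, norm_inv, norm_norm, inv_mul_cancel₀ (norm_ne_zero_iff.2 ha)]
    have h2 : 2 * ‖a‖ / ‖a‖ = 2 := by field_simp
    rw [h2]; norm_num
  · have hpc : 0 < ‖c‖ := norm_pos_iff.2 hc
    have tri : ‖‖a‖⁻¹ • a - ‖c‖⁻¹ • c‖ ≤ ‖‖a‖⁻¹ • a - ‖a‖⁻¹ • c‖ + ‖‖a‖⁻¹ • c - ‖c‖⁻¹ • c‖ :=
      norm_sub_le_norm_sub_add_norm_sub _ _ _
    have h1 : ‖‖a‖⁻¹ • a - ‖a‖⁻¹ • c‖ = ‖a - c‖/‖a‖ := by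
      rw [← smul_sub, norm_smul, norm_inv, norm_norm]
      rw [div_eq_inv_mul]
    have h2 : ‖‖a‖⁻¹ • c - ‖c‖⁻¹ • c‖ ≤ ‖a - c‖/‖a‖ := by
      rw [← sub_smul, norm_smul, Real.norm_eq_abs]
      have hfe : ‖a‖⁻¹ - ‖c‖⁻¹ = (‖c‖ - ‖a‖)/(‖a‖ * ‖c‖) := by
        field_simp
      rw [hfe, abs_div, abs_of_pos (by positivity : (0:ℝ) < ‖a‖ * ‖c‖)]
      have hsimp : |‖c‖ - ‖a‖|/(‖a‖ * ‖c‖) * ‖c‖ = |‖c‖ - ‖a‖|/‖a‖ := by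
        field_simp
      rw [hsimp]
      have hle : |‖c‖ - ‖a‖| ≤ ‖a - c‖ := by
        rw [abs_sub_comm]
        exact abs_norm_sub_norm_le a c
      gcongr
    have hsum : 2 * ‖a - c‖ / ‖a‖ = ‖a - c‖/‖a‖ + ‖a - c‖/‖a‖ := by ring
    linarith
lemma cylSet_isCompact {x e : EuclideanSpace ℝ (Fin (n+1))} {b : ℝ} (he : e ≠ 0) :
    IsCompact (cylSet x e b) := by
  have hf : Continuous (fun q : EuclideanSpace ℝ (Fin (n+1)) => ⟪q - x, e⟫) :=
    (continuous_id.sub continuous_const).inner continuous_const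
  have hg : Continuous (fun q : EuclideanSpace ℝ (Fin (n+1)) =>
      ‖(q - x) - (⟪q - x, e⟫/‖e‖^2) • e‖) :=
    ((continuous_id.sub continuous_const).sub ((hf.div_const _).smul continuous_const)).norm
  apply isCompact_of_isClosed_isBounded
  · have : cylSet x e b = {q : EuclideanSpace ℝ (Fin (n+1)) | 0 ≤ ⟪q - x, e⟫} ∩
        ({q : EuclideanSpace ℝ (Fin (n+1)) | ⟪q - x, e⟫ ≤ ‖e‖^2} ∩
         {q : EuclideanSpace ℝ (Fin (n+1)) | ‖(q - x) - (⟪q - x, e⟫/‖e‖^2) • e‖ ≤ b}) := by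
      ext q; simp [cylSet, mem_setOf_eq, and_assoc]
    rw [this]
    exact (isClosed_le continuous_const hf).inter
      ((isClosed_le hf continuous_const).inter (isClosed_le hg continuous_const))
  · apply (Metric.isBounded_closedBall (x := x) (r := ‖e‖ + b)).subset
    intro q hq
    obtain ⟨c, w, hc0, hc1, hw, hwb, hqe⟩ := mem_cylSet_elim he hq
    rw [Metric.mem_closedBall, dist_eq_norm, hqe]
    have h1 : x + c • e + w - x = c • e + w := by abel
    rw [h1]
    calc ‖c • e + w‖ ≤ ‖c • e‖ + ‖w‖ := norm_add_le _ _
      _ ≤ ‖e‖ + b := by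
          rw [norm_smul, Real.norm_eq_abs, abs_of_nonneg hc0]
          have : c * ‖e‖ ≤ 1 * ‖e‖ := by
            apply mul_le_mul_of_nonneg_right hc1 (norm_nonneg e)
          nlinarith [norm_nonneg e]

noncomputable def ecf (m y x : EuclideanSpace ℝ (Fin (n+1))) (σ : ℝ) : EuclideanSpace ℝ (Fin (n+1)) :=
  m + σ • (y - m) - x

/-- the sweep lemma: segments from `x` to the moving point `m + σ(y-m)`. -/
lemma sweep {U : Set (EuclideanSpace ℝ (Fin (n+1)))} (hU : IsOpen U)
    (hC : ∀ (z : EuclideanSpace ℝ (Fin (n + 1)))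
        (O : EuclideanSpace ℝ (Fin (n + 1)) ≃ₗᵢ[ℝ] EuclideanSpace ℝ (Fin (n + 1)))
        (a b : ℝ), 0 < a → 0 < b →
      ((fun y => z + O y) '' {y : EuclideanSpace ℝ (Fin (n + 1)) |
          |y 0| = a ∧ ∑ i ∈ Finset.univ.filter (fun i : Fin (n + 1) => i ≠ 0), (y i) ^ 2 ≤ b ^ 2} ⊆ U) →
      (interior ((fun y => z + O y) '' {y : EuclideanSpace ℝ (Fin (n + 1)) |
          |y 0| ≤ a ∧ ∑ i ∈ Finset.univ.filter (fun i : Fin (n + 1) => i ≠ 0), (y i) ^ 2 ≤ b ^ 2}) ⊆ U) →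
      (fun y => z + O y) '' {y : EuclideanSpace ℝ (Fin (n + 1)) |
          |y 0| ≤ a ∧ ∑ i ∈ Finset.univ.filter (fun i : Fin (n + 1) => i ≠ 0), (y i) ^ 2 ≤ b ^ 2} ⊆ U)
    {x m y : EuclideanSpace ℝ (Fin (n+1))}
    (hxm : segment ℝ x m ⊆ U) (hmy : segment ℝ m y ⊆ U)
    (hncol : ∀ σ ∈ Icc (0:ℝ) 1, ecf m y x σ ≠ 0) :
    segment ℝ x y ⊆ U := by
  classical
  have hecont : Continuous (ecf m y x) := by
    unfold ecf
    apply Continuous.sub ?_ continuous_const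
    exact continuous_const.add (continuous_id.smul continuous_const)
  -- minimum norm of the axis vector
  have hIccne : (Icc (0:ℝ) 1).Nonempty := ⟨0, left_mem_Icc.2 zero_le_one⟩
  obtain ⟨σ₀, hσ₀mem, hσ₀min⟩ := isCompact_Icc.exists_isMinOn hIccne
    (f := fun σ => ‖ecf m y x σ‖) (hecont.norm.continuousOn (s := Icc (0:ℝ) 1))
  set dmin : ℝ := ‖ecf m y x σ₀‖ with hdmin
  have hdminpos : 0 < dmin := norm_pos_iff.2 (hncol σ₀ hσ₀mem)
  have hdminle : ∀ σ ∈ Icc (0:ℝ) 1, dmin ≤ ‖ecf m y x σ‖ := fun σ hσ => hσ₀min hσ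
  -- thickening of the two given segments
  have hJcomp : IsCompact (segment ℝ x m ∪ segment ℝ m y) := by
    apply IsCompact.union
    · rw [segment_eq_image ℝ x m]
      exact isCompact_Icc.image (by fun_prop)
    · rw [segment_eq_image ℝ m y]
      exact isCompact_Icc.image (by fun_prop)
  obtain ⟨δ, hδpos, hδ⟩ := hJcomp.exists_thickening_subset_open hU (union_subset hxm hmy)
  set b : ℝ := δ/2 with hbdef
  have hbpos : 0 < b := by rw [hbdef]; linarith
  -- the end disks are always inside U
  have hdisk : ∀ σ ∈ Icc (0:ℝ) 1, cylLat x (ecf m y x σ) b ⊆ U := by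
    intro σ hσ q hq
    obtain ⟨w, hw, hwb, hqe⟩ := mem_cylLat_elim (hncol σ hσ) hq
    apply hδ
    rw [Metric.mem_thickening_iff]
    rcases hqe with h | h
    · refine ⟨x, Or.inl (left_mem_segment ℝ x m), ?_⟩
      rw [h, dist_eq_norm]
      have : x + w - x = w := by abel
      rw [this]
      linarith [hwb]
    · refine ⟨m + σ • (y - m), Or.inr ?_, ?_⟩
      · rw [segment_eq_image']
        exact ⟨σ, hσ, rfl⟩
      · rw [h, dist_eq_norm]
        have h2 : x + ecf m y x σ + w - (m + σ • (y - m)) = w := by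
          simp only [ecf]; module
        rw [h2]
        linarith [hwb]
  -- the key continuity step
  have hlim : ∀ σ ∈ Icc (0:ℝ) 1, (∀ σ' ∈ Ico (0:ℝ) σ, cylSet x (ecf m y x σ') b ⊆ U) →
      cylSet x (ecf m y x σ) b ⊆ U := by
    intro σ hσ hIco
    apply cyl_cond hC (hncol σ hσ) hbpos (hdisk σ hσ)
    -- open cylinder is inside U
    intro q hq
    obtain ⟨c, w, hc0, hc1, hw, hwb, hqe⟩ := mem_cylOpen_elim (hncol σ hσ) hq
    rcases eq_or_lt_of_le hσ.1 with hσ0 | hσ0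
    · -- σ = 0 : directly inside the thickening of [x, m]
      apply hδ
      rw [Metric.mem_thickening_iff]
      refine ⟨x + c • (m - x), Or.inl ?_, ?_⟩
      · rw [segment_eq_image']
        exact ⟨c, ⟨le_of_lt hc0, le_of_lt hc1⟩, rfl⟩
      · rw [hqe, dist_eq_norm]
        have h2 : ecf m y x σ = m - x := by rw [← hσ0]; simp [ecf]
        rw [h2]
        have h3 : x + c • (m - x) + w - (x + c • (m - x)) = w := by abel
        rw [h3]
        linarith [hwb]
    · -- σ > 0 : q belongs to a slightly earlier cylinder
      have hg1 : ContinuousAt (fun σ' => ⟪q - x, ecf m y x σ'⟫) σ :=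
        (continuous_const.inner hecont).continuousAt
      have hg2 : ContinuousAt (fun σ' => ‖ecf m y x σ'‖^2) σ := by fun_prop
      have hg3 : ContinuousAt (fun σ' =>
          ‖(q - x) - (⟪q - x, ecf m y x σ'⟫/‖ecf m y x σ'‖^2) • ecf m y x σ'‖) σ := by
        apply ContinuousAt.norm
        apply ContinuousAt.sub continuousAt_const
        apply ContinuousAt.smul (f := fun σ' => ⟪q - x, ecf m y x σ'⟫/‖ecf m y x σ'‖^2) (g := ecf m y x) _ hecont.continuousAt
        apply ContinuousAt.div hg1 hg2
        have := norm_pos_iff.2 (hncol σ hσ)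
        positivity
      have hne2 : (‖ecf m y x σ‖:ℝ)^2 ≠ 0 := by
        have := norm_pos_iff.2 (hncol σ hσ); positivity
      have hval1 : ⟪q - x, ecf m y x σ⟫ = c * ‖ecf m y x σ‖^2 := by
        rw [hqe]
        have h1 : x + c • ecf m y x σ + w - x = c • ecf m y x σ + w := by abel
        rw [h1, inner_add_left, real_inner_smul_left, real_inner_self_eq_norm_sq, hw, add_zero]
      have hval3 : ‖(q - x) - (⟪q - x, ecf m y x σ⟫/‖ecf m y x σ‖^2) • ecf m y x σ‖ = ‖w‖ := by
        rw [hval1]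
        have hcoef : c * ‖ecf m y x σ‖^2/‖ecf m y x σ‖^2 = c := by rw [mul_div_assoc, div_self hne2, mul_one]
        rw [hcoef, hqe]
        have h1 : x + c • ecf m y x σ + w - x - c • ecf m y x σ = w := by abel
        rw [h1]
      -- eventually all three strict inequalities hold
      have hev1 : ∀ᶠ σ' in nhds σ, 0 < ⟪q - x, ecf m y x σ'⟫ := by
        refine Filter.Tendsto.eventually_const_lt ?_ hg1
        show (0:ℝ) < ⟪q - x, ecf m y x σ⟫
        rw [hval1]
        have := norm_pos_iff.2 (hncol σ hσ)
        positivity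
      have hev2 : ∀ᶠ σ' in nhds σ, ⟪q - x, ecf m y x σ'⟫ < ‖ecf m y x σ'‖^2 := by
        have htend : ContinuousAt (fun σ' => ‖ecf m y x σ'‖^2 - ⟪q - x, ecf m y x σ'⟫) σ := hg2.sub hg1
        have hpos : 0 < ‖ecf m y x σ‖^2 - ⟪q - x, ecf m y x σ⟫ := by
          rw [hval1]
          have h1 : (0:ℝ) < ‖ecf m y x σ‖^2 := by
            have := norm_pos_iff.2 (hncol σ hσ); positivity
          nlinarith
        have := Filter.Tendsto.eventually_const_lt hpos htend
        filter_upwards [this] with σ' hσ'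
        linarith
      have hev3 : ∀ᶠ σ' in nhds σ,
          ‖(q - x) - (⟪q - x, ecf m y x σ'⟫/‖ecf m y x σ'‖^2) • ecf m y x σ'‖ < b := by
        refine Filter.Tendsto.eventually_lt_const ?_ hg3
        show ‖(q - x) - (⟪q - x, ecf m y x σ⟫/‖ecf m y x σ‖^2) • ecf m y x σ‖ < b
        rw [hval3]; exact hwb
      have hNeBot : (nhdsWithin σ (Ico (0:ℝ) σ)).NeBot := by
        apply mem_closure_iff_nhdsWithin_neBot.1
        rw [closure_Ico (ne_of_lt hσ0)]
        exact ⟨le_of_lt hσ0, le_refl σ⟩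
      have hall := ((hev1.and (hev2.and hev3)).filter_mono
          (nhdsWithin_le_nhds (s := Ico (0:ℝ) σ) (a := σ))).and
        (eventually_mem_nhdsWithin (s := Ico (0:ℝ) σ) (a := σ))
      obtain ⟨σ', ⟨h1, h2, h3⟩, hσ'mem⟩ := hall.exists
      exact hIco σ' hσ'mem ⟨le_of_lt h1, le_of_lt h2, le_of_lt h3⟩
  -- the set of parameters up to which all cylinders are inside U
  set T : Set ℝ := {σ | σ ∈ Icc (0:ℝ) 1 ∧ ∀ σ' ∈ Icc (0:ℝ) σ, cylSet x (ecf m y x σ') b ⊆ U} with hT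
  have hT0 : (0:ℝ) ∈ T := by
    refine ⟨⟨le_refl 0, zero_le_one⟩, ?_⟩
    intro σ' hσ'
    have hσ'0 : σ' = 0 := le_antisymm hσ'.2 hσ'.1
    subst hσ'0
    apply hlim 0 ⟨le_refl 0, zero_le_one⟩
    intro s hs
    exact absurd hs.2 (not_lt.2 hs.1)
  have hTbdd : BddAbove T := ⟨1, fun σ hσ => hσ.1.2⟩
  set σs : ℝ := sSup T with hσs
  have hσs0 : 0 ≤ σs := le_csSup hTbdd hT0
  have hσs1 : σs ≤ 1 := csSup_le ⟨0, hT0⟩ (fun σ hσ => hσ.1.2)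
  have hstar_all : ∀ σ' ∈ Ico (0:ℝ) σs, cylSet x (ecf m y x σ') b ⊆ U := by
    intro σ' hσ'
    obtain ⟨σ, hσT, hσ'lt⟩ := exists_lt_of_lt_csSup ⟨0, hT0⟩ hσ'.2
    exact hσT.2 σ' ⟨hσ'.1, le_of_lt hσ'lt⟩
  have hstar_cyl : cylSet x (ecf m y x σs) b ⊆ U := hlim σs ⟨hσs0, hσs1⟩ hstar_all
  have hstarT : σs ∈ T := by
    refine ⟨⟨hσs0, hσs1⟩, ?_⟩
    intro σ' hσ'
    rcases eq_or_lt_of_le hσ'.2 with h | h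
    · subst h; exact hstar_cyl
    · exact hstar_all σ' ⟨hσ'.1, h⟩
  -- now show σs = 1
  have hσseq : σs = 1 := by
    by_contra hne
    have hσslt : σs < 1 := lt_of_le_of_ne hσs1 hne
    obtain ⟨δs, hδspos, hδs⟩ := (cylSet_isCompact (b := b)
      (hncol σs ⟨hσs0, hσs1⟩)).exists_thickening_subset_open hU hstar_cyl
    set L : ℝ := (1 + 2*b/dmin) * ‖y - m‖ with hL
    have hLnn : 0 ≤ L := by
      rw [hL]
      have : 0 ≤ 2*b/dmin := by positivity
      have := norm_nonneg (y - m)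
      nlinarith
    set η : ℝ := min (1 - σs) (δs / (L + 1)) with hη
    have hηpos : 0 < η := by
      rw [hη]
      apply lt_min (by linarith)
      positivity
    have hηL : η * L < δs := by
      have h1 : η ≤ δs / (L + 1) := min_le_right _ _
      have h2 : η * L ≤ (δs / (L + 1)) * L := by
        apply mul_le_mul_of_nonneg_right h1 hLnn
      have h3 : (δs / (L + 1)) * L < δs := by
        rw [div_mul_eq_mul_div, div_lt_iff₀ (by linarith)]
        nlinarith
      linarith
    have hext : σs + η ∈ T := by
      refine ⟨⟨by linarith, by rw [hη]; have := min_le_left (1 - σs) (δs / (L + 1)); linarith⟩, ?_⟩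
      intro σ' hσ'
      rcases le_or_gt σ' σs with hle | hgt
      · exact hstarT.2 σ' ⟨hσ'.1, hle⟩
      · -- new parameters: compare with the cylinder at σs
        intro q hq
        have hσ'Icc : σ' ∈ Icc (0:ℝ) 1 := by
          constructor
          · exact hσ'.1
          · have := hσ'.2
            have h4 : σs + η ≤ 1 := by
              rw [hη]; have := min_le_left (1 - σs) (δs / (L + 1)); linarith
            linarith
        obtain ⟨c, w, hc0, hc1, hw, hwb, hqe⟩ := mem_cylSet_elim (hncol σ' hσ'Icc) hq
        set es : EuclideanSpace ℝ (Fin (n+1)) := ecf m y x σs with hes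
        set us : EuclideanSpace ℝ (Fin (n+1)) := ‖es‖⁻¹ • es with hus
        have hesne : es ≠ 0 := hncol σs ⟨hσs0, hσs1⟩
        have hesnorm : ‖es‖ ≠ 0 := norm_ne_zero_iff.2 hesne
        have husnorm : ‖us‖ = 1 := by
          rw [hus, norm_smul, norm_inv, norm_norm, inv_mul_cancel₀ hesnorm]
        set w' : EuclideanSpace ℝ (Fin (n+1)) := w - ⟪w, us⟫ • us with hw'
        set q' : EuclideanSpace ℝ (Fin (n+1)) := x + c • es + w' with hq'
        have hinnerw' : ⟪w', es⟫ = 0 := by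
          rw [hw', inner_sub_left, real_inner_smul_left]
          have h5 : ⟪w, es⟫ = ‖es‖ * ⟪w, us⟫ := by
            rw [hus, real_inner_smul_right]
            field_simp
          have h6 : ⟪us, es⟫ = ‖es‖ := inner_unit hesne
          rw [h5, h6]
          ring
        have hw'le : ‖w'‖ ≤ ‖w‖ := by
          have h7 : ‖w'‖^2 = ‖w‖^2 - ⟪w, us⟫^2 := by
            rw [hw', norm_sub_sq_real, real_inner_smul_right, norm_smul, Real.norm_eq_abs,
              husnorm, mul_one, sq_abs]
            ring
          have h8 : ‖w'‖^2 ≤ ‖w‖^2 := by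
            rw [h7]
            exact sub_le_self _ (sq_nonneg _)
          exact (pow_le_pow_iff_left₀ (norm_nonneg w') (norm_nonneg w) (by norm_num)).1 h8
        have hq'mem : q' ∈ cylSet x es b := by
          apply mem_cylSet_intro hesne hc0 hc1 hinnerw' (le_trans hw'le hwb) hq'
        -- distance between q and q'
        have hdiff : q - q' = c • (ecf m y x σ' - es) + ⟪w, us⟫ • us := by
          rw [hqe, hq', hw']
          module
        have hwus : ⟪w, us⟫ = ⟪w, us - ‖ecf m y x σ'‖⁻¹ • ecf m y x σ'⟫ := by
          rw [inner_sub_right]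
          have h8 : ⟪w, (‖ecf m y x σ'‖⁻¹ • ecf m y x σ' : EuclideanSpace ℝ (Fin (n+1)))⟫ = 0 := by
            rw [real_inner_smul_right, hw, mul_zero]
          rw [h8, sub_zero]
        have hdeltae : ecf m y x σ' - es = (σ' - σs) • (y - m) := by
          rw [hes]
          simp only [ecf]
          module
        have hdeltanorm : ‖ecf m y x σ' - es‖ ≤ η * ‖y - m‖ := by
          rw [hdeltae, norm_smul, Real.norm_eq_abs]
          have h9 : |σ' - σs| ≤ η := by
            rw [abs_le]
            constructor
            · linarith
            · linarith [hσ'.2]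
          apply mul_le_mul_of_nonneg_right h9 (norm_nonneg _)
        have husdiff : ‖us - ‖ecf m y x σ'‖⁻¹ • ecf m y x σ'‖ ≤ 2 * ‖es - ecf m y x σ'‖ / ‖es‖ := by
          rw [hus]
          exact norm_normalize_sub hesne
        have habs : |⟪w, us⟫| ≤ b * (2 * ‖es - ecf m y x σ'‖ / ‖es‖) := by
          rw [hwus]
          calc |⟪w, us - ‖ecf m y x σ'‖⁻¹ • ecf m y x σ'⟫| ≤ ‖w‖ * ‖us - ‖ecf m y x σ'‖⁻¹ • ecf m y x σ'‖ :=
              abs_real_inner_le_norm _ _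
            _ ≤ b * (2 * ‖es - ecf m y x σ'‖ / ‖es‖) := by
              apply mul_le_mul hwb husdiff (norm_nonneg _) (le_of_lt hbpos)
        have hdistqq' : ‖q - q'‖ ≤ η * L := by
          rw [hdiff]
          calc ‖c • (ecf m y x σ' - es) + ⟪w, us⟫ • us‖
              ≤ ‖c • (ecf m y x σ' - es)‖ + ‖⟪w, us⟫ • us‖ := norm_add_le _ _
            _ = c * ‖ecf m y x σ' - es‖ + |⟪w, us⟫| := by
                rw [norm_smul, norm_smul, Real.norm_eq_abs, Real.norm_eq_abs,
                  abs_of_nonneg hc0, husnorm, mul_one]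
            _ ≤ 1 * (η * ‖y - m‖) + b * (2 * ‖es - ecf m y x σ'‖ / ‖es‖) := by
                apply add_le_add
                · apply mul_le_mul hc1 hdeltanorm (norm_nonneg _) zero_le_one
                · exact habs
            _ ≤ η * ‖y - m‖ + b * (2 * (η * ‖y - m‖) / dmin) := by
                rw [one_mul]
                apply add_le_add (le_refl _)
                have h10 : ‖es - ecf m y x σ'‖ = ‖ecf m y x σ' - es‖ := norm_sub_rev _ _
                have h11 : 2 * ‖es - ecf m y x σ'‖ / ‖es‖ ≤ 2 * (η * ‖y - m‖) / dmin := by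
                  rw [h10]
                  apply div_le_div₀ (by positivity) (by linarith) hdminpos
                    (hdminle σs ⟨hσs0, hσs1⟩)
                apply mul_le_mul_of_nonneg_left h11 (le_of_lt hbpos)
            _ = η * L := by
                rw [hL]
                field_simp
        apply hδs
        rw [Metric.mem_thickening_iff]
        refine ⟨q', hq'mem, ?_⟩
        rw [dist_eq_norm]
        calc ‖q - q'‖ ≤ η * L := hdistqq'
          _ < δs := hηL
    have := le_csSup hTbdd hext
    linarith
  -- conclude : the segment [x,y] is inside the last cylinder
  have hfinal : cylSet x (ecf m y x 1) b ⊆ U := by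
    rw [hσseq] at hstarT
    exact hstarT.2 1 ⟨zero_le_one, le_refl 1⟩
  have hey : ecf m y x 1 = y - x := by simp only [ecf]; module
  intro p hp
  rw [segment_eq_image'] at hp
  obtain ⟨t, ht, rfl⟩ := hp
  apply hfinal
  apply mem_cylSet_intro (w := 0) (hey ▸ hncol 1 ⟨zero_le_one, le_refl 1⟩) ht.1 ht.2
    (inner_zero_left _) (by simp; linarith) (by rw [hey]; abel)
lemma triangle {U : Set (EuclideanSpace ℝ (Fin (n+1)))} (hU : IsOpen U)
    (hC : ∀ (z : EuclideanSpace ℝ (Fin (n + 1)))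
        (O : EuclideanSpace ℝ (Fin (n + 1)) ≃ₗᵢ[ℝ] EuclideanSpace ℝ (Fin (n + 1)))
        (a b : ℝ), 0 < a → 0 < b →
      ((fun y => z + O y) '' {y : EuclideanSpace ℝ (Fin (n + 1)) |
          |y 0| = a ∧ ∑ i ∈ Finset.univ.filter (fun i : Fin (n + 1) => i ≠ 0), (y i) ^ 2 ≤ b ^ 2} ⊆ U) →
      (interior ((fun y => z + O y) '' {y : EuclideanSpace ℝ (Fin (n + 1)) |
          |y 0| ≤ a ∧ ∑ i ∈ Finset.univ.filter (fun i : Fin (n + 1) => i ≠ 0), (y i) ^ 2 ≤ b ^ 2}) ⊆ U) →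
      (fun y => z + O y) '' {y : EuclideanSpace ℝ (Fin (n + 1)) |
          |y 0| ≤ a ∧ ∑ i ∈ Finset.univ.filter (fun i : Fin (n + 1) => i ≠ 0), (y i) ^ 2 ≤ b ^ 2} ⊆ U)
    {x m y : EuclideanSpace ℝ (Fin (n+1))}
    (hxm : segment ℝ x m ⊆ U) (hmy : segment ℝ m y ⊆ U) :
    segment ℝ x y ⊆ U := by
  by_cases hcol : ∃ σ ∈ Icc (0:ℝ) 1, ecf m y x σ = 0
  · obtain ⟨σ, hσ, hσ0⟩ := hcol
    have hx : x ∈ segment ℝ m y := by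
      rw [segment_eq_image']
      refine ⟨σ, hσ, ?_⟩
      have h1 : m + σ • (y - m) - x = 0 := hσ0
      show m + σ • (y - m) = x
      have := sub_eq_zero.1 h1
      rw [this]
    have hxy : segment ℝ x y ⊆ segment ℝ m y :=
      (convex_segment m y).segment_subset hx (right_mem_segment ℝ m y)
    exact hxy.trans hmy
  · push_neg at hcol
    exact sweep hU hC hxm hmy hcol

lemma chain_segment {U : Set (EuclideanSpace ℝ (Fin (n+1)))} (hU : IsOpen U)
    (hC : ∀ (z : EuclideanSpace ℝ (Fin (n + 1)))
        (O : EuclideanSpace ℝ (Fin (n + 1)) ≃ₗᵢ[ℝ] EuclideanSpace ℝ (Fin (n + 1)))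
        (a b : ℝ), 0 < a → 0 < b →
      ((fun y => z + O y) '' {y : EuclideanSpace ℝ (Fin (n + 1)) |
          |y 0| = a ∧ ∑ i ∈ Finset.univ.filter (fun i : Fin (n + 1) => i ≠ 0), (y i) ^ 2 ≤ b ^ 2} ⊆ U) →
      (interior ((fun y => z + O y) '' {y : EuclideanSpace ℝ (Fin (n + 1)) |
          |y 0| ≤ a ∧ ∑ i ∈ Finset.univ.filter (fun i : Fin (n + 1) => i ≠ 0), (y i) ^ 2 ≤ b ^ 2}) ⊆ U) →
      (fun y => z + O y) '' {y : EuclideanSpace ℝ (Fin (n + 1)) |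
          |y 0| ≤ a ∧ ∑ i ∈ Finset.univ.filter (fun i : Fin (n + 1) => i ≠ 0), (y i) ^ 2 ≤ b ^ 2} ⊆ U)
    {p q : EuclideanSpace ℝ (Fin (n+1))} (hp : p ∈ U)
    (h : Relation.ReflTransGen (fun a b => segment ℝ a b ⊆ U) p q) :
    segment ℝ p q ⊆ U := by
  induction h with
  | refl =>
      rw [segment_same]
      intro z hz
      rw [mem_singleton_iff.1 hz]
      exact hp
  | tail hpc hcq ih => exact triangle hU hC ih hcq
end Stmt15Aux

open Set Metric RealInnerProductSpace Stmt15Aux in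
theorem stmt15' {n : ℕ} (U : Set (EuclideanSpace ℝ (Fin (n + 1)))) (hU : IsOpen U) :
    (∀ (z : EuclideanSpace ℝ (Fin (n + 1)))
        (O : EuclideanSpace ℝ (Fin (n + 1)) ≃ₗᵢ[ℝ] EuclideanSpace ℝ (Fin (n + 1)))
        (a b : ℝ), 0 < a → 0 < b →
      ((fun y => z + O y) '' {y : EuclideanSpace ℝ (Fin (n + 1)) |
          |y 0| = a ∧ ∑ i ∈ Finset.univ.filter (fun i : Fin (n + 1) => i ≠ 0), (y i) ^ 2 ≤ b ^ 2} ⊆ U) →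
      (interior ((fun y => z + O y) '' {y : EuclideanSpace ℝ (Fin (n + 1)) |
          |y 0| ≤ a ∧ ∑ i ∈ Finset.univ.filter (fun i : Fin (n + 1) => i ≠ 0), (y i) ^ 2 ≤ b ^ 2}) ⊆ U) →
      (fun y => z + O y) '' {y : EuclideanSpace ℝ (Fin (n + 1)) |
          |y 0| ≤ a ∧ ∑ i ∈ Finset.univ.filter (fun i : Fin (n + 1) => i ≠ 0), (y i) ^ 2 ≤ b ^ 2} ⊆ U)
    ↔ ∀ x ∈ U, Convex ℝ (connectedComponentIn U x) := by
  constructor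
  · -- cylinder condition implies convex components
    intro hC x hx
    rw [convex_iff_segment_subset]
    intro p hp q hq
    have hpU : p ∈ U := connectedComponentIn_subset U x hp
    have hqU : q ∈ U := connectedComponentIn_subset U x hq
    set R : EuclideanSpace ℝ (Fin (n+1)) → EuclideanSpace ℝ (Fin (n+1)) → Prop :=
      fun a b => segment ℝ a b ⊆ U with hR
    set A : Set (EuclideanSpace ℝ (Fin (n+1))) :=
      {q | Relation.ReflTransGen R p q} ∩ U with hA
    set B : Set (EuclideanSpace ℝ (Fin (n+1))) :=
      U \ {q | Relation.ReflTransGen R p q} with hB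
    have hAopen : IsOpen A := by
      rw [Metric.isOpen_iff]
      intro q' hq'
      obtain ⟨ε, hε, hball⟩ := Metric.isOpen_iff.1 hU q' hq'.2
      refine ⟨ε, hε, fun q'' hq'' => ⟨?_, hball hq''⟩⟩
      exact hq'.1.tail (((convex_ball q' ε).segment_subset (mem_ball_self hε) hq'').trans hball)
    have hBopen : IsOpen B := by
      rw [Metric.isOpen_iff]
      intro q' hq'
      obtain ⟨ε, hε, hball⟩ := Metric.isOpen_iff.1 hU q' hq'.1
      refine ⟨ε, hε, fun q'' hq'' => ⟨hball hq'', fun hreach => hq'.2 ?_⟩⟩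
      exact hreach.tail (((convex_ball q' ε).segment_subset hq'' (mem_ball_self hε)).trans hball)
    have hdisj : Disjoint A B := by
      rw [Set.disjoint_left]
      rintro q' ⟨h1, _⟩ ⟨_, h2⟩
      exact h2 h1
    have hsub : connectedComponentIn U x ⊆ A ∪ B := by
      intro q' hq'
      have : q' ∈ U := connectedComponentIn_subset U x hq'
      by_cases hreach : Relation.ReflTransGen R p q'
      · exact Or.inl ⟨hreach, this⟩
      · exact Or.inr ⟨this, hreach⟩
    have hpA : p ∈ A := ⟨Relation.ReflTransGen.refl, hpU⟩
    have hVA : connectedComponentIn U x ⊆ A :=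
      IsPreconnected.subset_left_of_subset_union hAopen hBopen hdisj hsub
        ⟨p, hp, hpA⟩ (isPreconnected_connectedComponentIn)
    have hreach : Relation.ReflTransGen R p q := (hVA hq).1
    have hseg : segment ℝ p q ⊆ U := chain_segment hU hC hpU hreach
    have h1 : segment ℝ p q ⊆ connectedComponentIn U p :=
      (convex_segment p q).isPreconnected.subset_connectedComponentIn
        (left_mem_segment ℝ p q) hseg
    rw [connectedComponentIn_eq hp]
    exact h1
  · -- convex components imply the cylinder condition
    intro hRHS z O a b ha hb hlat hint
    rintro q ⟨v, hv, rfl⟩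
    show z + O v ∈ U
    set S : Set (EuclideanSpace ℝ (Fin (n+1))) := {y : EuclideanSpace ℝ (Fin (n + 1)) |
      |y 0| ≤ a ∧ ∑ i ∈ Finset.univ.filter (fun i : Fin (n + 1) => i ≠ 0), (y i) ^ 2 ≤ b ^ 2}
      with hSdef
    set D : Set (EuclideanSpace ℝ (Fin (n+1))) := (fun y => z + O y) '' S with hDdef
    have hcombo : ∀ (u u' : EuclideanSpace ℝ (Fin (n+1))) (α β : ℝ), α + β = 1 →
        α • (z + O u) + β • (z + O u') = z + O (α • u + β • u') := by
      intro u u' α β hαβ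
      simp only [map_add, map_smul, smul_add]
      linear_combination (norm := module) hαβ • z
    have happly : ∀ (u u' : EuclideanSpace ℝ (Fin (n+1))) (α β : ℝ) (i : Fin (n+1)),
        (α • u + β • u') i = α * u i + β * u' i := by
      intro u u' α β i
      simp [PiLp.add_apply, PiLp.smul_apply, smul_eq_mul]
    have hSconv : ∀ (u : EuclideanSpace ℝ (Fin (n+1))), u ∈ S →
        ∀ (u' : EuclideanSpace ℝ (Fin (n+1))), u' ∈ S →
        ∀ (α β : ℝ), 0 ≤ α → 0 ≤ β → α + β = 1 → α • u + β • u' ∈ S := by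
      intro u hu u' hu' α β hα hβ hαβ
      constructor
      · rw [happly]
        calc |α * u 0 + β * u' 0| ≤ |α * u 0| + |β * u' 0| := abs_add_le _ _
          _ = α * |u 0| + β * |u' 0| := by
              rw [abs_mul, abs_mul, abs_of_nonneg hα, abs_of_nonneg hβ]
          _ ≤ α * a + β * a := by
              apply add_le_add (mul_le_mul_of_nonneg_left hu.1 hα)
                (mul_le_mul_of_nonneg_left hu'.1 hβ)
          _ = a := by rw [← add_mul, hαβ, one_mul]
      · calc ∑ i ∈ Finset.univ.filter (fun i : Fin (n + 1) => i ≠ 0), ((α • u + β • u') i)^2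
            ≤ ∑ i ∈ Finset.univ.filter (fun i : Fin (n + 1) => i ≠ 0),
              (α * (u i)^2 + β * (u' i)^2) := by
              apply Finset.sum_le_sum
              intro i _
              rw [happly]
              nlinarith [mul_nonneg (mul_nonneg hα hβ) (sq_nonneg (u i - u' i)),
                sq_nonneg (u i - u' i)]
          _ = α * (∑ i ∈ Finset.univ.filter (fun i : Fin (n + 1) => i ≠ 0), (u i)^2)
              + β * (∑ i ∈ Finset.univ.filter (fun i : Fin (n + 1) => i ≠ 0), (u' i)^2) := by
              rw [Finset.sum_add_distrib, Finset.mul_sum, Finset.mul_sum]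
          _ ≤ α * b^2 + β * b^2 := by
              apply add_le_add (mul_le_mul_of_nonneg_left hu.2 hα)
                (mul_le_mul_of_nonneg_left hu'.2 hβ)
          _ = b^2 := by rw [← add_mul, hαβ, one_mul]
    have hDconv : Convex ℝ D := by
      rintro p ⟨u, hu, rfl⟩ p' ⟨u', hu', rfl⟩ α β hα hβ hαβ
      exact ⟨α • u + β • u', hSconv u hu u' hu' α β hα hβ hαβ, (hcombo u u' α β hαβ).symm⟩
    have hzero : ball (0 : EuclideanSpace ℝ (Fin (n+1))) (min a b) ⊆ S := by
      intro w hw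
      rw [mem_ball_zero_iff] at hw
      have hw0 : |w 0| ≤ ‖w‖ := by
        have h1 := abs_real_inner_le_norm w (EuclideanSpace.single 0 (1:ℝ))
        have h2 : ⟪w, EuclideanSpace.single 0 (1:ℝ)⟫ = w 0 := by
          simpa using (EuclideanSpace.inner_single_right 0 (1:ℝ) w)
        rw [h2] at h1
        simpa using h1
      constructor
      · exact hw0.trans (le_of_lt (lt_of_lt_of_le hw (min_le_left a b)))
      · rw [sum_ne_zero_eq]
        have hwb : ‖w‖ < b := lt_of_lt_of_le hw (min_le_right a b)
        nlinarith [sq_nonneg (w 0), norm_nonneg w]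
    have hopenmap : IsOpenMap (fun y : EuclideanSpace ℝ (Fin (n+1)) => z + O y) := by
      have : (fun y : EuclideanSpace ℝ (Fin (n+1)) => z + O y)
          = ⇑(O.toHomeomorph.trans (Homeomorph.addLeft z)) := rfl
      rw [this]
      exact (O.toHomeomorph.trans (Homeomorph.addLeft z)).isOpenMap
    have hIntNe : (interior D).Nonempty := by
      have h4 : (fun y : EuclideanSpace ℝ (Fin (n+1)) => z + O y) '' ball 0 (min a b)
          ⊆ interior D :=
        interior_maximal (image_mono hzero) (hopenmap _ isOpen_ball)
      exact ⟨z + O 0, h4 ⟨0, mem_ball_self (lt_min ha hb), rfl⟩⟩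
    have hclosure : D ⊆ closure (interior D) := by
      obtain ⟨y₀, hy₀⟩ := hIntNe
      intro d hd
      have htend : Filter.Tendsto (fun t : ℝ => d + t • (y₀ - d)) (nhdsWithin 0 (Ioi 0))
          (nhds d) := by
        have h5 : Filter.Tendsto (fun t : ℝ => d + t • (y₀ - d)) (nhds 0)
            (nhds (d + (0:ℝ) • (y₀ - d))) :=
          ((continuous_const.add (continuous_id.smul continuous_const)).tendsto 0)
        simp only [zero_smul, add_zero] at h5
        exact h5.mono_left nhdsWithin_le_nhds
      apply mem_closure_of_tendsto htend
      have h6 : Ioc (0:ℝ) 1 ∈ nhdsWithin (0:ℝ) (Ioi 0) :=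
        Ioc_mem_nhdsGT_of_mem ⟨le_refl 0, zero_lt_one⟩
      filter_upwards [h6] with t ht
      exact hDconv.add_smul_sub_mem_interior hd hy₀ ⟨ht.1, ht.2⟩
    have hlatD : (fun y => z + O y) '' {y : EuclideanSpace ℝ (Fin (n + 1)) |
        |y 0| = a ∧ ∑ i ∈ Finset.univ.filter (fun i : Fin (n + 1) => i ≠ 0), (y i) ^ 2 ≤ b ^ 2}
        ⊆ D :=
      image_mono (fun w hw => ⟨hw.1.le, hw.2⟩)
    set G : Set (EuclideanSpace ℝ (Fin (n+1))) := interior D ∪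
      ((fun y => z + O y) '' {y : EuclideanSpace ℝ (Fin (n + 1)) |
        |y 0| = a ∧ ∑ i ∈ Finset.univ.filter (fun i : Fin (n + 1) => i ≠ 0), (y i) ^ 2 ≤ b ^ 2})
      with hGdef
    have hGU : G ⊆ U := union_subset hint hlat
    have hGpre : IsPreconnected G :=
      (hDconv.interior.isPreconnected).subset_closure subset_union_left
        (union_subset subset_closure (fun q hq => hclosure (hlatD hq)))
    -- the two lateral points above and below v
    set vm : EuclideanSpace ℝ (Fin (n+1)) := WithLp.toLp 2 (fun i => if i = 0 then -a else v i) with hvm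
    set vp : EuclideanSpace ℝ (Fin (n+1)) := WithLp.toLp 2 (fun i => if i = 0 then a else v i) with hvp
    have hsum_eq : ∀ (c : ℝ),
        ∑ i ∈ Finset.univ.filter (fun i : Fin (n + 1) => i ≠ 0),
          ((WithLp.toLp 2 (fun i => if i = 0 then c else v i) : EuclideanSpace ℝ (Fin (n+1))) i) ^ 2
        = ∑ i ∈ Finset.univ.filter (fun i : Fin (n + 1) => i ≠ 0), (v i) ^ 2 := by
      intro c
      apply Finset.sum_congr rfl
      intro i hi
      have : i ≠ 0 := (Finset.mem_filter.1 hi).2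
      simp [this]
    have hvmL : vm ∈ {y : EuclideanSpace ℝ (Fin (n + 1)) |
        |y 0| = a ∧ ∑ i ∈ Finset.univ.filter (fun i : Fin (n + 1) => i ≠ 0), (y i) ^ 2 ≤ b ^ 2} := by
      constructor
      · show |(if (0 : Fin (n+1)) = 0 then -a else v 0)| = a
        rw [if_pos rfl, abs_neg, abs_of_pos ha]
      · rw [hvm, hsum_eq]
        exact hv.2
    have hvpL : vp ∈ {y : EuclideanSpace ℝ (Fin (n + 1)) |
        |y 0| = a ∧ ∑ i ∈ Finset.univ.filter (fun i : Fin (n + 1) => i ≠ 0), (y i) ^ 2 ≤ b ^ 2} := by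
      constructor
      · show |(if (0 : Fin (n+1)) = 0 then a else v 0)| = a
        rw [if_pos rfl, abs_of_pos ha]
      · rw [hvp, hsum_eq]
        exact hv.2
    set t : ℝ := (v 0 + a)/(2*a) with ht
    have hv0 : |v 0| ≤ a := hv.1
    rw [abs_le] at hv0
    have ht0 : 0 ≤ t := by rw [ht]; apply div_nonneg (by linarith) (by linarith)
    have ht1 : t ≤ 1 := by
      rw [ht, div_le_one (by linarith)]
      linarith
    have hvid : (1-t) • vm + t • vp = v := by
      ext i
      rw [happly]
      by_cases hi : i = 0
      · subst hi
        show (1-t) * (if (0:Fin (n+1)) = 0 then -a else v 0)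
            + t * (if (0:Fin (n+1)) = 0 then a else v 0) = v 0
        rw [if_pos rfl, if_pos rfl, ht]
        field_simp
        ring
      · show (1-t) * (if i = 0 then -a else v i) + t * (if i = 0 then a else v i) = v i
        rw [if_neg hi, if_neg hi]
        ring
    have hfm : z + O vm ∈ G := Or.inr ⟨vm, hvmL, rfl⟩
    have hfp : z + O vp ∈ G := Or.inr ⟨vp, hvpL, rfl⟩
    have hfmU : z + O vm ∈ U := hGU hfm
    have hW : Convex ℝ (connectedComponentIn U (z + O vm)) := hRHS _ hfmU
    have hGW : G ⊆ connectedComponentIn U (z + O vm) :=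
      hGpre.subset_connectedComponentIn hfm hGU
    have hcomb := hW (hGW hfm) (hGW hfp) (by linarith : (0:ℝ) ≤ 1 - t) ht0
      (by ring : (1-t) + t = 1)
    have hqeq : (1-t) • (z + O vm) + t • (z + O vp) = z + O v := by
      rw [hcombo vm vp (1-t) t (by ring), hvid]
    rw [hqeq] at hcomb
    exact connectedComponentIn_subset U (z + O vm) hcomb

/-- Condition (C_{1,U}) holds if and only if every connected component of the
open set `U ⊆ ℝ^N` is convex.  A cylinder `C` is a rigid image of
`[−a,a] × B̄_b^{N−1}`, with lateral boundary the image of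
`{−a,a} × B̄_b^{N−1}`.  Here `N = n + 1`. -/
theorem stmt15 {n : ℕ} (U : Set (EuclideanSpace ℝ (Fin (n + 1)))) (hU : IsOpen U) :
    (∀ (z : EuclideanSpace ℝ (Fin (n + 1)))
        (O : EuclideanSpace ℝ (Fin (n + 1)) ≃ₗᵢ[ℝ] EuclideanSpace ℝ (Fin (n + 1)))
        (a b : ℝ), 0 < a → 0 < b →
      ((fun y => z + O y) '' {y : EuclideanSpace ℝ (Fin (n + 1)) |
          |y 0| = a ∧ ∑ i ∈ Finset.univ.filter (fun i : Fin (n + 1) => i ≠ 0), (y i) ^ 2 ≤ b ^ 2} ⊆ U) →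
      (interior ((fun y => z + O y) '' {y : EuclideanSpace ℝ (Fin (n + 1)) |
          |y 0| ≤ a ∧ ∑ i ∈ Finset.univ.filter (fun i : Fin (n + 1) => i ≠ 0), (y i) ^ 2 ≤ b ^ 2}) ⊆ U) →
      (fun y => z + O y) '' {y : EuclideanSpace ℝ (Fin (n + 1)) |
          |y 0| ≤ a ∧ ∑ i ∈ Finset.univ.filter (fun i : Fin (n + 1) => i ≠ 0), (y i) ^ 2 ≤ b ^ 2} ⊆ U)
    ↔ ∀ x ∈ U, Convex ℝ (connectedComponentIn U x) := by
  exact stmt15' U hU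
end

section
/- Let N ≥ 2k and 0 < α < 1. The function u(x) = Σ_{i=1}^k |x_i|^α on R^N is a viscosity supersolution of λ_k(D²u) = 0 on R^N; moreover, at points where all x_1,...,x_k are nonzero, λ_k(D²u(x)) = max{α(α−1)|x_1|^{α−2}, ..., α(α−1)|x_k|^{α−2}} < 0. -/
set_option maxHeartbeats 1000000

namespace Stmt17Aux

open Finset Matrix Module Submodule
open scoped RealInnerProductSpace

/-- Identity cast from the plain pi type into Euclidean space. -/
def toE {N : ℕ} (v : Fin N → ℝ) : EuclideanSpace ℝ (Fin N) := WithLp.toLp 2 v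

variable {N : ℕ}

@[simp] lemma toE_apply (v : Fin N → ℝ) (i : Fin N) : toE v i = v i := rfl


lemma sdtest {ψ ψ' : ℝ → ℝ} {c : ℝ} (hd : ∀ t, HasDerivAt ψ (ψ' t) t)
    (h0 : HasDerivAt ψ' c 0) (hmax : IsLocalMax ψ 0) : c ≤ 0 := by
  by_contra hc
  push_neg at hc
  have hz : ψ' 0 = 0 := hmax.hasDerivAt_eq_zero (hd 0)
  rw [hasDerivAt_iff_tendsto_slope] at h0
  have h0' : Filter.Tendsto (slope ψ' 0) (nhdsWithin 0 (Set.Ioi 0)) (nhds c) :=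
    h0.mono_left (nhdsWithin_mono _ (fun t ht => ne_of_gt ht))
  have hev : ∀ᶠ t in nhdsWithin 0 (Set.Ioi 0), 0 < slope ψ' 0 t :=
    h0'.eventually (eventually_gt_nhds hc)
  have hev2 : ∀ᶠ t in nhdsWithin 0 (Set.Ioi 0), ψ t ≤ ψ 0 :=
    (hmax.filter_mono nhdsWithin_le_nhds)
  obtain ⟨δ, hδ, hIoc⟩ := mem_nhdsGT_iff_exists_Ioc_subset.1 (hev.and hev2)
  have hψ'pos : ∀ t ∈ Set.Ioc (0:ℝ) δ, 0 < ψ' t := by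
    intro t ht
    have h1 := (hIoc ht).1
    have : slope ψ' 0 t = ψ' t / t := by simp [slope, hz]; ring
    rw [this] at h1
    have ht0 : 0 < t := ht.1
    nlinarith [h1, mul_pos h1 ht0, div_mul_cancel₀ (ψ' t) (ne_of_gt ht0)]
  have hmono : StrictMonoOn ψ (Set.Icc 0 δ) := by
    apply strictMonoOn_of_deriv_pos (convex_Icc 0 δ)
    · exact fun t _ => (hd t).continuousAt.continuousWithinAt
    · intro t ht
      rw [interior_Icc] at ht
      rw [(hd t).deriv]
      exact hψ'pos t ⟨ht.1, le_of_lt ht.2⟩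
  have h1 : ψ 0 < ψ δ := hmono ⟨le_refl 0, le_of_lt hδ⟩ ⟨le_of_lt hδ, le_refl δ⟩ hδ
  have h2 : ψ δ ≤ ψ 0 := (hIoc ⟨hδ, le_refl δ⟩).2
  linarith


lemma finrank_span_image' {M : Type*} [AddCommGroup M] [Module ℝ M] {ι : Type*}
    {f : ι → M} (hf : LinearIndependent ℝ f) (T : Finset ι) :
    Module.finrank ℝ (Submodule.span ℝ (f '' (T : Set ι))) = T.card := by
  have h1 : LinearIndependent ℝ (fun x : (T : Set ι) => f x) :=
    hf.comp _ Subtype.val_injective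
  have h2 := finrank_span_eq_card (R := ℝ) h1
  rw [Set.image_eq_range, h2]
  simp

lemma card_filter_lt {N c : ℕ} (hc : c ≤ N) :
    (Finset.univ.filter (fun j : Fin N => (j : ℕ) < c)).card = c := by
  have h : (Finset.univ.filter (fun j : Fin N => (j : ℕ) < c)) =
      Finset.image (Fin.castLE hc) Finset.univ := by
    ext j
    simp only [Finset.mem_filter, Finset.mem_image, Finset.mem_univ, true_and]
    constructor
    · intro h; exact ⟨⟨(j : ℕ), h⟩, by ext; rfl⟩
    · rintro ⟨i, rfl⟩; exact i.2
  rw [h, Finset.card_image_of_injective _ (Fin.castLE_injective hc), Finset.card_univ,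
    Fintype.card_fin]

lemma card_filter_le {N c : ℕ} (hc : c ≤ N) :
    (Finset.univ.filter (fun j : Fin N => c ≤ (j : ℕ))).card = N - c := by
  have h := Finset.card_filter_add_card_filter_not (s := (Finset.univ : Finset (Fin N)))
    (p := fun j : Fin N => (j : ℕ) < c)
  have h2 : (Finset.univ.filter (fun j : Fin N => ¬ (j : ℕ) < c)) =
      (Finset.univ.filter (fun j : Fin N => c ≤ (j : ℕ))) := by
    apply Finset.filter_congr; intro j _; simp [not_lt]
  rw [card_filter_lt hc, h2] at h
  simp only [Finset.card_univ, Fintype.card_fin] at h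
  omega

lemma dot_eq_inner (x y : EuclideanSpace ℝ (Fin N)) : ⟪x, y⟫ = x ⬝ᵥ y := by
  simp [PiLp.inner_apply, RCLike.inner_apply, dotProduct]
  exact Finset.sum_congr rfl (fun _ _ => mul_comm _ _)

lemma inner_mulVec_symm {A : Matrix (Fin N) (Fin N) ℝ} (hA : A.IsHermitian)
    (x y : EuclideanSpace ℝ (Fin N)) :
    ⟪toE (A *ᵥ x), y⟫ = ⟪x, toE (A *ᵥ y)⟫ := by
  rw [dot_eq_inner, dot_eq_inner]
  have hAT : Aᵀ = A := by
    conv_rhs => rw [← hA.eq]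
    ext i j
    simp [Matrix.conjTranspose_apply]
  show (A *ᵥ x) ⬝ᵥ y = x ⬝ᵥ (A *ᵥ y)
  rw [Matrix.dotProduct_mulVec, ← hAT, Matrix.vecMul_transpose, hAT]

lemma repr_mulVec {A : Matrix (Fin N) (Fin N) ℝ} (hA : A.IsHermitian)
    (v : EuclideanSpace ℝ (Fin N)) (i : Fin N) :
    hA.eigenvectorBasis.repr (toE (A *ᵥ v)) i
      = hA.eigenvalues i * hA.eigenvectorBasis.repr v i := by
  rw [OrthonormalBasis.repr_apply_apply, OrthonormalBasis.repr_apply_apply]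
  rw [← inner_mulVec_symm hA]
  have h := hA.mulVec_eigenvectorBasis i
  have h2 : toE (A *ᵥ (hA.eigenvectorBasis i)) = hA.eigenvalues i • hA.eigenvectorBasis i := by
    exact congrArg (WithLp.toLp 2) h
  rw [h2, real_inner_smul_left]

lemma quad_form_eq {A : Matrix (Fin N) (Fin N) ℝ} (hA : A.IsHermitian)
    (v : EuclideanSpace ℝ (Fin N)) :
    v ⬝ᵥ (A *ᵥ v) = ∑ i, hA.eigenvalues i * (hA.eigenvectorBasis.repr v i)^2 := by
  have h1 : v ⬝ᵥ (A *ᵥ v) = ⟪v, toE (A *ᵥ v)⟫ := (dot_eq_inner v (toE (A *ᵥ v))).symm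
  rw [h1, ← hA.eigenvectorBasis.repr.inner_map_map v (toE (A *ᵥ v))]
  rw [PiLp.inner_apply]
  apply Finset.sum_congr rfl
  intro i _
  rw [repr_mulVec hA]
  simp [RCLike.inner_apply]
  ring

lemma norm_form_eq {A : Matrix (Fin N) (Fin N) ℝ} (hA : A.IsHermitian)
    (v : EuclideanSpace ℝ (Fin N)) :
    v ⬝ᵥ v = ∑ i, (hA.eigenvectorBasis.repr v i)^2 := by
  rw [← dot_eq_inner, ← hA.eigenvectorBasis.repr.inner_map_map v v, PiLp.inner_apply]
  apply Finset.sum_congr rfl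
  intro i _
  simp [RCLike.inner_apply]


lemma sortedEig_eq {A : Matrix (Fin N) (Fin N) ℝ} (hA : A.IsHermitian) :
    sortedEig A = hA.eigenvalues ∘ ⇑(Tuple.sort hA.eigenvalues) := by
  unfold sortedEig
  rw [dif_pos hA]

lemma sortedEig_monotone {A : Matrix (Fin N) (Fin N) ℝ} (hA : A.IsHermitian) :
    Monotone (sortedEig A) := by
  rw [sortedEig_eq hA]
  exact Tuple.monotone_sort _

/-- common skeleton: produce a nonzero vector in the intersection of `W` with the span of
eigenvectors whose index lies in `T`. -/
lemma exists_vec {A : Matrix (Fin N) (Fin N) ℝ} (hA : A.IsHermitian)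
    (T : Finset (Fin N)) (W : Submodule ℝ (EuclideanSpace ℝ (Fin N)))
    (hsum : N + 1 ≤ T.card + Module.finrank ℝ W) :
    ∃ v : EuclideanSpace ℝ (Fin N), v ∈ W ∧ v ≠ 0 ∧
      (∀ i, i ∉ T → hA.eigenvectorBasis.repr v i = 0) := by
  classical
  set b := hA.eigenvectorBasis with hb
  set U : Submodule ℝ (EuclideanSpace ℝ (Fin N)) :=
    Submodule.span ℝ ((fun i => b i) '' (T : Set (Fin N))) with hU
  have hrankU : Module.finrank ℝ U = T.card := by
    rw [hU]
    exact finrank_span_image' (b.orthonormal.linearIndependent) T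
  have hUW : Module.finrank ℝ (U ⊓ W : Submodule ℝ _) ≠ 0 := by
    have hsup := Submodule.finrank_sup_add_finrank_inf_eq U W
    have hle : Module.finrank ℝ (U ⊔ W : Submodule ℝ _) ≤ N := by
      have := Submodule.finrank_le (U ⊔ W)
      simpa [finrank_euclideanSpace] using this
    omega
  have hne : (U ⊓ W : Submodule ℝ _) ≠ ⊥ := by
    intro h
    rw [h] at hUW
    simp at hUW
  obtain ⟨v, hv, hv0⟩ := (Submodule.ne_bot_iff _).1 hne
  refine ⟨v, hv.2, hv0, ?_⟩
  intro i hi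
  have hvU : v ∈ U := hv.1
  have hmem : v ∈ Submodule.span ℝ (⇑b.toBasis '' (T : Set (Fin N))) := by
    rwa [b.coe_toBasis]
  rw [Basis.mem_span_image] at hmem
  have : i ∉ (b.toBasis.repr v).support := fun hc => hi (hmem hc)
  have h0 : b.toBasis.repr v i = 0 := Finsupp.notMem_support_iff.1 this
  rwa [b.coe_toBasis_repr_apply] at h0

theorem sortedEig_le {A : Matrix (Fin N) (Fin N) ℝ} (hA : A.IsHermitian)
    {k : ℕ} (hk1 : 1 ≤ k) (hkN : k ≤ N) (μ : ℝ)
    (W : Submodule ℝ (EuclideanSpace ℝ (Fin N))) (hW : k ≤ Module.finrank ℝ W)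
    (hQ : ∀ v ∈ W, v ⬝ᵥ (A *ᵥ v) ≤ μ * (v ⬝ᵥ v)) :
    sortedEig A ⟨k - 1, by omega⟩ ≤ μ := by
  classical
  by_contra hcon
  push_neg at hcon
  set m := sortedEig A ⟨k - 1, by omega⟩ with hm
  set σ := Tuple.sort hA.eigenvalues with hσ
  set T : Finset (Fin N) := Finset.univ.filter (fun i => μ < hA.eigenvalues i) with hT
  have hcard : N - k + 1 ≤ T.card := by
    have hinj : Set.InjOn σ ((Finset.univ.filter (fun j : Fin N => k - 1 ≤ (j : ℕ))) : Set (Fin N)) :=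
      σ.injective.injOn
    have hmaps : ∀ j ∈ Finset.univ.filter (fun j : Fin N => k - 1 ≤ (j : ℕ)), σ j ∈ T := by
      intro j hj
      simp only [Finset.mem_filter, Finset.mem_univ, true_and] at hj ⊢
      rw [hT]; simp only [Finset.mem_filter, Finset.mem_univ, true_and]
      have hle : (⟨k - 1, by omega⟩ : Fin N) ≤ j := hj
      have := sortedEig_monotone hA hle
      have heig : hA.eigenvalues (σ j) = sortedEig A j := by
        rw [sortedEig_eq hA]; rfl
      rw [heig]
      exact lt_of_lt_of_le hcon this
    have := Finset.card_le_card_of_injOn σ hmaps hinj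
    have hc2 : (Finset.univ.filter (fun j : Fin N => k - 1 ≤ (j : ℕ))).card = N - (k - 1) := by
      have := card_filter_le (N := N) (c := k - 1) (by omega)
      convert this using 2
    omega
  obtain ⟨v, hvW, hv0, hsupp⟩ := exists_vec hA T W (by omega)
  have hQv := hQ v hvW
  rw [quad_form_eq hA, norm_form_eq hA] at hQv
  set w := fun i => hA.eigenvectorBasis.repr v i with hw
  have hws : ∃ i, w i ≠ 0 := by
    by_contra hall
    push_neg at hall
    apply hv0
    have := hA.eigenvectorBasis.sum_repr v
    rw [← this]
    apply Finset.sum_eq_zero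
    intro i _
    have := hall i
    rw [hw] at this
    simp only at this
    rw [this]
    simp
  obtain ⟨i₀, hi₀⟩ := hws
  have hi₀T : i₀ ∈ T := by
    by_contra hc
    exact hi₀ (hsupp i₀ hc)
  have hlhs : ∑ i, hA.eigenvalues i * (hA.eigenvectorBasis.repr v i)^2
      = ∑ i ∈ T, hA.eigenvalues i * w i ^ 2 := by
    rw [← Finset.sum_subset (Finset.subset_univ T)]
    intro i _ hiT
    rw [hsupp i hiT]
    ring
  have hrhs : (∑ i, (hA.eigenvectorBasis.repr v i)^2) = ∑ i ∈ T, w i ^ 2 := by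
    rw [← Finset.sum_subset (Finset.subset_univ T)]
    intro i _ hiT
    rw [hsupp i hiT]
    ring
  rw [hlhs, hrhs, Finset.mul_sum] at hQv
  have hstrict : ∑ i ∈ T, μ * w i ^ 2 < ∑ i ∈ T, hA.eigenvalues i * w i ^ 2 := by
    apply Finset.sum_lt_sum
    · intro i hiT
      have hμi : μ < hA.eigenvalues i := by
        rw [hT] at hiT
        simpa using hiT
      nlinarith [sq_nonneg (w i)]
    · refine ⟨i₀, hi₀T, ?_⟩
      have hμi : μ < hA.eigenvalues i₀ := by
        rw [hT] at hi₀T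
        simpa using hi₀T
      have : 0 < w i₀ ^ 2 := by positivity
      nlinarith
  linarith

theorem le_sortedEig {A : Matrix (Fin N) (Fin N) ℝ} (hA : A.IsHermitian)
    {k : ℕ} (hk1 : 1 ≤ k) (hkN : k ≤ N) (μ : ℝ)
    (W : Submodule ℝ (EuclideanSpace ℝ (Fin N))) (hW : N - k + 1 ≤ Module.finrank ℝ W)
    (hQ : ∀ v ∈ W, μ * (v ⬝ᵥ v) ≤ v ⬝ᵥ (A *ᵥ v)) :
    μ ≤ sortedEig A ⟨k - 1, by omega⟩ := by
  classical
  by_contra hcon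
  push_neg at hcon
  set m := sortedEig A ⟨k - 1, by omega⟩ with hm
  set σ := Tuple.sort hA.eigenvalues with hσ
  set T : Finset (Fin N) := Finset.univ.filter (fun i => hA.eigenvalues i < μ) with hT
  have hcard : k ≤ T.card := by
    have hinj : Set.InjOn σ ((Finset.univ.filter (fun j : Fin N => (j : ℕ) < k)) : Set (Fin N)) :=
      σ.injective.injOn
    have hmaps : ∀ j ∈ Finset.univ.filter (fun j : Fin N => (j : ℕ) < k), σ j ∈ T := by
      intro j hj
      simp only [Finset.mem_filter, Finset.mem_univ, true_and] at hj
      rw [hT]; simp only [Finset.mem_filter, Finset.mem_univ, true_and]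
      have hle : j ≤ (⟨k - 1, by omega⟩ : Fin N) := by
        show (j : ℕ) ≤ k - 1
        omega
      have := sortedEig_monotone hA hle
      have heig : hA.eigenvalues (σ j) = sortedEig A j := by
        rw [sortedEig_eq hA]; rfl
      rw [heig]
      exact lt_of_le_of_lt this hcon
    have := Finset.card_le_card_of_injOn σ hmaps hinj
    have hc2 : (Finset.univ.filter (fun j : Fin N => (j : ℕ) < k)).card = k := by
      exact card_filter_lt (by omega)
    omega
  obtain ⟨v, hvW, hv0, hsupp⟩ := exists_vec hA T W (by omega)
  have hQv := hQ v hvW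
  rw [quad_form_eq hA, norm_form_eq hA] at hQv
  set w := fun i => hA.eigenvectorBasis.repr v i with hw
  have hws : ∃ i, w i ≠ 0 := by
    by_contra hall
    push_neg at hall
    apply hv0
    have := hA.eigenvectorBasis.sum_repr v
    rw [← this]
    apply Finset.sum_eq_zero
    intro i _
    have := hall i
    rw [hw] at this
    simp only at this
    rw [this]
    simp
  obtain ⟨i₀, hi₀⟩ := hws
  have hi₀T : i₀ ∈ T := by
    by_contra hc
    exact hi₀ (hsupp i₀ hc)
  have hlhs : ∑ i, hA.eigenvalues i * (hA.eigenvectorBasis.repr v i)^2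
      = ∑ i ∈ T, hA.eigenvalues i * w i ^ 2 := by
    rw [← Finset.sum_subset (Finset.subset_univ T)]
    intro i _ hiT
    rw [hsupp i hiT]
    ring
  have hrhs : (∑ i, (hA.eigenvectorBasis.repr v i)^2) = ∑ i ∈ T, w i ^ 2 := by
    rw [← Finset.sum_subset (Finset.subset_univ T)]
    intro i _ hiT
    rw [hsupp i hiT]
    ring
  rw [hlhs, hrhs, Finset.mul_sum] at hQv
  have hstrict : ∑ i ∈ T, hA.eigenvalues i * w i ^ 2 < ∑ i ∈ T, μ * w i ^ 2 := by
    apply Finset.sum_lt_sum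
    · intro i hiT
      have hμi : hA.eigenvalues i < μ := by
        rw [hT] at hiT
        simpa using hiT
      nlinarith [sq_nonneg (w i)]
    · refine ⟨i₀, hi₀T, ?_⟩
      have hμi : hA.eigenvalues i₀ < μ := by
        rw [hT] at hi₀T
        simpa using hi₀T
      have : 0 < w i₀ ^ 2 := by positivity
      nlinarith
  linarith


lemma hess_eq (φ : EuclideanSpace ℝ (Fin N) → ℝ) (x : EuclideanSpace ℝ (Fin N)) (i j : Fin N) :
    hess φ x i j = fderiv ℝ (fderiv ℝ φ) x (EuclideanSpace.single i 1) (EuclideanSpace.single j 1) := by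
  unfold hess
  rw [iteratedFDeriv_two_apply]
  simp

lemma sum_single_eq (v : EuclideanSpace ℝ (Fin N)) :
    ∑ i, v i • (EuclideanSpace.single i 1 : EuclideanSpace ℝ (Fin N)) = v := by
  have h := (EuclideanSpace.basisFun (Fin N) ℝ).sum_repr v
  simpa [EuclideanSpace.basisFun_apply, EuclideanSpace.basisFun_repr] using h

lemma dot_bilin (B : EuclideanSpace ℝ (Fin N) →L[ℝ] EuclideanSpace ℝ (Fin N) →L[ℝ] ℝ)
    (v : EuclideanSpace ℝ (Fin N)) :
    v ⬝ᵥ ((fun i j => B (EuclideanSpace.single i 1) (EuclideanSpace.single j 1)) : Matrix (Fin N) (Fin N) ℝ) *ᵥ v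
      = B v v := by
  conv_rhs => rw [← sum_single_eq v]
  simp only [map_sum, _root_.map_smul, ContinuousLinearMap.sum_apply, ContinuousLinearMap.smul_apply,
    ContinuousLinearMap.coe_sum', Finset.sum_apply, smul_eq_mul]
  unfold Matrix.mulVec dotProduct
  simp only [Finset.mul_sum]
  rw [Finset.sum_comm]
  apply Finset.sum_congr rfl
  intro i _
  apply Finset.sum_congr rfl
  intro j _
  ring

section part1

variable {φ : EuclideanSpace ℝ (Fin N) → ℝ}

lemma hphi1 (hφ : ContDiff ℝ 2 φ) : ∀ y, HasFDerivAt φ (fderiv ℝ φ y) y :=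
  fun y => (hφ.differentiable (by norm_num)).differentiableAt.hasFDerivAt

lemma hphi2 (hφ : ContDiff ℝ 2 φ) (x : EuclideanSpace ℝ (Fin N)) :
    HasFDerivAt (fderiv ℝ φ) (fderiv ℝ (fderiv ℝ φ) x) x := by
  have h1 : ContDiff ℝ 1 (fderiv ℝ φ) := hφ.fderiv_right (by norm_num)
  exact ((h1.differentiable (by norm_num)) x).hasFDerivAt

lemma hess_symm_entries (hφ : ContDiff ℝ 2 φ) (x : EuclideanSpace ℝ (Fin N)) (v w : EuclideanSpace ℝ (Fin N)) :
    fderiv ℝ (fderiv ℝ φ) x v w = fderiv ℝ (fderiv ℝ φ) x w v :=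
  second_derivative_symmetric (fun y => hphi1 hφ y) (hphi2 hφ x) v w

lemma hess_isHermitian (hφ : ContDiff ℝ 2 φ) (x : EuclideanSpace ℝ (Fin N)) : (hess φ x).IsHermitian := by
  ext i j
  rw [Matrix.conjTranspose_apply]
  rw [hess_eq, hess_eq]
  simp only [RCLike.star_def, starRingEnd_apply, star_trivial]
  exact hess_symm_entries hφ x _ _

-- second directional derivative test along a direction where u is flat
lemma second_dir_nonpos (hφ : ContDiff ℝ 2 φ) (u : EuclideanSpace ℝ (Fin N) → ℝ) (x v : EuclideanSpace ℝ (Fin N))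
    (hmin : IsLocalMin (fun y => u y - φ y) x)
    (hflat : ∀ t : ℝ, u (x + t • v) = u x) :
    fderiv ℝ (fderiv ℝ φ) x v v ≤ 0 := by
  set L : ℝ → EuclideanSpace ℝ (Fin N) := fun t => x + t • v with hL
  have hL0 : L 0 = x := by simp [hL]
  have hLd : ∀ t, HasDerivAt L v t := by
    intro t
    have h1 : HasDerivAt (fun s : ℝ => s • v) ((1 : ℝ) • v) t := (hasDerivAt_id t).smul_const v
    have h2 := h1.const_add x
    simpa [hL] using h2
  set ψ : ℝ → ℝ := fun t => φ (L t) with hψ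
  set ψ' : ℝ → ℝ := fun t => fderiv ℝ φ (L t) v with hψ'
  have hd : ∀ t, HasDerivAt ψ (ψ' t) t := fun t => (hphi1 hφ (L t)).comp_hasDerivAt t (hLd t)
  have hd2 : HasDerivAt ψ' (fderiv ℝ (fderiv ℝ φ) x v v) 0 := by
    have hclm : HasFDerivAt (fun y => fderiv ℝ φ y v)
        (((fderiv ℝ (fderiv ℝ φ) x).flip) v) x := by
      have h := (hphi2 hφ x).clm_apply (hasFDerivAt_const v x)
      simpa using h
    have := hclm.comp_hasDerivAt_of_eq 0 (hLd 0) hL0.symm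
    exact this
  have hmax : IsLocalMax ψ 0 := by
    have hcont : Filter.Tendsto L (nhds 0) (nhds x) := by
      rw [← hL0]
      exact (hLd 0).continuousAt.tendsto
    have hev := hcont.eventually hmin
    apply hev.mono
    intro t ht
    simp only at ht
    have : u (L t) = u x := hflat t
    simp only [hψ, hL0]
    rw [this] at ht
    linarith
  exact sdtest hd hd2 hmax
end part1

lemma myAbsRpowDeriv {s t p : ℝ} (hs : s = 1 ∨ s = -1) (hst : 0 < s * t) :
    HasDerivAt (fun r : ℝ => |r| ^ p) (p * (s * t) ^ (p - 1) * s) t := by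
  have hne : s * t ≠ 0 := ne_of_gt hst
  have h1 : HasDerivAt (fun r : ℝ => r ^ p) (p * (s * t) ^ (p - 1)) (s * t) :=
    Real.hasDerivAt_rpow_const (Or.inl hne)
  have h2 : HasDerivAt (fun r : ℝ => s * r) s t := by
    simpa using (hasDerivAt_id t).const_mul s
  have h3 := h1.comp t h2
  have heq : (fun r : ℝ => |r| ^ p) =ᶠ[nhds t] ((fun r : ℝ => r ^ p) ∘ (fun r => s * r)) := by
    have hopen : IsOpen {r : ℝ | 0 < s * r} := by
      have : Continuous fun r : ℝ => s * r := continuous_const.mul continuous_id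
      exact isOpen_lt continuous_const this
    have hmem : {r : ℝ | 0 < s * r} ∈ nhds t := hopen.mem_nhds hst
    filter_upwards [hmem] with r hr
    rcases hs with h | h
    · subst h
      simp only [Set.mem_setOf_eq, one_mul] at hr
      simp [Function.comp, abs_of_pos hr]
    · subst h
      simp only [Set.mem_setOf_eq, neg_mul, one_mul] at hr
      have : r < 0 := by linarith
      simp [Function.comp, abs_of_neg this]
  exact h3.congr_of_eventuallyEq heq

lemma hess_u_eq {k : ℕ} (α : ℝ) (hα0 : 0 < α) (hα1 : α < 1) (x : EuclideanSpace ℝ (Fin N))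
    (hx : ∀ i : Fin N, (i : ℕ) < k → x i ≠ 0) :
    hess (fun y => ∑ i ∈ Finset.univ.filter (fun i : Fin N => (i : ℕ) < k), |y i| ^ α) x
      = Matrix.diagonal (fun i : Fin N => if (i : ℕ) < k then α * (α - 1) * |x i| ^ (α - 2) else 0) := by
  classical
  set Fk : Finset (Fin N) := Finset.univ.filter (fun i : Fin N => (i : ℕ) < k) with hFk
  set s : Fin N → ℝ := fun i => if 0 < x i then 1 else -1 with hsdef
  have hs1 : ∀ i, s i = 1 ∨ s i = -1 := by
    intro i
    by_cases h : 0 < x i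
    · left; simp [hsdef, h]
    · right; simp [hsdef, h]
  have hsx : ∀ i ∈ Fk, 0 < s i * x i := by
    intro i hi
    rw [hFk] at hi; simp only [Finset.mem_filter, Finset.mem_univ, true_and] at hi
    have hne := hx i hi
    by_cases h : 0 < x i
    · have hs : s i = 1 := by simp [hsdef, h]
      rw [hs]; linarith
    · have hlt : x i < 0 := lt_of_le_of_ne (not_lt.1 h) hne
      have hs : s i = -1 := by simp [hsdef, h]
      rw [hs]; nlinarith
  have habs : ∀ i ∈ Fk, s i * x i = |x i| := by
    intro i hi
    rcases hs1 i with h | h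
    · have := hsx i hi; rw [h] at this ⊢
      rw [one_mul] at this ⊢
      exact (abs_of_pos this).symm
    · have := hsx i hi; rw [h] at this ⊢
      have hneg : x i < 0 := by nlinarith
      rw [abs_of_neg hneg]; ring
  set V : Set (EuclideanSpace ℝ (Fin N)) := {y | ∀ i ∈ Fk, 0 < s i * y i} with hV
  have hVopen : IsOpen V := by
    have : V = ⋂ i ∈ Fk, {y : EuclideanSpace ℝ (Fin N) | 0 < s i * y i} := by
      ext y; simp [hV]
    rw [this]
    apply isOpen_biInter_finset
    intro i _
    have hc : Continuous fun y : EuclideanSpace ℝ (Fin N) => s i * y i := by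
      exact continuous_const.mul ((continuous_apply i).comp (PiLp.continuous_ofLp 2 _))
    exact isOpen_lt continuous_const hc
  have hxV : x ∈ V := fun i hi => hsx i hi
  -- first derivative on V
  set F : EuclideanSpace ℝ (Fin N) → (EuclideanSpace ℝ (Fin N) →L[ℝ] ℝ) :=
    fun y => ∑ i ∈ Fk, (α * (s i * y i) ^ (α - 1) * s i) • (EuclideanSpace.proj i) with hF
  have hud : ∀ y ∈ V, HasFDerivAt
      (fun y' : EuclideanSpace ℝ (Fin N) => ∑ i ∈ Fk, |y' i| ^ α) (F y) y := by
    intro y hy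
    rw [hF]
    apply HasFDerivAt.fun_sum
    intro i hi
    have hg : HasDerivAt (fun r : ℝ => |r| ^ α) (α * (s i * y i) ^ (α - 1) * s i) (y i) :=
      myAbsRpowDeriv (hs1 i) (hy i hi)
    have hp := (EuclideanSpace.proj (𝕜 := ℝ) (ι := Fin N) i).hasFDerivAt (x := y)
    have := hg.comp_hasFDerivAt y hp
    exact this
  have hfd : fderiv ℝ (fun y' : EuclideanSpace ℝ (Fin N) => ∑ i ∈ Fk, |y' i| ^ α)
      =ᶠ[nhds x] F :=
    Filter.eventuallyEq_of_mem (hVopen.mem_nhds hxV) (fun y hy => (hud y hy).fderiv)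
  -- second derivative
  set F' : EuclideanSpace ℝ (Fin N) →L[ℝ] (EuclideanSpace ℝ (Fin N) →L[ℝ] ℝ) :=
    ∑ i ∈ Fk, (((α * ((α - 1) * (s i * x i) ^ (α - 2) * s i)) * s i) •
      (EuclideanSpace.proj (𝕜 := ℝ) (ι := Fin N) i)).smulRight (EuclideanSpace.proj i) with hF'
  have hF'd : HasFDerivAt F F' x := by
    rw [hF, hF']
    apply HasFDerivAt.fun_sum
    intro i hi
    have hbase : HasDerivAt (fun r : ℝ => (s i * r) ^ (α - 1))
        ((α - 1) * (s i * x i) ^ (α - 1 - 1) * s i) (x i) := by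
      have h1 : HasDerivAt (fun r : ℝ => r ^ (α - 1))
          ((α - 1) * (s i * x i) ^ (α - 1 - 1)) (s i * x i) :=
        Real.hasDerivAt_rpow_const (Or.inl (ne_of_gt (hsx i hi)))
      have h2 : HasDerivAt (fun r : ℝ => s i * r) (s i) (x i) := by
        simpa using (hasDerivAt_id (x i)).const_mul (s i)
      exact h1.comp (x i) h2
    have hexp : α - 1 - 1 = α - 2 := by ring
    rw [hexp] at hbase
    have hc : HasDerivAt (fun r : ℝ => α * (s i * r) ^ (α - 1) * s i)
        ((α * ((α - 1) * (s i * x i) ^ (α - 2) * s i)) * s i) (x i) :=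
      (hbase.const_mul α).mul_const (s i)
    have hp := (EuclideanSpace.proj (𝕜 := ℝ) (ι := Fin N) i).hasFDerivAt (x := x)
    have hcomp := hc.comp_hasFDerivAt x hp
    have hcomp2 : HasFDerivAt (fun y : EuclideanSpace ℝ (Fin N) => α * (s i * y i) ^ (α - 1) * s i)
        (((α * ((α - 1) * (s i * x i) ^ (α - 2) * s i)) * s i) • (EuclideanSpace.proj (𝕜 := ℝ) (ι := Fin N) i)) x := by
      exact hcomp
    exact hcomp2.smul_const (EuclideanSpace.proj (𝕜 := ℝ) i)
  have hdd : fderiv ℝ (fderiv ℝ (fun y' : EuclideanSpace ℝ (Fin N) => ∑ i ∈ Fk, |y' i| ^ α)) x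
      = F' := by
    rw [hfd.fderiv_eq]
    exact hF'd.fderiv
  -- now compute entries
  funext a b
  show hess (fun y => ∑ i ∈ Fk, |y i| ^ α) x a b = _
  rw [hess_eq, hdd]
  rw [hF']
  rw [ContinuousLinearMap.sum_apply]
  rw [ContinuousLinearMap.sum_apply]
  have hterm : ∀ i ∈ Fk,
      ((((α * ((α - 1) * (s i * x i) ^ (α - 2) * s i)) * s i) •
        (EuclideanSpace.proj (𝕜 := ℝ) (ι := Fin N) i)).smulRight (EuclideanSpace.proj i))
        (EuclideanSpace.single a 1) (EuclideanSpace.single b 1)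
      = if i = a then (α * (α - 1) * |x i| ^ (α - 2)) * (if i = b then 1 else 0) else 0 := by
    intro i hiFk
    rw [ContinuousLinearMap.smulRight_apply, ContinuousLinearMap.smul_apply]
    simp only [ContinuousLinearMap.smul_apply, smul_eq_mul]
    have hpa : (EuclideanSpace.proj (𝕜 := ℝ) (ι := Fin N) i) (EuclideanSpace.single a 1)
        = if i = a then (1:ℝ) else 0 := by
      rw [PiLp.proj_apply]
      rw [EuclideanSpace.single_apply]
    have hpb : (EuclideanSpace.proj (𝕜 := ℝ) (ι := Fin N) i) (EuclideanSpace.single b 1)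
        = if i = b then (1:ℝ) else 0 := by
      rw [PiLp.proj_apply]
      rw [EuclideanSpace.single_apply]
    rw [hpa, hpb]
    have hsa2 : s i * s i = 1 := by rcases hs1 i with h | h <;> rw [h] <;> norm_num
    have habs' : s i * x i = |x i| := habs i hiFk
    rw [habs']
    split <;> split
    · linear_combination (α * (α - 1) * |x i| ^ (α - 2)) * hsa2
    all_goals ring
  rw [Finset.sum_congr rfl hterm]
  rw [Finset.sum_ite_eq' Fk a (fun i => (α * (α - 1) * |x i| ^ (α - 2)) * (if i = b then 1 else 0))]
  rw [Matrix.diagonal_apply]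
  by_cases hak : (a : ℕ) < k
  · have haFk : a ∈ Fk := by rw [hFk]; simp [hak]
    rw [if_pos haFk]
    by_cases hab : a = b
    · subst hab
      rw [if_pos rfl, if_pos rfl, if_pos hak]
      ring
    · rw [if_neg hab, if_neg hab]
      ring
  · have haFk : a ∉ Fk := by rw [hFk]; simp [hak]
    rw [if_neg haFk]
    by_cases hab : a = b
    · subst hab
      rw [if_pos rfl, if_neg hak]
    · rw [if_neg hab]

end Stmt17Aux

open Stmt17Aux Finset Matrix Module Submodule in
/-- For `N ≥ 2k` and `0 < α < 1`, `u(x) = ∑_{i<k} |x_i|^α` is a viscosity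
supersolution of `λ_k(D²u) = 0` on `ℝ^N`, and at points where all
`x_1, …, x_k` are nonzero,
`λ_k(D²u(x)) = max_i α(α−1)|x_i|^{α−2} < 0`. -/
theorem stmt17 {N k : ℕ} (hk1 : 1 ≤ k) (hNk : 2 * k ≤ N)
    (α : ℝ) (hα0 : 0 < α) (hα1 : α < 1)
    (u : EuclideanSpace ℝ (Fin N) → ℝ)
    (hu : u = fun x => ∑ i ∈ Finset.univ.filter (fun i : Fin N => (i : ℕ) < k), |x i| ^ α) :
    (∀ φ : EuclideanSpace ℝ (Fin N) → ℝ, ContDiff ℝ 2 φ →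
      ∀ x, IsLocalMin (fun y => u y - φ y) x →
        sortedEig (hess φ x) ⟨k - 1, by omega⟩ ≤ 0) ∧
    (∀ x : EuclideanSpace ℝ (Fin N), (∀ i : Fin N, (i : ℕ) < k → x i ≠ 0) →
      IsGreatest {y : ℝ | ∃ i : Fin N, (i : ℕ) < k ∧ y = α * (α - 1) * |x i| ^ (α - 2)}
        (sortedEig (hess u x) ⟨k - 1, by omega⟩) ∧
      sortedEig (hess u x) ⟨k - 1, by omega⟩ < 0) := by
  subst hu
  constructor
  · -- Part 1: viscosity supersolution
    intro φ hφ x hmin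
    set B := fderiv ℝ (fderiv ℝ φ) x with hB
    have hA : (hess φ x).IsHermitian := hess_isHermitian hφ x
    -- basis vectors are linearly independent
    have hbeq : ⇑(EuclideanSpace.basisFun (Fin N) ℝ).toBasis
        = fun i => (EuclideanSpace.single i 1 : EuclideanSpace ℝ (Fin N)) := by
      funext i
      rw [OrthonormalBasis.coe_toBasis, EuclideanSpace.basisFun_apply]
    have hli : LinearIndependent ℝ
        (fun i : Fin N => (EuclideanSpace.single i 1 : EuclideanSpace ℝ (Fin N))) := by
      rw [← hbeq]
      exact (EuclideanSpace.basisFun (Fin N) ℝ).toBasis.linearIndependent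
    set Tc : Finset (Fin N) := Finset.univ.filter (fun j : Fin N => k ≤ (j : ℕ)) with hTc
    set W : Submodule ℝ (EuclideanSpace ℝ (Fin N)) :=
      Submodule.span ℝ ((fun i => (EuclideanSpace.single i 1 : EuclideanSpace ℝ (Fin N)))
        '' (Tc : Set (Fin N))) with hW
    have hWrank : Module.finrank ℝ W = N - k := by
      rw [hW, finrank_span_image' hli, hTc, Stmt17Aux.card_filter_le (by omega)]
    apply sortedEig_le hA hk1 (by omega) 0 W (by omega)
    intro v hvW
    -- coordinates of v vanish on indices < k
    have hcoord : ∀ i : Fin N, (i : ℕ) < k → v i = 0 := by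
      intro i hik
      have hmem : v ∈ Submodule.span ℝ
          (⇑(EuclideanSpace.basisFun (Fin N) ℝ).toBasis '' (Tc : Set (Fin N))) := by
        rw [hbeq]; exact hvW
      rw [Basis.mem_span_image] at hmem
      have hiTc : i ∉ Tc := by
        rw [hTc]; simp; omega
      have : i ∉ ((EuclideanSpace.basisFun (Fin N) ℝ).toBasis.repr v).support :=
        fun hc => hiTc (hmem hc)
      have h0 := Finsupp.notMem_support_iff.1 this
      rwa [OrthonormalBasis.coe_toBasis_repr_apply, EuclideanSpace.basisFun_repr] at h0
    -- u is constant along v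
    have hflat : ∀ t : ℝ, (fun y : EuclideanSpace ℝ (Fin N) =>
        ∑ i ∈ Finset.univ.filter (fun i : Fin N => (i : ℕ) < k), |y i| ^ α) (x + t • v)
        = ∑ i ∈ Finset.univ.filter (fun i : Fin N => (i : ℕ) < k), |x i| ^ α := by
      intro t
      apply Finset.sum_congr rfl
      intro i hi
      simp only [Finset.mem_filter] at hi
      have hvi : v i = 0 := hcoord i hi.2
      have : (x + t • v) i = x i := by
        simp [PiLp.add_apply, PiLp.smul_apply, hvi]
      rw [this]
    have hAentries : hess φ x =
        (fun i j => B (EuclideanSpace.single i 1) (EuclideanSpace.single j 1)) := by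
      funext i j
      rw [hess_eq]
    have hQ : v ⬝ᵥ (hess φ x *ᵥ v) = B v v := by
      rw [hAentries]
      exact dot_bilin B v
    rw [hQ]
    have := second_dir_nonpos hφ _ x v hmin hflat
    simpa using this
  · intro x hx
    classical
    rw [hess_u_eq (N := N) (k := k) α hα0 hα1 x hx]
    set d : Fin N → ℝ := fun i : Fin N =>
      if (i : ℕ) < k then α * (α - 1) * |x i| ^ (α - 2) else 0 with hd
    have hA : (Matrix.diagonal d).IsHermitian := Matrix.isHermitian_diagonal _
    have hvalneg : ∀ i : Fin N, (i : ℕ) < k → α * (α - 1) * |x i| ^ (α - 2) < 0 := by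
      intro i hik
      have h1 : 0 < |x i| ^ (α - 2) := Real.rpow_pos_of_pos (abs_pos.2 (hx i hik)) _
      have h2 : α * (α - 1) < 0 := by nlinarith
      exact mul_neg_of_neg_of_pos h2 h1
    have hFkcard : (Finset.univ.filter (fun i : Fin N => (i : ℕ) < k)).card = k :=
      Stmt17Aux.card_filter_lt (by omega)
    have hFkne : (Finset.univ.filter (fun i : Fin N => (i : ℕ) < k)).Nonempty := by
      refine ⟨⟨0, by omega⟩, ?_⟩
      simp only [Finset.mem_filter, Finset.mem_univ, true_and]
      omega
    have hSne : ((Finset.univ.filter (fun i : Fin N => (i : ℕ) < k)).image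
        (fun i => α * (α - 1) * |x i| ^ (α - 2))).Nonempty := hFkne.image _
    set μ : ℝ := ((Finset.univ.filter (fun i : Fin N => (i : ℕ) < k)).image
        (fun i => α * (α - 1) * |x i| ^ (α - 2))).max' hSne with hμ
    obtain ⟨j₀, hj₀, hj₀e⟩ := Finset.mem_image.1 (Finset.max'_mem _ hSne)
    have hj₀k : (j₀ : ℕ) < k := by
      simpa using hj₀
    have hμneg : μ < 0 := by
      rw [hμ, ← hj₀e]
      exact hvalneg j₀ hj₀k
    have hle : ∀ i : Fin N, (i : ℕ) < k → α * (α - 1) * |x i| ^ (α - 2) ≤ μ := by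
      intro i hik
      apply Finset.le_max'
      apply Finset.mem_image_of_mem
      simp only [Finset.mem_filter, Finset.mem_univ, true_and]
      exact hik
    -- basis vector lemmas
    have hbeq : ⇑(EuclideanSpace.basisFun (Fin N) ℝ).toBasis
        = fun i => (EuclideanSpace.single i 1 : EuclideanSpace ℝ (Fin N)) := by
      funext i
      rw [OrthonormalBasis.coe_toBasis, EuclideanSpace.basisFun_apply]
    have hli : LinearIndependent ℝ
        (fun i : Fin N => (EuclideanSpace.single i 1 : EuclideanSpace ℝ (Fin N))) := by
      rw [← hbeq]
      exact (EuclideanSpace.basisFun (Fin N) ℝ).toBasis.linearIndependent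
    have hcoords : ∀ (T : Finset (Fin N)) (v : EuclideanSpace ℝ (Fin N)),
        v ∈ Submodule.span ℝ ((fun i => (EuclideanSpace.single i 1 : EuclideanSpace ℝ (Fin N)))
          '' (T : Set (Fin N))) → ∀ i ∉ T, v i = 0 := by
      intro T v hv i hiT
      have hmem : v ∈ Submodule.span ℝ
          (⇑(EuclideanSpace.basisFun (Fin N) ℝ).toBasis '' (T : Set (Fin N))) := by
        rw [hbeq]; exact hv
      rw [Basis.mem_span_image] at hmem
      have : i ∉ ((EuclideanSpace.basisFun (Fin N) ℝ).toBasis.repr v).support :=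
        fun hc => hiT (hmem hc)
      have h0 := Finsupp.notMem_support_iff.1 this
      rwa [OrthonormalBasis.coe_toBasis_repr_apply, EuclideanSpace.basisFun_repr] at h0
    have hQform : ∀ v : EuclideanSpace ℝ (Fin N),
        v ⬝ᵥ (Matrix.diagonal d *ᵥ v) = ∑ i, d i * (v i * v i) := by
      intro v
      unfold dotProduct
      apply Finset.sum_congr rfl
      intro i _
      rw [Matrix.mulVec_diagonal]
      ring
    have hdot : ∀ v : EuclideanSpace ℝ (Fin N), v ⬝ᵥ v = ∑ i, v i * v i := by
      intro v; rfl
    -- upper bound : m ≤ μ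
    have hupper : sortedEig (Matrix.diagonal d) ⟨k - 1, by omega⟩ ≤ μ := by
      apply sortedEig_le hA hk1 (by omega) μ
        (Submodule.span ℝ ((fun i => (EuclideanSpace.single i 1 : EuclideanSpace ℝ (Fin N)))
          '' ((Finset.univ.filter (fun i : Fin N => (i : ℕ) < k)) : Set (Fin N))))
      · rw [finrank_span_image' hli, hFkcard]
      · intro v hv
        have hvc := hcoords _ v hv
        rw [hQform, hdot, Finset.mul_sum]
        apply Finset.sum_le_sum
        intro i _
        by_cases hik : (i : ℕ) < k
        · have h1 : d i = α * (α - 1) * |x i| ^ (α - 2) := by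
            rw [hd]; simp [hik]
          have h2 := hle i hik
          nlinarith [mul_self_nonneg (v i)]
        · have hiT : i ∉ Finset.univ.filter (fun i : Fin N => (i : ℕ) < k) := by
            simp only [Finset.mem_filter, Finset.mem_univ, true_and]
            omega
          rw [hvc i hiT]
          simp
    -- lower bound : vals j ≤ m for all j < k
    have hlower : ∀ j : Fin N, (j : ℕ) < k →
        α * (α - 1) * |x j| ^ (α - 2) ≤ sortedEig (Matrix.diagonal d) ⟨k - 1, by omega⟩ := by
      intro j hjk'
      have hjnot : j ∉ Finset.univ.filter (fun i : Fin N => k ≤ (i : ℕ)) := by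
        simp only [Finset.mem_filter, Finset.mem_univ, true_and]
        omega
      set T' : Finset (Fin N) := insert j (Finset.univ.filter (fun i : Fin N => k ≤ (i : ℕ)))
        with hT'def
      have hT'card : T'.card = N - k + 1 := by
        rw [hT'def, Finset.card_insert_of_notMem hjnot, Stmt17Aux.card_filter_le (by omega)]
      apply le_sortedEig hA hk1 (by omega) _
        (Submodule.span ℝ ((fun i => (EuclideanSpace.single i 1 : EuclideanSpace ℝ (Fin N)))
          '' (T' : Set (Fin N))))
      · rw [finrank_span_image' hli, hT'card]
      · intro v hv
        have hvc := hcoords _ v hv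
        rw [hQform, hdot]
        have hsum : ∑ i, d i * (v i * v i) = d j * (v j * v j) := by
          apply Finset.sum_eq_single_of_mem j (Finset.mem_univ j)
          intro i _ hij
          by_cases hik : (i : ℕ) < k
          · have hiT' : i ∉ T' := by
              simp only [hT'def, Finset.mem_insert, Finset.mem_filter, Finset.mem_univ, true_and]
              push_neg
              exact ⟨hij, by omega⟩
            rw [hvc i hiT']
            ring
          · have hdi : d i = 0 := by rw [hd]; simp [hik]
            rw [hdi]; ring
        rw [hsum]
        have hdj : d j = α * (α - 1) * |x j| ^ (α - 2) := by rw [hd]; simp [hjk']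
        rw [hdj]
        have hsq : v j * v j ≤ ∑ i, v i * v i := by
          apply Finset.single_le_sum (f := fun i => v i * v i)
          · intro i _; exact mul_self_nonneg (v i)
          · exact Finset.mem_univ j
        have hneg := hvalneg j hjk'
        nlinarith
    refine ⟨⟨?_, ?_⟩, ?_⟩
    · -- membership
      have hval : sortedEig (Matrix.diagonal d) ⟨k - 1, by omega⟩
          = hA.eigenvalues ((Tuple.sort hA.eigenvalues) ⟨k - 1, by omega⟩) := by
        rw [sortedEig_eq hA]; rfl
      have hspec := hA.eigenvalues_mem_spectrum_real ((Tuple.sort hA.eigenvalues) ⟨k - 1, by omega⟩)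
      rw [← hval] at hspec
      rw [spectrum.mem_iff] at hspec
      have hdet : ((algebraMap ℝ (Matrix (Fin N) (Fin N) ℝ))
          (sortedEig (Matrix.diagonal d) ⟨k - 1, by omega⟩) - Matrix.diagonal d).det = 0 := by
        by_contra hne
        exact hspec ((Matrix.isUnit_iff_isUnit_det _).2 (isUnit_iff_ne_zero.2 hne))
      rw [Matrix.algebraMap_eq_diagonal, Matrix.diagonal_sub, Matrix.det_diagonal] at hdet
      rw [Finset.prod_eq_zero_iff] at hdet
      obtain ⟨i, _, hi0⟩ := hdet
      have him : sortedEig (Matrix.diagonal d) ⟨k - 1, by omega⟩ = d i := by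
        have h2 := sub_eq_zero.1 hi0
        rw [← h2]
        rfl
      by_cases hik : (i : ℕ) < k
      · refine ⟨i, hik, ?_⟩
        rw [him, hd]
        simp [hik]
      · exfalso
        have hdi : d i = 0 := by rw [hd]; simp [hik]
        rw [hdi] at him
        linarith [lt_of_le_of_lt hupper hμneg]
    · -- upper bound of the set
      intro y hy
      obtain ⟨i, hik, rfl⟩ := hy
      exact hlower i hik
    · exact lt_of_le_of_lt hupper hμneg
end
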